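/- arXiv:0707.1473 — 12 statements merged into one kernel-verified Lean document; each statement's English description precedes it below -/
import Mathlib

section
/- Let p > 1 be a real number and let (λ_n)_{n≥1} be a sequence of positive real numbers with Λ_n = λ_1 + ... + λ_n. If there is a real number L with L < p such that Λ_{n+1}/λ_{n+1} − Λ_n/λ_n ≤ L for every integer n ≥ 1, then for every nonnegative real sequence (a_n) with Σ_{n=1}^∞ a_n^p < ∞ one has Σ_{n=1}^∞ ( (1/Λ_n) Σ_{k=1}^n λ_k a_k )^p ≤ (p/(p−L))^p Σ_{n=1}^∞ a_n^p. -/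
set_option maxHeartbeats 1000000 in
/-- Cartlidge's theorem (Theorem 1.1). -/
theorem stmt_0 (p L : ℝ) (hp : 1 < p) (hLp : L < p)
    (lam Lam : ℕ → ℝ)
    (hlam : ∀ n, 1 ≤ n → 0 < lam n)
    (hLam : ∀ n, Lam n = ∑ i ∈ Finset.Icc 1 n, lam i)
    (hcond : ∀ n, 1 ≤ n → Lam (n + 1) / lam (n + 1) - Lam n / lam n ≤ L)
    (a : ℕ → ℝ) (ha : ∀ n, 1 ≤ n → 0 ≤ a n)
    (hsum : Summable fun n : ℕ => a (n + 1) ^ p) :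
    (Summable fun n : ℕ =>
      ((1 / Lam (n + 1)) * ∑ k ∈ Finset.Icc 1 (n + 1), lam k * a k) ^ p) ∧
    ∑' n : ℕ, ((1 / Lam (n + 1)) * ∑ k ∈ Finset.Icc 1 (n + 1), lam k * a k) ^ p ≤
      (p / (p - L)) ^ p * ∑' n : ℕ, a (n + 1) ^ p := by
  have hp0 : (0 : ℝ) < p := by linarith
  have hpL : (0 : ℝ) < p - L := by linarith
  set c : ℝ := p / (p - L) with hc_def
  have hc : 0 < c := div_pos hp0 hpL
  set q : ℝ := p / (p - 1) with hq_def
  have hpq : p.HolderConjugate q := Real.HolderConjugate.conjExponent hp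
  have hq1 : 1 < q := hpq.symm.lt
  have hq0 : 0 < q := hpq.symm.pos
  -- the weighted means
  set A : ℕ → ℝ := fun n => (1 / Lam n) * ∑ k ∈ Finset.Icc 1 n, lam k * a k with hA_def
  have hLpos : ∀ n, 1 ≤ n → 0 < Lam n := by
    intro n hn
    rw [hLam]
    apply Finset.sum_pos
    · intro i hi
      exact hlam i (Finset.mem_Icc.1 hi).1
    · exact ⟨1, Finset.mem_Icc.2 ⟨le_refl 1, hn⟩⟩
  have hLam0 : Lam 0 = 0 := by rw [hLam]; simp
  have hLnonneg : ∀ n, 0 ≤ Lam n := by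
    intro n
    cases n with
    | zero => rw [hLam0]
    | succ m => exact (hLpos (m + 1) (Nat.succ_le_succ (Nat.zero_le m))).le
  have hW : ∀ n, Lam n * A n = ∑ k ∈ Finset.Icc 1 n, lam k * a k := by
    intro n
    cases n with
    | zero => simp [hLam0]
    | succ m =>
      have h := (hLpos (m + 1) (Nat.succ_le_succ (Nat.zero_le m))).ne'
      simp only [hA_def]
      field_simp
  have hAnn : ∀ n, 0 ≤ A n := by
    intro n
    apply mul_nonneg
    · exact one_div_nonneg.2 (hLnonneg n)
    · apply Finset.sum_nonneg
      intro k hk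
      exact mul_nonneg (hlam k (Finset.mem_Icc.1 hk).1).le (ha k (Finset.mem_Icc.1 hk).1)
  have hLam_succ : ∀ n, Lam (n + 1) = Lam n + lam (n + 1) := by
    intro n
    rw [hLam, hLam, Finset.sum_Icc_succ_top (Nat.succ_le_succ (Nat.zero_le n))]
  have hrec : ∀ n, Lam (n + 1) * A (n + 1) = Lam n * A n + lam (n + 1) * a (n + 1) := by
    intro n
    rw [hW, hW, Finset.sum_Icc_succ_top (Nat.succ_le_succ (Nat.zero_le n))]
  -- x * x^(p-1) = x^p for nonneg x
  have hx_mul : ∀ x : ℝ, 0 ≤ x → x ^ (p - 1) * x = x ^ p := by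
    intro x hx
    rcases eq_or_lt_of_le hx with h | h
    · rw [← h, Real.zero_rpow (by linarith : p - 1 ≠ 0), Real.zero_rpow hp0.ne', zero_mul]
    · rw [← Real.rpow_add_one h.ne', sub_add_cancel]
  -- (x^(p-1))^q = x^p for nonneg x
  have hx_pow : ∀ x : ℝ, 0 ≤ x → (x ^ (p - 1)) ^ q = x ^ p := by
    intro x hx
    rw [← Real.rpow_mul hx, hpq.sub_one_mul_conj]
  -- the telescoping function
  set H : ℕ → ℝ := fun j => (c / p) * ((Lam (j + 1) / lam (j + 1) - 1) * A j ^ p) with hH_def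
  have hH0 : H 0 = 0 := by
    have : A 0 = 0 := by simp [hA_def]
    simp [hH_def, this, Real.zero_rpow hp0.ne']
  have hHnn : ∀ j, 0 ≤ H j := by
    intro j
    apply mul_nonneg (by positivity)
    apply mul_nonneg _ (Real.rpow_nonneg (hAnn j) p)
    rw [sub_nonneg, le_div_iff₀ (hlam (j + 1) (Nat.succ_le_succ (Nat.zero_le j))), one_mul,
      hLam_succ]
    nlinarith [hLnonneg j]
  -- key pointwise inequality
  have key : ∀ n : ℕ, 1 ≤ n →
      A n ^ p - c * (a n * A n ^ (p - 1)) ≤ H (n - 1) - H n := by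
    rintro n hn
    obtain ⟨m, rfl⟩ : ∃ m, n = m + 1 := ⟨n - 1, (Nat.succ_pred_eq_of_pos hn).symm⟩
    simp only [Nat.add_sub_cancel, hH_def]
    set x := A (m + 1) with hx_def
    set y := A m with hy_def
    set X := x ^ p with hX_def
    set Y := y ^ p with hY_def
    set V := x ^ (p - 1) with hV_def
    have hxnn : 0 ≤ x := hAnn (m + 1)
    have hynn : 0 ≤ y := hAnn m
    have hXnn : 0 ≤ X := Real.rpow_nonneg hxnn p
    have hVx : V * x = X := hx_mul x hxnn
    have hlam1 : 0 < lam (m + 1) := hlam (m + 1) (Nat.succ_le_succ (Nat.zero_le m))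
    have hlam2 : 0 < lam (m + 2) := hlam (m + 2) (by omega)
    have hΛ : Lam (m + 1) = Lam m + lam (m + 1) := hLam_succ m
    -- Young's inequality
    have hyv : y * V ≤ Y / p + X / q := by
      have h := Real.young_inequality_of_nonneg hynn (Real.rpow_nonneg hxnn (p - 1)) hpq
      rwa [hx_pow x hxnn] at h
    -- a in terms of means
    have haa : lam (m + 1) * a (m + 1) = Lam (m + 1) * x - Lam m * y := by
      have := hrec m; linarith
    have haV : a (m + 1) * V = (Lam (m + 1) * X - Lam m * (y * V)) / lam (m + 1) := by
      rw [eq_div_iff hlam1.ne']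
      calc a (m + 1) * V * lam (m + 1) = lam (m + 1) * a (m + 1) * V := by ring
        _ = (Lam (m + 1) * x - Lam m * y) * V := by rw [haa]
        _ = Lam (m + 1) * (V * x) - Lam m * (y * V) := by ring
        _ = Lam (m + 1) * X - Lam m * (y * V) := by rw [hVx]
    -- coefficient inequality
    have hqsub : Lam m / lam (m + 1) = Lam (m + 1) / lam (m + 1) - 1 := by
      rw [hΛ, add_div, div_self hlam1.ne']
      ring
    have hB := hcond (m + 1) (Nat.succ_le_succ (Nat.zero_le m))
    have hident : 1 - c * (Lam (m + 1) / lam (m + 1)) +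
        (c * (Lam (m + 1) / lam (m + 1) - 1)) / q +
        (c / p) * (L + Lam (m + 1) / lam (m + 1) - 1) = 0 := by
      simp only [hc_def, hq_def]
      field_simp
      ring
    have hcoef : 1 - c * (Lam (m + 1) / lam (m + 1)) + (c * (Lam m / lam (m + 1))) / q +
        (c / p) * (Lam (m + 2) / lam (m + 2) - 1) ≤ 0 := by
      rw [hqsub]
      have h2 : (c / p) * (Lam (m + 2) / lam (m + 2) - 1) ≤
          (c / p) * (L + Lam (m + 1) / lam (m + 1) - 1) := by
        apply mul_le_mul_of_nonneg_left _ (by positivity)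
        linarith
      linarith
    -- combine
    have h1 : (c * Lam m / lam (m + 1)) * (y * V) ≤
        (c * Lam m / lam (m + 1)) * (Y / p + X / q) := by
      apply mul_le_mul_of_nonneg_left hyv
      exact div_nonneg (mul_nonneg hc.le (hLnonneg m)) hlam1.le
    have h2 : (1 - c * (Lam (m + 1) / lam (m + 1)) + (c * (Lam m / lam (m + 1))) / q +
        (c / p) * (Lam (m + 2) / lam (m + 2) - 1)) * X ≤ 0 :=
      mul_nonpos_of_nonpos_of_nonneg hcoef hXnn
    rw [haV]
    have hlamne : lam (m + 1) ≠ 0 := hlam1.ne'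
    have expand : c * ((Lam (m + 1) * X - Lam m * (y * V)) / lam (m + 1)) =
        c * (Lam (m + 1) / lam (m + 1)) * X -
        (c * Lam m / lam (m + 1)) * (y * V) := by
      field_simp
    have hqsub2 : (c / p) * ((Lam (m + 1) / lam (m + 1) - 1) * Y) =
        (c * Lam m / lam (m + 1)) * (Y / p) := by
      rw [← hqsub]
      field_simp
    have goal_eq : (c * (Lam m / lam (m + 1))) / q * X =
        (c * Lam m / lam (m + 1)) * (X / q) := by
      field_simp
    rw [expand, hqsub2]
    linarith [h1, h2, goal_eq]
  -- summed inequality: S_N ≤ c * ∑ a_n A_n^{p-1}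
  have step1 : ∀ N : ℕ, ∑ i ∈ Finset.range N, A (i + 1) ^ p ≤
      c * ∑ i ∈ Finset.range N, a (i + 1) * A (i + 1) ^ (p - 1) := by
    intro N
    have h1 : ∑ i ∈ Finset.range N,
        (A (i + 1) ^ p - c * (a (i + 1) * A (i + 1) ^ (p - 1))) ≤
        ∑ i ∈ Finset.range N, (H i - H (i + 1)) := by
      apply Finset.sum_le_sum
      intro i _
      simpa using key (i + 1) (Nat.succ_le_succ (Nat.zero_le i))
    rw [Finset.sum_range_sub' H N, Finset.sum_sub_distrib, ← Finset.mul_sum] at h1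
    have := hHnn N
    linarith [h1, hH0 ▸ (by linarith [hHnn N] : H 0 - H N ≤ 0)]
  -- Young with parameter t := c^(1/q)
  have step2 : ∀ i : ℕ, c * (a (i + 1) * A (i + 1) ^ (p - 1)) ≤
      c ^ p * a (i + 1) ^ p / p + A (i + 1) ^ p / q := by
    intro i
    have hu : 0 ≤ a (i + 1) := ha (i + 1) (Nat.succ_le_succ (Nat.zero_le i))
    have hv : 0 ≤ A (i + 1) ^ (p - 1) := Real.rpow_nonneg (hAnn (i + 1)) _
    set t : ℝ := c ^ (1 / q) with ht_def
    have ht : 0 < t := Real.rpow_pos_of_pos hc _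
    have hy := Real.young_inequality_of_nonneg (mul_nonneg ht.le hu)
      (div_nonneg hv ht.le) hpq
    have e1 : t * a (i + 1) * (A (i + 1) ^ (p - 1) / t) = a (i + 1) * A (i + 1) ^ (p - 1) := by
      field_simp
    have e2 : (t * a (i + 1)) ^ p = c ^ (p - 1) * a (i + 1) ^ p := by
      rw [Real.mul_rpow ht.le hu, ht_def, ← Real.rpow_mul hc.le]
      congr 2
      rw [one_div_mul_eq_div, hpq.div_conj_eq_sub_one]
    have e3 : (A (i + 1) ^ (p - 1) / t) ^ q = A (i + 1) ^ p / c := by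
      rw [Real.div_rpow hv ht.le, hx_pow _ (hAnn _), ht_def, ← Real.rpow_mul hc.le,
        one_div_mul_cancel hq0.ne', Real.rpow_one]
    rw [e1, e2, e3] at hy
    have hcc : c * c ^ (p - 1) = c ^ p := by
      rw [← Real.rpow_one_add' hc.le (by linarith : (1 : ℝ) + (p - 1) ≠ 0),
        add_sub_cancel]
    calc c * (a (i + 1) * A (i + 1) ^ (p - 1))
        ≤ c * (c ^ (p - 1) * a (i + 1) ^ p / p + A (i + 1) ^ p / c / q) :=
          mul_le_mul_of_nonneg_left hy hc.le
      _ = (c * c ^ (p - 1)) * a (i + 1) ^ p / p + A (i + 1) ^ p / q := by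
          field_simp
      _ = c ^ p * a (i + 1) ^ p / p + A (i + 1) ^ p / q := by rw [hcc]
  -- combine: S_N ≤ c^p * T_N
  have step3 : ∀ N : ℕ, ∑ i ∈ Finset.range N, A (i + 1) ^ p ≤
      c ^ p * ∑ i ∈ Finset.range N, a (i + 1) ^ p := by
    intro N
    have h1 := step1 N
    have h2 : c * ∑ i ∈ Finset.range N, a (i + 1) * A (i + 1) ^ (p - 1) ≤
        c ^ p * (∑ i ∈ Finset.range N, a (i + 1) ^ p) / p +
        (∑ i ∈ Finset.range N, A (i + 1) ^ p) / q := by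
      calc c * ∑ i ∈ Finset.range N, a (i + 1) * A (i + 1) ^ (p - 1)
          = ∑ i ∈ Finset.range N, c * (a (i + 1) * A (i + 1) ^ (p - 1)) := by
            rw [Finset.mul_sum]
        _ ≤ ∑ i ∈ Finset.range N, (c ^ p * a (i + 1) ^ p / p + A (i + 1) ^ p / q) :=
            Finset.sum_le_sum fun i _ => step2 i
        _ = c ^ p * (∑ i ∈ Finset.range N, a (i + 1) ^ p) / p +
            (∑ i ∈ Finset.range N, A (i + 1) ^ p) / q := by
            rw [Finset.sum_add_distrib, ← Finset.sum_div, ← Finset.sum_div, ← Finset.mul_sum]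
    have hSnn : 0 ≤ ∑ i ∈ Finset.range N, A (i + 1) ^ p :=
      Finset.sum_nonneg fun i _ => Real.rpow_nonneg (hAnn (i + 1)) p
    have hq_inv : 1 - 1 / q = 1 / p := by
      rw [one_div, one_div]
      linarith [hpq.inv_add_inv_eq_one]
    have hS := le_trans h1 h2
    have : (∑ i ∈ Finset.range N, A (i + 1) ^ p) * (1 - 1 / q) ≤
        c ^ p * (∑ i ∈ Finset.range N, a (i + 1) ^ p) / p := by
      rw [mul_sub, mul_one, mul_one_div]
      linarith
    rw [hq_inv, mul_one_div] at this
    calc ∑ i ∈ Finset.range N, A (i + 1) ^ p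
        = p * ((∑ i ∈ Finset.range N, A (i + 1) ^ p) / p) := by field_simp
      _ ≤ p * (c ^ p * (∑ i ∈ Finset.range N, a (i + 1) ^ p) / p) := by
          apply mul_le_mul_of_nonneg_left this hp0.le
      _ = c ^ p * ∑ i ∈ Finset.range N, a (i + 1) ^ p := by field_simp
  -- bound by the infinite sum
  have hann : ∀ n : ℕ, 0 ≤ a (n + 1) ^ p :=
    fun n => Real.rpow_nonneg (ha (n + 1) (Nat.succ_le_succ (Nat.zero_le n))) p
  have hTbound : ∀ N : ℕ, ∑ i ∈ Finset.range N, a (i + 1) ^ p ≤ ∑' n : ℕ, a (n + 1) ^ p :=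
    fun N => Summable.sum_le_tsum _ (fun i _ => hann i) hsum
  have hfinal : ∀ N : ℕ, ∑ i ∈ Finset.range N, A (i + 1) ^ p ≤
      c ^ p * ∑' n : ℕ, a (n + 1) ^ p := by
    intro N
    calc ∑ i ∈ Finset.range N, A (i + 1) ^ p ≤ c ^ p * ∑ i ∈ Finset.range N, a (i + 1) ^ p :=
        step3 N
      _ ≤ c ^ p * ∑' n : ℕ, a (n + 1) ^ p := by
        apply mul_le_mul_of_nonneg_left (hTbound N) (Real.rpow_nonneg hc.le p)
  have hAnn' : ∀ n : ℕ, 0 ≤ A (n + 1) ^ p := fun n => Real.rpow_nonneg (hAnn (n + 1)) p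
  exact ⟨summable_of_sum_range_le hAnn' hfinal,
    Real.tsum_le_of_sum_range_le hAnn' hfinal⟩
end

section
/- Let p > 1 be a real number and let (λ_n)_{n≥1} be a sequence of positive real numbers with Λ_n = λ_1 + ... + λ_n. Suppose there is a real constant L with 0 < L < p such that for every integer n ≥ 1, Λ_{n+1}/λ_{n+1} ≤ (Λ_n/λ_n) · (1 − L·λ_n/(p·Λ_n))^{1−p} + L/p. Then for every nonnegative real sequence (a_n) with Σ_{n=1}^∞ a_n^p < ∞ one has Σ_{n=1}^∞ ( (1/Λ_n) Σ_{k=1}^n λ_k a_k )^p ≤ (p/(p−L))^p Σ_{n=1}^∞ a_n^p. -/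
private lemma jensen2 {p w1 w2 z1 z2 : ℝ} (hp : 1 ≤ p) (h1 : 0 ≤ w1) (h2 : 0 ≤ w2)
    (hw : w1 + w2 = 1) (hz1 : 0 ≤ z1) (hz2 : 0 ≤ z2) :
    (w1 * z1 + w2 * z2) ^ p ≤ w1 * z1 ^ p + w2 * z2 ^ p := by
  have h := NNReal.rpow_arith_mean_le_arith_mean2_rpow ⟨w1, h1⟩ ⟨w2, h2⟩ ⟨z1, hz1⟩ ⟨z2, hz2⟩
    (by rw [← NNReal.coe_inj]; push_cast; exact hw) hp
  rw [← NNReal.coe_le_coe] at h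
  push_cast [NNReal.coe_rpow] at h
  exact h

private lemma jensen2' {p α β y z : ℝ} (hp : 1 ≤ p) (hα : 0 ≤ α) (hβ : 0 < β)
    (hy : 0 ≤ y) (hz : 0 ≤ z) :
    (α * y + z) ^ p ≤ (α + β) ^ (p - 1) * (α * y ^ p + β ^ (1 - p) * z ^ p) := by
  set s : ℝ := α + β with hs
  have hs0 : 0 < s := by positivity
  have h := jensen2 (p := p) (w1 := α / s) (w2 := β / s) (z1 := s * y) (z2 := s * z / β)
    hp (by positivity) (by positivity) (by field_simp; exact hs.symm) (by positivity) (by positivity)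
  have e1 : α / s * (s * y) + β / s * (s * z / β) = α * y + z := by
    field_simp
  rw [e1] at h
  refine h.trans (le_of_eq ?_)
  have e2 : (s * y) ^ p = s ^ p * y ^ p := Real.mul_rpow hs0.le hy
  have e3 : (s * z / β) ^ p = s ^ p * z ^ p / β ^ p := by
    rw [div_eq_mul_inv, Real.mul_rpow (by positivity) (by positivity),
      Real.mul_rpow hs0.le hz, Real.inv_rpow hβ.le]
    ring
  have e4 : s ^ p = s ^ (p - 1) * s := by
    nth_rewrite 3 [← Real.rpow_one s]
    rw [← Real.rpow_add hs0]
    norm_num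
  have e5 : β ^ (1 - p) = β / β ^ p := by
    rw [Real.rpow_sub hβ, Real.rpow_one]
  have hβp : (0:ℝ) < β ^ p := Real.rpow_pos_of_pos hβ p
  rw [e2, e3, e4, e5]
  field_simp

/-- Theorem 1.2, the main result of the paper. -/
theorem stmt_1 (p L : ℝ) (hp : 1 < p) (hL : 0 < L) (hLp : L < p)
    (lam Lam : ℕ → ℝ)
    (hlam : ∀ n, 1 ≤ n → 0 < lam n)
    (hLam : ∀ n, Lam n = ∑ i ∈ Finset.Icc 1 n, lam i)
    (hcond : ∀ n, 1 ≤ n →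
      Lam (n + 1) / lam (n + 1) ≤
        (Lam n / lam n) * (1 - L * lam n / (p * Lam n)) ^ (1 - p) + L / p)
    (a : ℕ → ℝ) (ha : ∀ n, 1 ≤ n → 0 ≤ a n)
    (hsum : Summable fun n : ℕ => a (n + 1) ^ p) :
    (Summable fun n : ℕ =>
      ((1 / Lam (n + 1)) * ∑ k ∈ Finset.Icc 1 (n + 1), lam k * a k) ^ p) ∧
    ∑' n : ℕ, ((1 / Lam (n + 1)) * ∑ k ∈ Finset.Icc 1 (n + 1), lam k * a k) ^ p ≤
      (p / (p - L)) ^ p * ∑' n : ℕ, a (n + 1) ^ p := by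
  have hp0 : (0:ℝ) < p := lt_trans one_pos hp
  have hpL : 0 < p - L := sub_pos.2 hLp
  set c : ℝ := L / p with hc
  set K : ℝ := p / (p - L) with hK
  have hc0 : 0 < c := div_pos hL hp0
  have hc1 : c < 1 := (div_lt_one hp0).2 hLp
  have hc1' : (0:ℝ) < 1 - c := by linarith
  have hK0 : 0 < K := div_pos hp0 hpL
  have hKc : K * (1 - c) = 1 := by
    rw [hc, hK]; field_simp
  clear_value c K
  -- positivity of Lam
  have hLampos : ∀ n : ℕ, 1 ≤ n → 0 < Lam n := by
    intro n hn
    rw [hLam]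
    apply Finset.sum_pos
    · intro i hi
      exact hlam i (Finset.mem_Icc.1 hi).1
    · exact ⟨1, Finset.mem_Icc.2 ⟨le_refl 1, hn⟩⟩
  have hLamsucc : ∀ n : ℕ, Lam (n + 1) = Lam n + lam (n + 1) := by
    intro n
    rw [hLam, hLam, Finset.sum_Icc_succ_top (Nat.one_le_iff_ne_zero.2 (Nat.succ_ne_zero n))]
  have hLamnn : ∀ n : ℕ, 0 ≤ Lam n := by
    intro n
    cases n with
    | zero => simp [hLam]
    | succ m => exact (hLampos (m+1) (Nat.le_add_left 1 m)).le
  -- the averages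
  set A : ℕ → ℝ := fun n => (1 / Lam n) * ∑ k ∈ Finset.Icc 1 n, lam k * a k with hA
  clear_value A
  have hA0 : A 0 = 0 := by simp [hA, hLam]
  have hAnn : ∀ n, 0 ≤ A n := by
    intro n
    simp only [hA]
    apply mul_nonneg (one_div_nonneg.2 (hLamnn n))
    apply Finset.sum_nonneg
    intro k hk
    exact mul_nonneg (hlam k (Finset.mem_Icc.1 hk).1).le (ha k (Finset.mem_Icc.1 hk).1)
  have hmulA : ∀ n : ℕ, Lam n * A n = ∑ k ∈ Finset.Icc 1 n, lam k * a k := by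
    intro n
    cases n with
    | zero => simp [hA, hLam]
    | succ m =>
      have h := (hLampos (m+1) (Nat.le_add_left 1 m)).ne'
      simp only [hA, one_div, ← mul_assoc, mul_inv_cancel₀ h, one_mul]
  have hrec : ∀ n : ℕ, Lam (n+1) * A (n+1) = Lam n * A n + lam (n+1) * a (n+1) := by
    intro n
    rw [hmulA, hmulA, Finset.sum_Icc_succ_top (Nat.one_le_iff_ne_zero.2 (Nat.succ_ne_zero n))]
  -- weights
  set w : ℕ → ℝ := fun n => Lam n / lam n with hw
  clear_value w
  have hwdef : ∀ n : ℕ, w n = Lam n / lam n := fun n => by rw [hw]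
  have hw1 : ∀ n : ℕ, 1 ≤ w (n + 1) := by
    intro n
    have hl := hlam (n+1) (Nat.le_add_left 1 n)
    rw [hwdef, le_div_iff₀ hl, hLamsucc n]
    nlinarith [hLamnn n]
  have hwsub : ∀ n : ℕ, w (n+1) - 1 = Lam n / lam (n+1) := by
    intro n
    have hl := (hlam (n+1) (Nat.le_add_left 1 n)).ne'
    rw [hwdef, hLamsucc n]
    field_simp
    ring
  -- the key per-step inequality
  have hstep : ∀ n : ℕ,
      A (n+1) ^ p + (K * (w (n+1+1) - 1) * A (n+1) ^ p - K * (w (n+1) - 1) * A n ^ p)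
        ≤ K ^ p * a (n+1) ^ p := by
    intro n
    have hlam1 : 0 < lam (n+1) := hlam (n+1) (Nat.le_add_left 1 n)
    have hLam1 : 0 < Lam (n+1) := hLampos (n+1) (Nat.le_add_left 1 n)
    have hw10 : (0:ℝ) < w (n+1) := lt_of_lt_of_le one_pos (hw1 n)
    have hwc : 0 < w (n+1) - c := by nlinarith [hw1 n]
    have hy := hAnn n
    have hx := hAnn (n+1)
    have haa := ha (n+1) (Nat.le_add_left 1 n)
    have hwm1 : 0 ≤ w (n+1) - 1 := by linarith [hw1 n]
    -- identity : w(n+1) * A(n+1) = (w(n+1)-1) * A n + a (n+1)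
    have hid : w (n+1) * A (n+1) = (w (n+1) - 1) * A n + a (n+1) := by
      have h := hrec n
      rw [hwsub n, hwdef]
      rw [div_mul_eq_mul_div, div_mul_eq_mul_div, div_add' _ _ _ hlam1.ne', h]
      ring
    -- from the hypothesis : w(n+1+1) - c ≤ w(n+1)^p * (w(n+1)-c)^(1-p)
    have harg : 1 - L * lam (n+1) / (p * Lam (n+1)) = (w (n+1) - c) / w (n+1) := by
      rw [hwdef, hc]
      field_simp
    have hip : (0:ℝ) < w (n+1) ^ (1-p) := Real.rpow_pos_of_pos hw10 _
    have h1 : w (n+1) ^ (1-p) * w (n+1) ^ p = w (n+1) := by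
      rw [← Real.rpow_add hw10]
      norm_num
    have hrw : w (n+1) * ((w (n+1) - c) / w (n+1)) ^ (1 - p)
        = w (n+1) ^ p * (w (n+1) - c) ^ (1 - p) := by
      rw [Real.div_rpow hwc.le hw10.le]
      rw [show w (n+1) * ((w (n+1) - c) ^ (1-p) / w (n+1) ^ (1-p))
          = (w (n+1) / w (n+1) ^ (1-p)) * (w (n+1) - c) ^ (1-p) by ring]
      congr 1
      rw [div_eq_iff hip.ne']
      linear_combination -h1
    have hH : w (n+1+1) - c ≤ w (n+1) ^ p * (w (n+1) - c) ^ (1 - p) := by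
      have h2 := hcond (n+1) (Nat.le_add_left 1 n)
      rw [← hwdef (n+1+1), ← hwdef (n+1), harg, hrw] at h2
      linarith
    -- Jensen
    have hjen : ((w (n+1) - 1) * A n + a (n+1)) ^ p
        ≤ (w (n+1) - c) ^ (p-1) * ((w (n+1) - 1) * A n ^ p + (1-c) ^ (1-p) * a (n+1) ^ p) := by
      have h2 := jensen2' (p := p) (α := w (n+1) - 1) (β := 1 - c) (y := A n) (z := a (n+1))
        hp.le hwm1 hc1' hy haa
      rw [show w (n+1) - 1 + (1 - c) = w (n+1) - c by ring] at h2
      exact h2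
    -- exponent bookkeeping : K * (1-c)^(1-p) = K^p
    have hKinv : 1 - c = K⁻¹ := by
      field_simp
      linarith [hKc]
    have hKe2 : ((1:ℝ) - c) ^ (1-p) = K ^ (p-1) := by
      rw [hKinv, Real.inv_rpow hK0.le, ← Real.rpow_neg hK0.le,
        show -(1-p) = p - 1 by ring]
    have hKp : K * (1-c) ^ (1-p) = K ^ p := by
      rw [hKe2]
      nth_rewrite 1 [← Real.rpow_one K]
      rw [← Real.rpow_add hK0]
      norm_num
    -- put everything together
    have hcancel : (w (n+1) - c) ^ (1-p) * (w (n+1) - c) ^ (p-1) = 1 := by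
      rw [← Real.rpow_add hwc]; norm_num
    have hxp : 0 ≤ A (n+1) ^ p := Real.rpow_nonneg hx p
    have key : K * (w (n+1+1) - c) * A (n+1) ^ p
        ≤ K * (w (n+1) - 1) * A n ^ p + K ^ p * a (n+1) ^ p := by
      have s1 : K * (w (n+1+1) - c) * A (n+1) ^ p
          ≤ K * (w (n+1) ^ p * (w (n+1) - c) ^ (1-p)) * A (n+1) ^ p := by
        apply mul_le_mul_of_nonneg_right _ hxp
        exact mul_le_mul_of_nonneg_left hH hK0.le
      have s2 : K * (w (n+1) ^ p * (w (n+1) - c) ^ (1-p)) * A (n+1) ^ p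
          = K * (w (n+1) - c) ^ (1-p) * (w (n+1) * A (n+1)) ^ p := by
        rw [Real.mul_rpow hw10.le hx]
        ring
      have s3 : K * (w (n+1) - c) ^ (1-p) * (w (n+1) * A (n+1)) ^ p
          ≤ K * (w (n+1) - c) ^ (1-p) *
            ((w (n+1) - c) ^ (p-1) * ((w (n+1) - 1) * A n ^ p + (1-c) ^ (1-p) * a (n+1) ^ p)) := by
        apply mul_le_mul_of_nonneg_left _ (by positivity)
        rw [hid]
        exact hjen
      have s4 : K * (w (n+1) - c) ^ (1-p) *
            ((w (n+1) - c) ^ (p-1) * ((w (n+1) - 1) * A n ^ p + (1-c) ^ (1-p) * a (n+1) ^ p))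
          = K * (w (n+1) - 1) * A n ^ p + K ^ p * a (n+1) ^ p := by
        rw [show K * (w (n+1) - c) ^ (1-p) *
            ((w (n+1) - c) ^ (p-1) * ((w (n+1) - 1) * A n ^ p + (1-c) ^ (1-p) * a (n+1) ^ p))
          = ((w (n+1) - c) ^ (1-p) * (w (n+1) - c) ^ (p-1)) *
            (K * (w (n+1) - 1) * A n ^ p + (K * (1-c) ^ (1-p)) * a (n+1) ^ p) by ring]
        rw [hcancel, hKp, one_mul]
      calc K * (w (n+1+1) - c) * A (n+1) ^ p ≤ _ := s1
        _ = _ := s2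
        _ ≤ _ := s3
        _ = _ := s4
    have hco : A (n+1) ^ p + K * (w (n+1+1) - 1) * A (n+1) ^ p
        = K * (w (n+1+1) - c) * A (n+1) ^ p := by
      linear_combination (-(A (n+1) ^ p)) * hKc
    linarith [key, hco]
  -- summing up (with telescoping) by induction
  have hf0 : K * (w 1 - 1) * A 0 ^ p = 0 := by
    rw [hA0, Real.zero_rpow hp0.ne']
    ring
  have hsumN : ∀ N : ℕ, ∑ n ∈ Finset.range N, A (n+1) ^ p + K * (w (N+1) - 1) * A N ^ p
      ≤ K ^ p * ∑ n ∈ Finset.range N, a (n+1) ^ p := by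
    intro N
    induction N with
    | zero => simp [hf0]
    | succ N ih =>
      rw [Finset.sum_range_succ, Finset.sum_range_succ, mul_add]
      have := hstep N
      linarith
  have hann : ∀ n : ℕ, 0 ≤ a (n+1) ^ p :=
    fun n => Real.rpow_nonneg (ha (n+1) (Nat.le_add_left 1 n)) p
  have hAnnp : ∀ n : ℕ, 0 ≤ A (n+1) ^ p := fun n => Real.rpow_nonneg (hAnn (n+1)) p
  have hbound : ∀ N : ℕ, ∑ n ∈ Finset.range N, A (n+1) ^ p
      ≤ K ^ p * ∑' n : ℕ, a (n+1) ^ p := by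
    intro N
    have h1 := hsumN N
    have h2 : 0 ≤ K * (w (N+1) - 1) * A N ^ p :=
      mul_nonneg (mul_nonneg hK0.le (by linarith [hw1 N])) (Real.rpow_nonneg (hAnn N) p)
    have h3 : ∑ n ∈ Finset.range N, a (n+1) ^ p ≤ ∑' n : ℕ, a (n+1) ^ p :=
      Summable.sum_le_tsum (Finset.range N) (fun i _ => hann i) hsum
    nlinarith [Real.rpow_nonneg hK0.le p]
  have hfin1 : Summable fun n : ℕ => A (n+1) ^ p :=
    summable_of_sum_range_le hAnnp hbound
  have hfin2 : ∑' n : ℕ, A (n+1) ^ p ≤ K ^ p * ∑' n : ℕ, a (n+1) ^ p :=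
    Real.tsum_le_of_sum_range_le hAnnp hbound
  constructor
  · simpa only [hA] using hfin1
  · simpa only [hA, hK] using hfin2
end

section
/- Let p > 1 be a real number and let (λ_n)_{n≥1} be a sequence of positive real numbers with Λ_n = λ_1 + ... + λ_n. Suppose there is a real constant L with 0 < L < p such that for every integer n ≥ 1, Λ_{n+1}/λ_{n+1} − Λ_n/λ_n ≤ L + (λ_n/(2Λ_n))·(1 − 1/p)·L². Then for every nonnegative real sequence (a_n) with Σ_{n=1}^∞ a_n^p < ∞ one has Σ_{n=1}^∞ ( (1/Λ_n) Σ_{k=1}^n λ_k a_k )^p ≤ (p/(p−L))^p Σ_{n=1}^∞ a_n^p. -/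
open Real Finset

lemma bern_neg {p t : ℝ} (hp : 1 ≤ p) (ht0 : 0 ≤ t) (ht1 : t < 1) :
    1 + p * t ≤ (1 - t) ^ (-p) := by
  have h1t : 0 < 1 - t := by linarith
  have htle : t ≤ t / (1 - t) := by
    rw [le_div_iff₀ h1t]; nlinarith
  have hp0 : (0:ℝ) ≤ p := by linarith
  calc 1 + p * t ≤ 1 + p * (t / (1 - t)) := by
        have := mul_le_mul_of_nonneg_left htle hp0; linarith
    _ ≤ (1 - t)⁻¹ ^ p := by
        have hb := one_add_mul_self_le_rpow_one_add (s := t / (1 - t))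
          (le_trans (by norm_num) (div_nonneg ht0 h1t.le)) hp
        have he : 1 + t / (1 - t) = (1 - t)⁻¹ := by field_simp; ring
        rwa [he] at hb
    _ = (1 - t) ^ (-p) := by
        rw [Real.inv_rpow h1t.le, ← Real.rpow_neg h1t.le]

/-- Second-order Bernoulli. -/
lemma bern2 {p t : ℝ} (hp : 1 < p) (ht0 : 0 ≤ t) (ht1 : t < 1) :
    1 + (p - 1) * t + p * (p - 1) / 2 * t ^ 2 ≤ (1 - t) ^ (1 - p) := by
  set F : ℝ → ℝ := fun s => (1 - s) ^ (1 - p) - (1 + (p - 1) * s + p * (p - 1) / 2 * s ^ 2)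
    with hF
  have hder : ∀ x ∈ Set.Ioo (0:ℝ) 1, HasDerivAt F
      ((-1) * (1 - p) * (1 - x) ^ (1 - p - 1) - ((p - 1) * 1 + p * (p - 1) / 2 * (2 * x ^ 1))) x := by
    intro x hx
    have hx1 : (0:ℝ) < 1 - x := by linarith [hx.2]
    have h1 : HasDerivAt (fun s : ℝ => 1 - s) (-1) x := by
      simpa using (hasDerivAt_id x).const_sub 1
    have h2 : HasDerivAt (fun s : ℝ => (1 - s) ^ (1 - p)) ((-1) * (1 - p) * (1 - x) ^ (1 - p - 1)) x := by
      exact h1.rpow_const (p := 1 - p) (Or.inl hx1.ne')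
    have h3 : HasDerivAt (fun s : ℝ => 1 + (p - 1) * s + p * (p - 1) / 2 * s ^ 2)
        ((p - 1) * 1 + p * (p - 1) / 2 * (2 * x ^ 1)) x := by
      have ha : HasDerivAt (fun s : ℝ => 1 + (p - 1) * s) ((p - 1) * 1) x :=
        ((hasDerivAt_id x).const_mul (p - 1)).const_add 1
      have hb : HasDerivAt (fun s : ℝ => p * (p - 1) / 2 * s ^ 2) (p * (p - 1) / 2 * (2 * x ^ 1)) x := by
        exact (hasDerivAt_pow 2 x).const_mul (p * (p - 1) / 2)
      exact ha.add hb
    exact h2.sub h3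
  have hmono : MonotoneOn F (Set.Ico (0:ℝ) 1) := by
    apply monotoneOn_of_deriv_nonneg (convex_Ico 0 1)
    · apply ContinuousOn.sub
      · apply ContinuousOn.rpow_const (continuous_const.sub continuous_id).continuousOn
        intro x hx; left
        have : x < 1 := hx.2
        intro h; simp at h; linarith
      · fun_prop
    · rw [interior_Ico]
      exact fun x hx => (hder x hx).differentiableAt.differentiableWithinAt
    · rw [interior_Ico]
      intro x hx
      rw [(hder x hx).deriv]
      have hx1 : (0:ℝ) < 1 - x := by linarith [hx.2]
      have hbn := bern_neg hp.le hx.1.le hx.2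
      have he : (1 - x) ^ (1 - p - 1) = (1 - x) ^ (-p) := by
        rw [show (1 - p - 1 : ℝ) = -p by ring]
      rw [he]
      have hp1 : (0:ℝ) ≤ p - 1 := by linarith
      nlinarith [hx.1, mul_le_mul_of_nonneg_left hbn hp1]
  have h0 : F 0 ≤ F t := hmono ⟨le_refl 0, by norm_num⟩ ⟨ht0, ht1⟩ ht0
  have hF0 : F 0 = 0 := by simp [hF]
  have := h0; rw [hF0] at this
  simp only [hF] at this
  linarith

/-- THE key inequality. -/
lemma key_ineq {p s : ℝ} (hp : 1 < p) (hs0 : 0 ≤ s) (hs1 : s < 1) :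
    (1 - s) ^ (p - 1) * (1 + (p - 1) * s + p * (p - 1) / 2 * s ^ 2) ≤ 1 := by
  have h1s : 0 < 1 - s := by linarith
  have hb := bern2 hp hs0 hs1
  have hpos : (0:ℝ) < (1 - s) ^ (p - 1) := Real.rpow_pos_of_pos h1s _
  calc (1 - s) ^ (p - 1) * (1 + (p - 1) * s + p * (p - 1) / 2 * s ^ 2)
      ≤ (1 - s) ^ (p - 1) * (1 - s) ^ (1 - p) := by
        exact mul_le_mul_of_nonneg_left hb hpos.le
    _ = 1 := by
        rw [← Real.rpow_add h1s]; norm_num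

/-- Corollary 1.3. -/
theorem stmt_2 (p L : ℝ) (hp : 1 < p) (hL : 0 < L) (hLp : L < p)
    (lam Lam : ℕ → ℝ)
    (hlam : ∀ n, 1 ≤ n → 0 < lam n)
    (hLam : ∀ n, Lam n = ∑ i ∈ Finset.Icc 1 n, lam i)
    (hcond : ∀ n, 1 ≤ n →
      Lam (n + 1) / lam (n + 1) - Lam n / lam n ≤
        L + (lam n / (2 * Lam n)) * (1 - 1 / p) * L ^ 2)
    (a : ℕ → ℝ) (ha : ∀ n, 1 ≤ n → 0 ≤ a n)
    (hsum : Summable fun n : ℕ => a (n + 1) ^ p) :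
    (Summable fun n : ℕ =>
      ((1 / Lam (n + 1)) * ∑ k ∈ Finset.Icc 1 (n + 1), lam k * a k) ^ p) ∧
    ∑' n : ℕ, ((1 / Lam (n + 1)) * ∑ k ∈ Finset.Icc 1 (n + 1), lam k * a k) ^ p ≤
      (p / (p - L)) ^ p * ∑' n : ℕ, a (n + 1) ^ p := by
  have hp0 : (0:ℝ) < p := lt_trans one_pos hp
  have hpL : (0:ℝ) < p - L := by linarith
  set u : ℝ := L / p with hu
  have hu0 : 0 < u := div_pos hL hp0
  have hu1 : u < 1 := (div_lt_one hp0).2 hLp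
  have h1u : (0:ℝ) < 1 - u := by linarith
  have hLup : L = u * p := by rw [hu, div_mul_cancel₀ L hp0.ne']
  -- Lam facts
  have hLam0 : Lam 0 = 0 := by rw [hLam]; simp
  have hLamrec : ∀ n, Lam (n+1) = Lam n + lam (n+1) := by
    intro n; rw [hLam, hLam, Finset.sum_Icc_succ_top (by omega)]
  have hLampos : ∀ n, 1 ≤ n → 0 < Lam n := by
    intro n hn; rw [hLam]
    apply Finset.sum_pos
    · intro i hi; exact hlam i (Finset.mem_Icc.1 hi).1
    · exact ⟨1, Finset.mem_Icc.2 ⟨le_refl 1, hn⟩⟩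
  have hLamnn : ∀ n, 0 ≤ Lam n := by
    intro n
    cases n with
    | zero => rw [hLam0]
    | succ m => exact (hLampos _ (by omega)).le
  have hlamleLam : ∀ n, 1 ≤ n → lam n ≤ Lam n := by
    intro n hn
    obtain ⟨m, rfl⟩ : ∃ m, n = m + 1 := ⟨n - 1, by omega⟩
    rw [hLamrec]; linarith [hLamnn m]
  have hxpos : ∀ j, 1 ≤ j → 0 < lam j / Lam j :=
    fun j hj => div_pos (hlam j hj) (hLampos j hj)
  have hxle1 : ∀ j, 1 ≤ j → lam j / Lam j ≤ 1 :=
    fun j hj => (div_le_one (hLampos j hj)).2 (hlamleLam j hj)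
  have hslt1 : ∀ j, 1 ≤ j → u * (lam j / Lam j) < 1 := by
    intro j hj
    have h1 := hxle1 j hj; have h2 := hxpos j hj
    nlinarith
  have hsnn : ∀ j, 1 ≤ j → 0 ≤ u * (lam j / Lam j) :=
    fun j hj => mul_nonneg hu0.le (hxpos j hj).le
  -- the weight product
  set W : ℕ → ℝ := fun n => ∏ j ∈ Finset.Icc 1 n, (1 - u * (lam j / Lam j)) with hW
  have hWpos : ∀ n, 0 < W n := by
    intro n
    apply Finset.prod_pos
    intro j hj
    have hj1 := (Finset.mem_Icc.1 hj).1
    linarith [hslt1 j hj1]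
  have hW0 : W 0 = 1 := by simp [hW]
  have hWrec : ∀ n, W (n+1) = W n * (1 - u * (lam (n+1) / Lam (n+1))) := by
    intro n
    rw [hW]
    exact Finset.prod_Icc_succ_top (by omega) _
  have htel : ∀ n, Lam (n+1) * W (n+1) = Lam n * W n + (1 - u) * (lam (n+1) * W n) := by
    intro n
    have hne : Lam n + lam (n+1) ≠ 0 := by
      rw [← hLamrec n]; exact (hLampos _ (by omega)).ne'
    rw [hWrec n, hLamrec n]
    field_simp
    ring
  have hsumB : ∀ n, (∑ k ∈ Finset.Icc 1 n, lam k * ((1-u) * W (k-1))) = Lam n * W n := by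
    intro n
    induction n with
    | zero => simp [hLam0]
    | succ m ih =>
      rw [Finset.sum_Icc_succ_top (by omega), ih]
      simp only [Nat.add_sub_cancel]
      rw [htel m]; ring
  -- STEP inequality
  have hstep0 : ∀ k, 1 ≤ k →
      W k ^ (p-1) / Lam k + W k ^ (p-1) / ((1-u) * lam (k+1)) ≤
        W (k-1) ^ (p-1) / ((1-u) * lam k) := by
    intro k hk
    obtain ⟨m, rfl⟩ : ∃ m, k = m + 1 := ⟨k - 1, by omega⟩
    simp only [Nat.add_sub_cancel]
    set x : ℝ := lam (m+1) / Lam (m+1) with hxdef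
    set s : ℝ := u * x with hsdef
    have hx0 : 0 < x := hxpos (m+1) (by omega)
    have hx1 : x ≤ 1 := hxle1 (m+1) (by omega)
    have hs0 : 0 ≤ s := hsnn (m+1) (by omega)
    have hs1 : s < 1 := hslt1 (m+1) (by omega)
    have hlamk : 0 < lam (m+1) := hlam _ (by omega)
    have hlamk1 : 0 < lam (m+2) := hlam _ (by omega)
    have hLamk : 0 < Lam (m+1) := hLampos _ (by omega)
    have hLamk1 : 0 < Lam (m+2) := hLampos _ (by omega)
    -- ratio bound from the hypothesis
    have hratio : lam (m+1) / lam (m+2) ≤ 1 + (L-1)*x + (x^2/2)*(1-1/p)*L^2 := by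
      have hc := hcond (m+1) (by omega)
      have he1 : Lam (m+2) / lam (m+2) = Lam (m+1) / lam (m+2) + 1 := by
        rw [hLamrec (m+1)]
        field_simp
      have he2 : lam (m+1) / lam (m+2) = x * (Lam (m+1) / lam (m+2)) := by
        rw [hxdef]; field_simp
      have he3 : Lam (m+1) / lam (m+1) = 1 / x := by
        rw [hxdef, one_div, inv_div]
      have he4 : lam (m+1) / (2 * Lam (m+1)) = x / 2 := by
        rw [hxdef]; ring
      rw [he1, he3, he4] at hc
      -- hc : Lam(m+1)/lam(m+2) + 1 - 1/x ≤ L + (x/2)*(1-1/p)*L^2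
      have hb : Lam (m+1) / lam (m+2) ≤ 1/x + L - 1 + (x/2)*(1-1/p)*L^2 := by linarith
      rw [he2]
      calc x * (Lam (m+1) / lam (m+2)) ≤ x * (1/x + L - 1 + (x/2)*(1-1/p)*L^2) :=
            mul_le_mul_of_nonneg_left hb hx0.le
        _ = 1 + (L-1)*x + (x^2/2)*(1-1/p)*L^2 := by field_simp; ring
    -- polynomial identity
    have hpoly : (1-u)*x + (1 + (L-1)*x + (x^2/2)*(1-1/p)*L^2)
        = 1 + (p-1)*s + p*(p-1)/2*s^2 := by
      rw [hsdef, hLup]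
      field_simp
      ring
    have hkey2 : (1-s)^(p-1) * ((1-u)*x + lam (m+1) / lam (m+2)) ≤ 1 := by
      have h1 : (1-u)*x + lam (m+1) / lam (m+2) ≤ 1 + (p-1)*s + p*(p-1)/2*s^2 := by
        rw [← hpoly]; linarith
      have hpow : (0:ℝ) < (1-s)^(p-1) := Real.rpow_pos_of_pos (by linarith) _
      calc (1-s)^(p-1) * ((1-u)*x + lam (m+1) / lam (m+2))
          ≤ (1-s)^(p-1) * (1 + (p-1)*s + p*(p-1)/2*s^2) :=
            mul_le_mul_of_nonneg_left h1 hpow.le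
        _ ≤ 1 := key_ineq hp hs0 hs1
    -- W split
    have hWsplit : W (m+1) ^ (p-1) = W m ^ (p-1) * (1-s) ^ (p-1) := by
      rw [hWrec m, ← hxdef, ← hsdef, Real.mul_rpow (hWpos m).le (by linarith)]
    have hWm : 0 < W m ^ (p-1) := Real.rpow_pos_of_pos (hWpos m) _
    have heq : W (m+1) ^ (p-1) / Lam (m+1) + W (m+1) ^ (p-1) / ((1-u) * lam (m+2))
        = (W m ^ (p-1) / ((1-u) * lam (m+1))) *
          ((1-s)^(p-1) * ((1-u)*x + lam (m+1) / lam (m+2))) := by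
      rw [hWsplit, hxdef]
      field_simp
    rw [heq]
    calc (W m ^ (p-1) / ((1-u) * lam (m+1))) *
          ((1-s)^(p-1) * ((1-u)*x + lam (m+1) / lam (m+2)))
        ≤ (W m ^ (p-1) / ((1-u) * lam (m+1))) * 1 := by
          apply mul_le_mul_of_nonneg_left hkey2
          positivity
      _ = W m ^ (p-1) / ((1-u) * lam (m+1)) := mul_one _
  -- tail bound
  have htail : ∀ N k, 1 ≤ k → k ≤ N →
      (∑ n ∈ Finset.Icc k N, W n ^ (p-1) / Lam n) ≤ W (k-1) ^ (p-1) / ((1-u) * lam k) := by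
    intro N
    have main : ∀ d k, 1 ≤ k → k + d = N →
        (∑ n ∈ Finset.Icc k N, W n ^ (p-1) / Lam n) ≤ W (k-1) ^ (p-1) / ((1-u) * lam k) := by
      intro d
      induction d with
      | zero =>
        intro k hk hkN
        rw [show Finset.Icc k N = {k} by rw [show N = k by omega, Finset.Icc_self],
          Finset.sum_singleton]
        have h2 : 0 < W k ^ (p-1) / ((1-u) * lam (k+1)) := by
          have := hWpos k; have := hlam (k+1) (by omega); positivity
        linarith [hstep0 k hk]
      | succ d ih =>
        intro k hk hkN
        have hkN' : k < N := by omega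
        have hins : Finset.Icc k N = insert k (Finset.Icc (k+1) N) := by
          ext j; simp only [Finset.mem_Icc, Finset.mem_insert]; omega
        rw [hins, Finset.sum_insert (by simp only [Finset.mem_Icc]; omega)]
        have hih := ih (k+1) (by omega) (by omega)
        simp only [Nat.add_sub_cancel] at hih
        calc W k ^ (p-1) / Lam k + ∑ n ∈ Finset.Icc (k+1) N, W n ^ (p-1) / Lam n
            ≤ W k ^ (p-1) / Lam k + W k ^ (p-1) / ((1-u) * lam (k+1)) := by linarith
          _ ≤ W (k-1) ^ (p-1) / ((1-u) * lam k) := hstep0 k hk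
    intro k hk hkN
    exact main (N - k) k hk (by omega)
  -- the Hölder weight function
  set g : ℕ → ℝ := fun k => lam k * a k ^ p * ((1-u) * W (k-1)) ^ (1-p) with hg
  have hBpos : ∀ k, 0 < (1-u) * W k := fun k => mul_pos h1u (hWpos k)
  have hgnn : ∀ k, 1 ≤ k → 0 ≤ g k := by
    intro k hk
    have h1 := hlam k hk
    have h2 := ha k hk
    have h3 := hBpos (k-1)
    have h4 : 0 ≤ a k ^ p := Real.rpow_nonneg h2 p
    have h5 : 0 < ((1-u) * W (k-1)) ^ (1-p) := Real.rpow_pos_of_pos h3 _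
    simp only [hg]
    positivity
  -- Hölder row bound
  have hrow : ∀ n, 1 ≤ n → (∑ k ∈ Finset.Icc 1 n, lam k * a k) ^ p ≤
      (Lam n * W n) ^ (p-1) * ∑ k ∈ Finset.Icc 1 n, g k := by
    intro n hn
    set w' : ℕ → ℝ := fun k => if k = 0 then 0 else lam k * ((1-u) * W (k-1)) with hw'
    set f' : ℕ → ℝ := fun k => if k = 0 then 0 else a k / ((1-u) * W (k-1)) with hf'
    have hw'nn : ∀ k, 0 ≤ w' k := by
      intro k
      simp only [hw']
      split
      · exact le_refl 0
      · next hne =>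
          have hk : 1 ≤ k := by omega
          exact mul_nonneg (hlam k hk).le (hBpos (k-1)).le
    have hf'nn : ∀ k, 0 ≤ f' k := by
      intro k
      simp only [hf']
      split
      · exact le_refl 0
      · next hne =>
          have hk : 1 ≤ k := by omega
          exact div_nonneg (ha k hk) (hBpos (k-1)).le
    have hold := Real.inner_le_weight_mul_Lp_of_nonneg (Finset.Icc 1 n) hp.le w' f' hw'nn hf'nn
    have hsum1 : ∑ i ∈ Finset.Icc 1 n, w' i * f' i = ∑ k ∈ Finset.Icc 1 n, lam k * a k := by
      refine Finset.sum_congr rfl fun k hk => ?_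
      have hk1 : 1 ≤ k := (Finset.mem_Icc.1 hk).1
      have hkne : ¬ (k = 0) := by omega
      simp only [hw', hf', if_neg hkne]
      have := (hBpos (k-1)).ne'
      field_simp
      rw [mul_right_comm (lam k), mul_div_cancel_right₀ (lam k * a k) (hWpos (k-1)).ne']
    have hsum2 : ∑ i ∈ Finset.Icc 1 n, w' i = Lam n * W n := by
      rw [← hsumB n]
      refine Finset.sum_congr rfl fun k hk => ?_
      have hk1 : 1 ≤ k := (Finset.mem_Icc.1 hk).1
      simp only [hw', if_neg (by omega : ¬ (k = 0))]
    have hsum3 : ∑ i ∈ Finset.Icc 1 n, w' i * f' i ^ p = ∑ k ∈ Finset.Icc 1 n, g k := by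
      refine Finset.sum_congr rfl fun k hk => ?_
      have hk1 : 1 ≤ k := (Finset.mem_Icc.1 hk).1
      simp only [hw', hf', hg, if_neg (by omega : ¬ (k = 0))]
      rw [Real.div_rpow (ha k hk1) (hBpos (k-1)).le]
      rw [show (1:ℝ) - p = 1 - p by rfl]
      have hBne : ((1-u) * W (k-1)) ^ p ≠ 0 := (Real.rpow_pos_of_pos (hBpos (k-1)) p).ne'
      rw [Real.rpow_sub (hBpos (k-1)), Real.rpow_one]
      field_simp
    rw [hsum1, hsum2, hsum3] at hold
    have hLHSnn : 0 ≤ ∑ k ∈ Finset.Icc 1 n, lam k * a k :=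
      Finset.sum_nonneg fun k hk =>
        mul_nonneg (hlam k (Finset.mem_Icc.1 hk).1).le (ha k (Finset.mem_Icc.1 hk).1)
    have hXnn : (0:ℝ) ≤ Lam n * W n := mul_nonneg (hLamnn n) (hWpos n).le
    have hYnn : (0:ℝ) ≤ ∑ k ∈ Finset.Icc 1 n, g k :=
      Finset.sum_nonneg fun k hk => hgnn k (Finset.mem_Icc.1 hk).1
    have h2 := Real.rpow_le_rpow hLHSnn hold hp0.le
    rw [Real.mul_rpow (Real.rpow_nonneg hXnn _) (Real.rpow_nonneg hYnn _),
      ← Real.rpow_mul hXnn, ← Real.rpow_mul hYnn,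
      show (1 - p⁻¹) * p = p - 1 by field_simp,
      show p⁻¹ * p = 1 by field_simp, Real.rpow_one] at h2
    exact h2
  -- per-n bound for the averaged terms
  have hA : ∀ n, 1 ≤ n → ((1 / Lam n) * ∑ k ∈ Finset.Icc 1 n, lam k * a k) ^ p ≤
      (W n ^ (p-1) / Lam n) * ∑ k ∈ Finset.Icc 1 n, g k := by
    intro n hn
    have hLn := hLampos n hn
    have hLHSnn : 0 ≤ ∑ k ∈ Finset.Icc 1 n, lam k * a k :=
      Finset.sum_nonneg fun k hk =>
        mul_nonneg (hlam k (Finset.mem_Icc.1 hk).1).le (ha k (Finset.mem_Icc.1 hk).1)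
    rw [Real.mul_rpow (by positivity) hLHSnn]
    have hcoef : (1 / Lam n) ^ p * (Lam n * W n) ^ (p-1) = W n ^ (p-1) / Lam n := by
      have h1 : ((1:ℝ) / Lam n) ^ p = Lam n ^ (-p) := by
        rw [one_div, ← Real.rpow_neg_one (Lam n), ← Real.rpow_mul hLn.le]
        norm_num
      rw [h1, Real.mul_rpow hLn.le (hWpos n).le, ← mul_assoc, ← Real.rpow_add hLn,
        show -p + (p-1) = -1 by ring, Real.rpow_neg_one (Lam n), div_eq_mul_inv, mul_comm]
    calc (1 / Lam n) ^ p * (∑ k ∈ Finset.Icc 1 n, lam k * a k) ^ p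
        ≤ (1 / Lam n) ^ p * ((Lam n * W n) ^ (p-1) * ∑ k ∈ Finset.Icc 1 n, g k) := by
          apply mul_le_mul_of_nonneg_left (hrow n hn)
          positivity
      _ = (W n ^ (p-1) / Lam n) * ∑ k ∈ Finset.Icc 1 n, g k := by
          rw [← mul_assoc, hcoef]
  -- swap the double sum
  have hswap : ∀ N, ∑ n ∈ Finset.Icc 1 N, ((W n ^ (p-1) / Lam n) * ∑ k ∈ Finset.Icc 1 n, g k)
      = ∑ k ∈ Finset.Icc 1 N, g k * (∑ n ∈ Finset.Icc k N, W n ^ (p-1) / Lam n) := by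
    intro N
    calc ∑ n ∈ Finset.Icc 1 N, ((W n ^ (p-1) / Lam n) * ∑ k ∈ Finset.Icc 1 n, g k)
        = ∑ n ∈ Finset.Icc 1 N, ∑ k ∈ Finset.Icc 1 n, g k * (W n ^ (p-1) / Lam n) := by
          refine Finset.sum_congr rfl fun n _ => ?_
          rw [Finset.mul_sum]
          exact Finset.sum_congr rfl fun k _ => mul_comm _ _
      _ = ∑ k ∈ Finset.Icc 1 N, ∑ n ∈ Finset.Icc k N, g k * (W n ^ (p-1) / Lam n) := by
          have hcomm := Finset.sum_Ico_Ico_comm 1 (N+1)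
            (fun k n => g k * (W n ^ (p-1) / Lam n))
          simp only [Finset.Ico_add_one_right_eq_Icc] at hcomm
          exact hcomm.symm
      _ = ∑ k ∈ Finset.Icc 1 N, g k * (∑ n ∈ Finset.Icc k N, W n ^ (p-1) / Lam n) := by
          refine Finset.sum_congr rfl fun k _ => ?_
          rw [Finset.mul_sum]
  -- per-term final identity
  have hterm : ∀ k, 1 ≤ k →
      g k * (W (k-1) ^ (p-1) / ((1-u) * lam k)) = (1-u) ^ (-p) * a k ^ p := by
    intro k hk
    have hWk := hWpos (k-1)
    have hlk := hlam k hk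
    have hWinv : W (k-1) ^ (1-p) = (W (k-1) ^ (p-1))⁻¹ := by
      rw [← Real.rpow_neg hWk.le]
      congr 1
      ring
    have huinv : ((1:ℝ)-u) ^ (1-p) = (1-u) ^ (-p) * (1-u) := by
      rw [show (1:ℝ)-p = -p + 1 by ring, Real.rpow_add h1u, Real.rpow_one]
    have hWp : W (k-1) ^ (p-1) ≠ 0 := (Real.rpow_pos_of_pos hWk _).ne'
    simp only [hg]
    rw [Real.mul_rpow h1u.le hWk.le, hWinv, huinv]
    field_simp
  -- the main finite-N bound
  have hmain : ∀ N, ∑ n ∈ Finset.Icc 1 N, ((1 / Lam n) * ∑ k ∈ Finset.Icc 1 n, lam k * a k) ^ p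
      ≤ (1-u) ^ (-p) * ∑ k ∈ Finset.Icc 1 N, a k ^ p := by
    intro N
    calc ∑ n ∈ Finset.Icc 1 N, ((1 / Lam n) * ∑ k ∈ Finset.Icc 1 n, lam k * a k) ^ p
        ≤ ∑ n ∈ Finset.Icc 1 N, ((W n ^ (p-1) / Lam n) * ∑ k ∈ Finset.Icc 1 n, g k) :=
          Finset.sum_le_sum fun n hn => hA n (Finset.mem_Icc.1 hn).1
      _ = ∑ k ∈ Finset.Icc 1 N, g k * (∑ n ∈ Finset.Icc k N, W n ^ (p-1) / Lam n) := hswap N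
      _ ≤ ∑ k ∈ Finset.Icc 1 N, g k * (W (k-1) ^ (p-1) / ((1-u) * lam k)) := by
          refine Finset.sum_le_sum fun k hk => ?_
          have hk1 := (Finset.mem_Icc.1 hk).1
          have hk2 := (Finset.mem_Icc.1 hk).2
          exact mul_le_mul_of_nonneg_left (htail N k hk1 hk2) (hgnn k hk1)
      _ = ∑ k ∈ Finset.Icc 1 N, (1-u) ^ (-p) * a k ^ p := by
          refine Finset.sum_congr rfl fun k hk => hterm k (Finset.mem_Icc.1 hk).1
      _ = (1-u) ^ (-p) * ∑ k ∈ Finset.Icc 1 N, a k ^ p := by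
          rw [Finset.mul_sum]
  -- reindexing
  have hreidx : ∀ (f : ℕ → ℝ) (N : ℕ),
      ∑ n ∈ Finset.range N, f (n+1) = ∑ n ∈ Finset.Icc 1 N, f n := by
    intro f N
    rw [← Finset.Ico_add_one_right_eq_Icc, Finset.sum_Ico_eq_sum_range]
    simp only [Nat.add_sub_cancel, Nat.succ_sub_one]
    exact Finset.sum_congr rfl fun i _ => by rw [Nat.add_comm]
  have hCeq : ((1:ℝ)-u) ^ (-p) = (p / (p - L)) ^ p := by
    have h1 : p / (p - L) = ((1:ℝ)-u)⁻¹ := by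
      rw [hu]
      field_simp
    rw [h1, Real.inv_rpow h1u.le, ← Real.rpow_neg h1u.le]
  -- wrap up via partial sums
  set A : ℕ → ℝ := fun n => ((1 / Lam (n+1)) * ∑ k ∈ Finset.Icc 1 (n+1), lam k * a k) ^ p
    with hAdef
  have hAnn : ∀ n, 0 ≤ A n := by
    intro n
    apply Real.rpow_nonneg
    apply mul_nonneg
    · have := hLamnn (n+1); positivity
    · exact Finset.sum_nonneg fun k hk =>
        mul_nonneg (hlam k (Finset.mem_Icc.1 hk).1).le (ha k (Finset.mem_Icc.1 hk).1)
  have hannn : ∀ n : ℕ, 0 ≤ a (n+1) ^ p := fun n => Real.rpow_nonneg (ha (n+1) (by omega)) p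
  have hbound : ∀ N, ∑ n ∈ Finset.range N, A n ≤ (p / (p - L)) ^ p * ∑' n : ℕ, a (n+1) ^ p := by
    intro N
    have h1 : ∑ n ∈ Finset.range N, A n
        = ∑ n ∈ Finset.Icc 1 N, ((1 / Lam n) * ∑ k ∈ Finset.Icc 1 n, lam k * a k) ^ p :=
      hreidx (fun n => ((1 / Lam n) * ∑ k ∈ Finset.Icc 1 n, lam k * a k) ^ p) N
    have h2 : ∑ k ∈ Finset.Icc 1 N, a k ^ p ≤ ∑' n : ℕ, a (n+1) ^ p := by
      rw [← hreidx (fun k => a k ^ p) N]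
      exact Summable.sum_le_tsum (Finset.range N) (fun i _ => hannn i) hsum
    have hCnn : (0:ℝ) ≤ (1-u) ^ (-p) := (Real.rpow_pos_of_pos h1u _).le
    calc ∑ n ∈ Finset.range N, A n
        ≤ (1-u) ^ (-p) * ∑ k ∈ Finset.Icc 1 N, a k ^ p := by rw [h1]; exact hmain N
      _ ≤ (1-u) ^ (-p) * ∑' n : ℕ, a (n+1) ^ p := mul_le_mul_of_nonneg_left h2 hCnn
      _ = (p / (p - L)) ^ p * ∑' n : ℕ, a (n+1) ^ p := by rw [hCeq]
  have hsummable : Summable A := summable_of_sum_range_le hAnn hbound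
  exact ⟨hsummable, Real.tsum_le_of_sum_range_le hAnn hbound⟩
end

section
/- Let (λ_n)_{n≥1} be a sequence of positive real numbers with Λ_n = λ_1 + ... + λ_n, and suppose there is a real number M such that for every integer n ≥ 1, (Λ_n/λ_n) · log( (Λ_{n+1}/λ_{n+1}) / (Λ_n/λ_n) ) ≤ M. Then for every nonnegative real sequence (a_n) with Σ_{n=1}^∞ a_n < ∞ one has Σ_{n=1}^∞ ( Π_{k=1}^n a_k^{λ_k/Λ_n} ) ≤ e^M · Σ_{n=1}^∞ a_n. -/
/-- Theorem 1.4: weighted Carleman inequality with constant `e^M`. -/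
theorem stmt_3 (M : ℝ)
    (lam Lam : ℕ → ℝ)
    (hlam : ∀ n, 1 ≤ n → 0 < lam n)
    (hLam : ∀ n, Lam n = ∑ i ∈ Finset.Icc 1 n, lam i)
    (hcond : ∀ n, 1 ≤ n →
      (Lam n / lam n) * Real.log ((Lam (n + 1) / lam (n + 1)) / (Lam n / lam n)) ≤ M)
    (a : ℕ → ℝ) (ha : ∀ n, 1 ≤ n → 0 ≤ a n)
    (hsum : Summable fun n : ℕ => a (n + 1)) :
    (Summable fun n : ℕ =>
      ∏ k ∈ Finset.Icc 1 (n + 1), a k ^ (lam k / Lam (n + 1))) ∧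
    ∑' n : ℕ, ∏ k ∈ Finset.Icc 1 (n + 1), a k ^ (lam k / Lam (n + 1)) ≤
      Real.exp M * ∑' n : ℕ, a (n + 1) := by
  have hL0 : Lam 0 = 0 := by simp [hLam 0]
  have hLsucc : ∀ n : ℕ, Lam (n + 1) = Lam n + lam (n + 1) := by
    intro n
    rw [hLam (n + 1), hLam n, Finset.sum_Icc_succ_top (Nat.le_add_left 1 n)]
  have hLpos : ∀ n, 1 ≤ n → 0 < Lam n := by
    intro n hn
    rw [hLam n]
    exact Finset.sum_pos (fun i hi => hlam i (Finset.mem_Icc.mp hi).1)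
      (Finset.nonempty_Icc.mpr hn)
  -- the ratio r n = Lam n / lam n, positive for n ≥ 1
  have hrpos : ∀ n, 1 ≤ n → 0 < Lam n / lam n := fun n hn =>
    div_pos (hLpos n hn) (hlam n hn)
  -- D n = (Lam (n+1) / lam (n+1)) ^ (Lam n)
  set D : ℕ → ℝ := fun n => (Lam (n + 1) / lam (n + 1)) ^ (Lam n) with hD
  have hDpos : ∀ n, 0 < D n := fun n =>
    Real.rpow_pos_of_pos (hrpos (n + 1) (Nat.le_add_left 1 n)) _
  have hlogD : ∀ n, Real.log (D n) = Lam n * Real.log (Lam (n + 1) / lam (n + 1)) := by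
    intro n
    exact Real.log_rpow (hrpos (n + 1) (Nat.le_add_left 1 n)) _
  -- the weights c
  set c : ℕ → ℝ := fun k => (D k / D (k - 1)) ^ (lam k)⁻¹ with hc
  have hcpos : ∀ k, 0 < c k := fun k =>
    Real.rpow_pos_of_pos (div_pos (hDpos k) (hDpos (k - 1))) _
  have hck : ∀ k, 1 ≤ k → c k ^ lam k = D k / D (k - 1) := by
    intro k hk
    rw [hc]
    rw [← Real.rpow_mul (le_of_lt (div_pos (hDpos k) (hDpos (k - 1)))),
      inv_mul_cancel₀ (hlam k hk).ne', Real.rpow_one]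
  -- telescoping product
  have hprod : ∀ n : ℕ, ∏ k ∈ Finset.Icc 1 n, c k ^ lam k = D n := by
    intro n
    induction n with
    | zero => simp [hD, hL0]
    | succ m ih =>
      rw [Finset.prod_Icc_succ_top (Nat.le_add_left 1 m), ih,
        hck (m + 1) (Nat.le_add_left 1 m)]
      have h1 : (m + 1 : ℕ) - 1 = m := rfl
      rw [h1, mul_comm, div_mul_cancel₀ _ (hDpos m).ne']
  -- key bound on lam k * c k
  have hkey : ∀ k, 1 ≤ k → lam k * c k ≤ Real.exp M * Lam k := by
    intro k hk
    obtain ⟨m, rfl⟩ := Nat.exists_eq_add_of_le hk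
    set j := 1 + m with hj
    have hj1 : 1 ≤ j := Nat.le_add_right 1 m
    have hjsub : j - 1 = m := by omega
    have hlj := hlam j hj1
    have hLj := hLpos j hj1
    have hlj1 := hlam (j + 1) (Nat.le_add_left 1 j)
    have hLj1 := hLpos (j + 1) (Nat.le_add_left 1 j)
    have hLm : Lam m = Lam j - lam j := by
      have := hLsucc m
      have hmj : m + 1 = j := by omega
      rw [hmj] at this; linarith
    -- compute log of lam j * c j
    have hlogc : Real.log (c j) = (lam j)⁻¹ * (Real.log (D j) - Real.log (D (j - 1))) := by
      rw [hc]
      rw [Real.log_rpow (div_pos (hDpos j) (hDpos (j - 1))),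
        Real.log_div (hDpos j).ne' (hDpos (j - 1)).ne']
    have hD1 : Real.log (D (j - 1)) = Lam m * Real.log (Lam j / lam j) := by
      rw [hjsub, hlogD m]
      have hmj : m + 1 = j := by omega
      rw [hmj]
    have hcondj := hcond j hj1
    have hlogr : Real.log ((Lam (j + 1) / lam (j + 1)) / (Lam j / lam j)) =
        Real.log (Lam (j + 1) / lam (j + 1)) - Real.log (Lam j / lam j) :=
      Real.log_div (hrpos (j + 1) (Nat.le_add_left 1 j)).ne' (hrpos j hj1).ne'
    have hlogrj : Real.log (Lam j / lam j) = Real.log (Lam j) - Real.log (lam j) :=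
      Real.log_div hLj.ne' hlj.ne'
    have hlogsum : Real.log (lam j * c j) = Real.log (lam j) + Real.log (c j) :=
      Real.log_mul hlj.ne' (hcpos j).ne'
    have hlogle : Real.log (lam j * c j) ≤ M + Real.log (Lam j) := by
      rw [hlogsum, hlogc, hlogD j, hD1]
      rw [hlogr, hlogrj] at hcondj
      have hlamne : lam j ≠ 0 := hlj.ne'
      have expand : Real.log (lam j) + (lam j)⁻¹ *
          (Lam j * Real.log (Lam (j + 1) / lam (j + 1)) -
            Lam m * Real.log (Lam j / lam j)) =
          (Lam j / lam j) * (Real.log (Lam (j + 1) / lam (j + 1)) -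
            (Real.log (Lam j) - Real.log (lam j))) + Real.log (Lam j) := by
        rw [hLm, hlogrj]
        field_simp
        ring
      rw [expand]
      linarith
    calc lam j * c j = Real.exp (Real.log (lam j * c j)) :=
          (Real.exp_log (mul_pos hlj (hcpos j))).symm
      _ ≤ Real.exp (M + Real.log (Lam j)) := Real.exp_le_exp.mpr hlogle
      _ = Real.exp M * Lam j := by rw [Real.exp_add, Real.exp_log hLj]
  -- abbreviations
  set G : ℕ → ℝ := fun n => ∏ k ∈ Finset.Icc 1 n, a k ^ (lam k / Lam n) with hG
  set b : ℕ → ℝ := fun k => lam k * c k * a k with hb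
  have hbnn : ∀ k, 1 ≤ k → 0 ≤ b k := fun k hk =>
    mul_nonneg (mul_nonneg (hlam k hk).le (hcpos k).le) (ha k hk)
  have hGnn : ∀ n, 0 ≤ G n := fun n =>
    Finset.prod_nonneg fun k hk => Real.rpow_nonneg (ha k (Finset.mem_Icc.mp hk).1) _
  -- AM-GM step
  have hAMGM : ∀ n, 1 ≤ n →
      G n ≤ ((Lam n)⁻¹ - (Lam (n + 1))⁻¹) * ∑ k ∈ Finset.Icc 1 n, b k := by
    intro n hn
    have hLn := hLpos n hn
    have hLn1 := hLpos (n + 1) (Nat.le_add_left 1 n)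
    have hamgm := Real.geom_mean_le_arith_mean_weighted (Finset.Icc 1 n)
      (fun k => lam k / Lam n) (fun k => c k * a k)
      (fun k hk => (div_pos (hlam k (Finset.mem_Icc.mp hk).1) hLn).le)
      (by
        rw [← Finset.sum_div, ← hLam n, div_self hLn.ne'])
      (fun k hk => mul_nonneg (hcpos k).le (ha k (Finset.mem_Icc.mp hk).1))
    -- rewrite LHS of AM-GM
    have hsplit : ∏ k ∈ Finset.Icc 1 n, (c k * a k) ^ (lam k / Lam n) =
        (Lam (n + 1) / lam (n + 1)) * G n := by
      have e1 : ∀ k ∈ Finset.Icc 1 n, (c k * a k) ^ (lam k / Lam n) =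
          c k ^ (lam k / Lam n) * a k ^ (lam k / Lam n) := fun k hk =>
        Real.mul_rpow (hcpos k).le (ha k (Finset.mem_Icc.mp hk).1)
      rw [Finset.prod_congr rfl e1, Finset.prod_mul_distrib]
      have e2 : ∀ k ∈ Finset.Icc 1 n, c k ^ (lam k / Lam n) =
          (c k ^ lam k) ^ (Lam n)⁻¹ := by
        intro k hk
        rw [div_eq_mul_inv, Real.rpow_mul (hcpos k).le]
      have e3 : ∏ k ∈ Finset.Icc 1 n, c k ^ (lam k / Lam n) =
          Lam (n + 1) / lam (n + 1) := by
        rw [Finset.prod_congr rfl e2,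
          Real.finset_prod_rpow (Finset.Icc 1 n) (fun k => c k ^ lam k)
            (fun k _ => Real.rpow_nonneg (hcpos k).le _) (Lam n)⁻¹]
        · rw [hprod n, hD]
          rw [← Real.rpow_mul (hrpos (n + 1) (Nat.le_add_left 1 n)).le,
            mul_inv_cancel₀ hLn.ne', Real.rpow_one]
      rw [e3]
    rw [hsplit] at hamgm
    have hsum' : ∑ k ∈ Finset.Icc 1 n, lam k / Lam n * (c k * a k) =
        (Lam n)⁻¹ * ∑ k ∈ Finset.Icc 1 n, b k := by
      rw [Finset.mul_sum]
      refine Finset.sum_congr rfl fun k hk => ?_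
      rw [hb]; ring
    rw [hsum'] at hamgm
    have hdiff : (Lam n)⁻¹ - (Lam (n+1))⁻¹ = (lam (n+1) / Lam (n+1)) * (Lam n)⁻¹ := by
      have h1 : Lam n ≠ 0 := hLn.ne'
      have h2 : Lam (n + 1) ≠ 0 := hLn1.ne'
      have h3 : lam (n + 1) ≠ 0 := (hlam (n + 1) (Nat.le_add_left 1 n)).ne'
      rw [hLsucc n] at h2 ⊢
      rw [inv_sub_inv h1 h2, add_sub_cancel_left, div_mul_eq_div_div_swap, div_div]
      rw [← div_div, div_eq_mul_inv]
    rw [hdiff]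
    have hr1 : 0 < Lam (n + 1) / lam (n + 1) := hrpos (n + 1) (Nat.le_add_left 1 n)
    have := mul_le_mul_of_nonneg_left hamgm (le_of_lt (div_pos (hlam (n+1) (Nat.le_add_left 1 n)) hLn1))
    have hone : (lam (n+1) / Lam (n+1)) * (Lam (n+1) / lam (n+1)) = 1 := by
      have h2 : Lam (n + 1) ≠ 0 := hLn1.ne'
      have h3 : lam (n + 1) ≠ 0 := (hlam (n + 1) (Nat.le_add_left 1 n)).ne'
      field_simp
    calc G n = (lam (n+1) / Lam (n+1)) * ((Lam (n+1) / lam (n+1)) * G n) := by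
          rw [← mul_assoc, hone, one_mul]
      _ ≤ (lam (n+1) / Lam (n+1)) * ((Lam n)⁻¹ * ∑ k ∈ Finset.Icc 1 n, b k) := this
      _ = (lam (n+1) / Lam (n+1)) * (Lam n)⁻¹ * ∑ k ∈ Finset.Icc 1 n, b k := by ring
  -- main induction
  have hmain : ∀ N : ℕ, ∑ n ∈ Finset.Icc 1 N, G n ≤
      ∑ k ∈ Finset.Icc 1 N, b k * ((Lam k)⁻¹ - (Lam (N + 1))⁻¹) := by
    intro N
    induction N with
    | zero => simp
    | succ m ih =>
      rw [Finset.sum_Icc_succ_top (Nat.le_add_left 1 m)]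
      have hstep := hAMGM (m + 1) (Nat.le_add_left 1 m)
      have hrw : ∑ k ∈ Finset.Icc 1 (m + 1), b k * ((Lam k)⁻¹ - (Lam (m + 1 + 1))⁻¹) =
          (∑ k ∈ Finset.Icc 1 m, b k * ((Lam k)⁻¹ - (Lam (m + 1))⁻¹)) +
          ((Lam (m + 1))⁻¹ - (Lam (m + 1 + 1))⁻¹) * ∑ k ∈ Finset.Icc 1 (m + 1), b k := by
        have e1 : ∀ k ∈ Finset.Icc 1 (m + 1), b k * ((Lam k)⁻¹ - (Lam (m + 1 + 1))⁻¹) =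
            b k * ((Lam k)⁻¹ - (Lam (m + 1))⁻¹) +
              ((Lam (m + 1))⁻¹ - (Lam (m + 1 + 1))⁻¹) * b k := fun k _ => by ring
        rw [Finset.sum_congr rfl e1, Finset.sum_add_distrib, ← Finset.mul_sum,
          Finset.sum_Icc_succ_top (Nat.le_add_left 1 m)
            (fun k => b k * ((Lam k)⁻¹ - (Lam (m + 1))⁻¹)), sub_self, mul_zero, add_zero]
      rw [hrw]
      linarith
  -- final bound on partial sums
  have hfinal : ∀ N : ℕ, ∑ n ∈ Finset.Icc 1 N, G n ≤
      Real.exp M * ∑' n : ℕ, a (n + 1) := by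
    intro N
    refine (hmain N).trans ?_
    have h1 : ∑ k ∈ Finset.Icc 1 N, b k * ((Lam k)⁻¹ - (Lam (N + 1))⁻¹) ≤
        ∑ k ∈ Finset.Icc 1 N, Real.exp M * a k := by
      refine Finset.sum_le_sum fun k hk => ?_
      obtain ⟨hk1, _⟩ := Finset.mem_Icc.mp hk
      have hLk := hLpos k hk1
      have hLN1 := hLpos (N + 1) (Nat.le_add_left 1 N)
      have step1 : b k * ((Lam k)⁻¹ - (Lam (N + 1))⁻¹) ≤ b k * (Lam k)⁻¹ := by
        have : b k * ((Lam k)⁻¹ - (Lam (N + 1))⁻¹) = b k * (Lam k)⁻¹ - b k * (Lam (N+1))⁻¹ := by ring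
        rw [this]
        have : 0 ≤ b k * (Lam (N + 1))⁻¹ := mul_nonneg (hbnn k hk1) (inv_nonneg.mpr hLN1.le)
        linarith
      refine step1.trans ?_
      have : b k * (Lam k)⁻¹ = (lam k * c k) * (Lam k)⁻¹ * a k := by rw [hb]; ring
      rw [this]
      have h2 : (lam k * c k) * (Lam k)⁻¹ ≤ Real.exp M := by
        rw [← div_eq_mul_inv, div_le_iff₀ hLk]
        exact hkey k hk1
      exact mul_le_mul_of_nonneg_right h2 (ha k hk1)
    refine h1.trans ?_
    rw [← Finset.mul_sum]
    refine mul_le_mul_of_nonneg_left ?_ (Real.exp_pos M).le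
    have hIcc : ∑ k ∈ Finset.Icc 1 N, a k = ∑ i ∈ Finset.range N, a (i + 1) := by
      rw [← Finset.Ico_add_one_right_eq_Icc, Finset.sum_Ico_eq_sum_range]
      simp [add_comm]
    rw [hIcc]
    exact Summable.sum_le_tsum (Finset.range N) (fun i _ => ha (i + 1) (Nat.le_add_left 1 i)) hsum
  have hrange : ∀ N : ℕ, ∑ n ∈ Finset.range N, G (n + 1) = ∑ n ∈ Finset.Icc 1 N, G n := by
    intro N
    rw [← Finset.Ico_add_one_right_eq_Icc, Finset.sum_Ico_eq_sum_range]
    simp [add_comm]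
  have hbd : ∀ N : ℕ, ∑ n ∈ Finset.range N, G (n + 1) ≤ Real.exp M * ∑' n : ℕ, a (n + 1) :=
    fun N => (hrange N).symm ▸ (hrange N ▸ hfinal N)
  have hsummable : Summable fun n : ℕ => G (n + 1) :=
    summable_of_sum_range_le (fun n => hGnn (n + 1)) hbd
  exact ⟨hsummable, Real.tsum_le_of_sum_range_le (fun n => hGnn (n + 1)) hbd⟩
end

section
/- Let (λ_n)_{n≥1} be a sequence of positive real numbers with Λ_n = λ_1 + ... + λ_n, and let E be a real number such that for every integer n ≥ 1, (Λ_{n+1}/λ_{n+1}) · Π_{k=1}^n (λ_k/Λ_k)^{λ_k/Λ_n} ≤ E. Then for every nonnegative real sequence (a_n) with Σ_{n=1}^∞ a_n < ∞ one has Σ_{n=1}^∞ ( Π_{k=1}^n a_k^{λ_k/Λ_n} ) ≤ E · Σ_{n=1}^∞ a_n. -/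
/-- Bennett's theorem (Theorem 1.5): weighted Carleman inequality. -/
theorem stmt_4 (E : ℝ)
    (lam Lam : ℕ → ℝ)
    (hlam : ∀ n, 1 ≤ n → 0 < lam n)
    (hLam : ∀ n, Lam n = ∑ i ∈ Finset.Icc 1 n, lam i)
    (hcond : ∀ n, 1 ≤ n →
      (Lam (n + 1) / lam (n + 1)) *
        ∏ k ∈ Finset.Icc 1 n, (lam k / Lam k) ^ (lam k / Lam n) ≤ E)
    (a : ℕ → ℝ) (ha : ∀ n, 1 ≤ n → 0 ≤ a n)
    (hsum : Summable fun n : ℕ => a (n + 1)) :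
    (Summable fun n : ℕ =>
      ∏ k ∈ Finset.Icc 1 (n + 1), a k ^ (lam k / Lam (n + 1))) ∧
    ∑' n : ℕ, ∏ k ∈ Finset.Icc 1 (n + 1), a k ^ (lam k / Lam (n + 1)) ≤
      E * ∑' n : ℕ, a (n + 1) := by
  classical
  have hΛpos : ∀ n, 1 ≤ n → 0 < Lam n := by
    intro n hn
    rw [hLam]
    apply Finset.sum_pos
    · intro i hi; exact hlam i (Finset.mem_Icc.mp hi).1
    · exact ⟨1, Finset.mem_Icc.mpr ⟨le_refl 1, hn⟩⟩
  set G : ℕ → ℝ := fun n => ∏ k ∈ Finset.Icc 1 n, a k ^ (lam k / Lam n) with hGdef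
  set P : ℕ → ℝ := fun n => ∏ k ∈ Finset.Icc 1 n, (lam k / Lam k) ^ (lam k / Lam n)
    with hPdef
  have hPpos : ∀ n, 1 ≤ n → 0 < P n := by
    intro n hn
    apply Finset.prod_pos
    intro k hk
    have hk1 := (Finset.mem_Icc.mp hk).1
    exact Real.rpow_pos_of_pos (div_pos (hlam k hk1) (hΛpos k hk1)) _
  have hE : 0 ≤ E := by
    have h1 := hcond 1 le_rfl
    refine le_trans (le_of_lt ?_) h1
    exact mul_pos (div_pos (hΛpos 2 (by norm_num)) (hlam 2 (by norm_num)))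
      (hPpos 1 le_rfl)
  have hGnonneg : ∀ n, 0 ≤ G n := by
    intro n
    apply Finset.prod_nonneg
    intro k hk
    exact Real.rpow_nonneg (ha k (Finset.mem_Icc.mp hk).1) _
  -- AM-GM step
  have hAMGM : ∀ n, 1 ≤ n →
      G n ≤ P n / Lam n * ∑ k ∈ Finset.Icc 1 n, Lam k * a k := by
    intro n hn
    have hΛn := hΛpos n hn
    have hw : ∀ k ∈ Finset.Icc 1 n, 0 ≤ lam k / Lam n := by
      intro k hk
      exact le_of_lt (div_pos (hlam k (Finset.mem_Icc.mp hk).1) hΛn)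
    have hw1 : ∑ k ∈ Finset.Icc 1 n, lam k / Lam n = 1 := by
      rw [← Finset.sum_div, ← hLam n, div_self (ne_of_gt hΛn)]
    have hz : ∀ k ∈ Finset.Icc 1 n, 0 ≤ Lam k * a k / lam k := by
      intro k hk
      have hk1 := (Finset.mem_Icc.mp hk).1
      exact div_nonneg (mul_nonneg (le_of_lt (hΛpos k hk1)) (ha k hk1))
        (le_of_lt (hlam k hk1))
    have key := Real.geom_mean_le_arith_mean_weighted (Finset.Icc 1 n)
      (fun k => lam k / Lam n) (fun k => Lam k * a k / lam k) hw hw1 hz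
    have hGeq : G n = P n * ∏ k ∈ Finset.Icc 1 n,
        (Lam k * a k / lam k) ^ (lam k / Lam n) := by
      rw [hGdef, hPdef]
      simp only
      rw [← Finset.prod_mul_distrib]
      apply Finset.prod_congr rfl
      intro k hk
      have hk1 := (Finset.mem_Icc.mp hk).1
      rw [← Real.mul_rpow (le_of_lt (div_pos (hlam k hk1) (hΛpos k hk1)))
        (hz k hk)]
      congr 1
      have h1 : lam k ≠ 0 := ne_of_gt (hlam k hk1)
      have h2 : Lam k ≠ 0 := ne_of_gt (hΛpos k hk1)
      field_simp
    have hsum_eq : ∑ k ∈ Finset.Icc 1 n, (lam k / Lam n) * (Lam k * a k / lam k)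
        = (∑ k ∈ Finset.Icc 1 n, Lam k * a k) / Lam n := by
      rw [Finset.sum_div]
      apply Finset.sum_congr rfl
      intro k hk
      have hk1 := (Finset.mem_Icc.mp hk).1
      have h1 : lam k ≠ 0 := ne_of_gt (hlam k hk1)
      have h2 : Lam n ≠ 0 := ne_of_gt hΛn
      field_simp
    calc G n = P n * ∏ k ∈ Finset.Icc 1 n,
        (Lam k * a k / lam k) ^ (lam k / Lam n) := hGeq
      _ ≤ P n * ∑ k ∈ Finset.Icc 1 n, (lam k / Lam n) * (Lam k * a k / lam k) :=
          mul_le_mul_of_nonneg_left key (le_of_lt (hPpos n hn))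
      _ = P n / Lam n * ∑ k ∈ Finset.Icc 1 n, Lam k * a k := by
          rw [hsum_eq]; field_simp
  -- key bound on P n / Lam n
  have hB : ∀ n, 1 ≤ n → P n / Lam n ≤ E * (1 / Lam n - 1 / Lam (n + 1)) := by
    intro n hn
    have hΛn := hΛpos n hn
    have hΛn1 := hΛpos (n + 1) (by omega)
    have hlamn1 := hlam (n + 1) (by omega)
    have hc := hcond n hn
    have hP : P n ≤ E * lam (n + 1) / Lam (n + 1) := by
      have h3 : P n = (lam (n + 1) / Lam (n + 1)) * ((Lam (n + 1) / lam (n + 1)) * P n) := by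
        field_simp
      calc P n = (lam (n + 1) / Lam (n + 1)) * ((Lam (n + 1) / lam (n + 1)) * P n) := h3
        _ ≤ (lam (n + 1) / Lam (n + 1)) * E :=
            mul_le_mul_of_nonneg_left hc (le_of_lt (div_pos hlamn1 hΛn1))
        _ = E * lam (n + 1) / Lam (n + 1) := by ring
    have hΛsucc : Lam (n + 1) = Lam n + lam (n + 1) := by
      rw [hLam, hLam, Finset.sum_Icc_succ_top (by omega)]
    have heq : E * (1 / Lam n - 1 / Lam (n + 1)) = (E * lam (n + 1) / Lam (n + 1)) / Lam n := by
      have h1 : Lam n ≠ 0 := ne_of_gt hΛn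
      have h2 : Lam (n + 1) ≠ 0 := ne_of_gt hΛn1
      field_simp
      rw [hΛsucc]
      ring
    rw [heq]
    exact (div_le_div_iff_of_pos_right hΛn).mpr hP
  -- partial sum bound
  have hC : ∀ N : ℕ, ∑ n ∈ Finset.Icc 1 N, G n ≤ E * ∑ k ∈ Finset.Icc 1 N, a k := by
    intro N
    have step1 : ∑ n ∈ Finset.Icc 1 N, G n ≤
        ∑ n ∈ Finset.Icc 1 N, (P n / Lam n) * ∑ k ∈ Finset.Icc 1 n, Lam k * a k := by
      apply Finset.sum_le_sum
      intro n hn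
      exact hAMGM n (Finset.mem_Icc.mp hn).1
    have swap : ∑ n ∈ Finset.Icc 1 N, ∑ k ∈ Finset.Icc 1 n, (P n / Lam n) * (Lam k * a k)
        = ∑ k ∈ Finset.Icc 1 N, ∑ n ∈ Finset.Icc k N, (P n / Lam n) * (Lam k * a k) := by
      apply Finset.sum_comm'
      intro n k
      simp only [Finset.mem_Icc]
      omega
    have step2 : ∑ n ∈ Finset.Icc 1 N, (P n / Lam n) * ∑ k ∈ Finset.Icc 1 n, Lam k * a k
        = ∑ k ∈ Finset.Icc 1 N, (Lam k * a k) * ∑ n ∈ Finset.Icc k N, P n / Lam n := by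
      simp_rw [Finset.mul_sum] at *
      rw [swap]
      apply Finset.sum_congr rfl
      intro k _
      apply Finset.sum_congr rfl
      intro n _
      ring
    have step3 : ∀ k, 1 ≤ k → k ≤ N →
        ∑ n ∈ Finset.Icc k N, P n / Lam n ≤ E / Lam k := by
      intro k hk hkN
      have htel : ∑ n ∈ Finset.Icc k N, (E * (1 / Lam n - 1 / Lam (n + 1)))
          = E * (1 / Lam k - 1 / Lam (N + 1)) := by
        rw [← Finset.mul_sum]
        congr 1
        have : Finset.Icc k N = Finset.Ico k (N + 1) := by
          rw [Finset.Ico_add_one_right_eq_Icc]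
        rw [this, Finset.sum_Ico_eq_sub _ (by omega),
          Finset.sum_range_sub' (fun n => 1 / Lam n),
          Finset.sum_range_sub' (fun n => 1 / Lam n)]
        ring
      calc ∑ n ∈ Finset.Icc k N, P n / Lam n
          ≤ ∑ n ∈ Finset.Icc k N, E * (1 / Lam n - 1 / Lam (n + 1)) := by
            apply Finset.sum_le_sum
            intro n hn
            exact hB n (le_trans hk (Finset.mem_Icc.mp hn).1)
        _ = E * (1 / Lam k - 1 / Lam (N + 1)) := htel
        _ ≤ E * (1 / Lam k) := by
            apply mul_le_mul_of_nonneg_left _ hE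
            have : 0 ≤ 1 / Lam (N + 1) := le_of_lt (one_div_pos.mpr (hΛpos (N + 1) (by omega)))
            linarith
        _ = E / Lam k := by rw [mul_one_div]
    have step4 : ∑ k ∈ Finset.Icc 1 N, (Lam k * a k) * ∑ n ∈ Finset.Icc k N, P n / Lam n
        ≤ ∑ k ∈ Finset.Icc 1 N, E * a k := by
      apply Finset.sum_le_sum
      intro k hk
      obtain ⟨hk1, hkN⟩ := Finset.mem_Icc.mp hk
      have hΛk := hΛpos k hk1
      have hak := ha k hk1
      calc (Lam k * a k) * ∑ n ∈ Finset.Icc k N, P n / Lam n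
          ≤ (Lam k * a k) * (E / Lam k) :=
            mul_le_mul_of_nonneg_left (step3 k hk1 hkN)
              (mul_nonneg (le_of_lt hΛk) hak)
        _ = E * a k := by field_simp
    calc ∑ n ∈ Finset.Icc 1 N, G n
        ≤ ∑ n ∈ Finset.Icc 1 N, (P n / Lam n) * ∑ k ∈ Finset.Icc 1 n, Lam k * a k := step1
      _ = ∑ k ∈ Finset.Icc 1 N, (Lam k * a k) * ∑ n ∈ Finset.Icc k N, P n / Lam n := step2
      _ ≤ ∑ k ∈ Finset.Icc 1 N, E * a k := step4
      _ = E * ∑ k ∈ Finset.Icc 1 N, a k := by rw [Finset.mul_sum]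
  -- convert to range sums
  have hrangeG : ∀ N : ℕ, ∑ i ∈ Finset.range N, G (i + 1) = ∑ n ∈ Finset.Icc 1 N, G n := by
    intro N
    rw [← Finset.Ico_add_one_right_eq_Icc, Finset.sum_Ico_eq_sum_range]
    simp [add_comm]
  have hrangea : ∀ N : ℕ, ∑ i ∈ Finset.range N, a (i + 1) = ∑ k ∈ Finset.Icc 1 N, a k := by
    intro N
    rw [← Finset.Ico_add_one_right_eq_Icc, Finset.sum_Ico_eq_sum_range]
    simp [add_comm]
  have hbound : ∀ N : ℕ, ∑ i ∈ Finset.range N, G (i + 1) ≤ E * ∑' n : ℕ, a (n + 1) := by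
    intro N
    rw [hrangeG]
    refine le_trans (hC N) ?_
    apply mul_le_mul_of_nonneg_left _ hE
    rw [← hrangea]
    exact Summable.sum_le_tsum (Finset.range N) (fun i _ => ha (i + 1) (by omega)) hsum
  have hGnn : ∀ n : ℕ, 0 ≤ G (n + 1) := fun n => hGnonneg (n + 1)
  exact ⟨summable_of_sum_range_le hGnn hbound,
    Real.tsum_le_of_sum_range_le hGnn hbound⟩
end

section
/- Let p > 1 be a real number, N ≥ 1 an integer, and (λ_n)_{1≤n≤N+1} positive real numbers with Λ_n = λ_1 + ... + λ_n. Suppose there exist positive real numbers w_1, ..., w_N, a positive constant U, and, with the convention w_{N+1} = 0, suppose that for every 1 ≤ n ≤ N: (Σ_{i=1}^n w_i)^{p−1} ≤ U · Λ_n^p · ( w_n^{p−1}/λ_n^p − w_{n+1}^{p−1}/λ_{n+1}^p ). Then for every nonnegative real sequence (a_n)_{1≤n≤N}: Σ_{n=1}^N ( (1/Λ_n) Σ_{k=1}^n λ_k a_k )^p ≤ U · Σ_{n=1}^N a_n^p. -/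
lemma tele_aux (f : ℕ → ℝ) (k : ℕ) :
    ∀ N, k ≤ N → ∑ n ∈ Finset.Icc k N, (f n - f (n + 1)) = f k - f (N + 1) := by
  intro N
  induction N with
  | zero => intro h; interval_cases k; simp
  | succ N ih =>
    intro h
    rcases Nat.lt_or_ge k (N + 1) with h' | h'
    · rw [Finset.sum_Icc_succ_top h, ih (Nat.lt_succ_iff.mp h')]; ring
    · have hk : k = N + 1 := le_antisymm h h'
      subst hk; simp

/-- The Kaluza–Szegő sufficient criterion (Section 3). -/
theorem stmt_6 (p : ℝ) (hp : 1 < p) (N : ℕ) (hN : 1 ≤ N)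
    (lam Lam : ℕ → ℝ)
    (hlam : ∀ n, 1 ≤ n → n ≤ N + 1 → 0 < lam n)
    (hLam : ∀ n, Lam n = ∑ i ∈ Finset.Icc 1 n, lam i)
    (w : ℕ → ℝ) (hw : ∀ n, 1 ≤ n → n ≤ N → 0 < w n) (hwN : w (N + 1) = 0)
    (U : ℝ) (hU : 0 < U)
    (hcond : ∀ n, 1 ≤ n → n ≤ N →
      (∑ i ∈ Finset.Icc 1 n, w i) ^ (p - 1) ≤
        U * Lam n ^ p *
          (w n ^ (p - 1) / lam n ^ p - w (n + 1) ^ (p - 1) / lam (n + 1) ^ p))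
    (a : ℕ → ℝ) (ha : ∀ n, 1 ≤ n → n ≤ N → 0 ≤ a n) :
    ∑ n ∈ Finset.Icc 1 N, ((1 / Lam n) * ∑ k ∈ Finset.Icc 1 n, lam k * a k) ^ p ≤
      U * ∑ n ∈ Finset.Icc 1 N, a n ^ p := by
  have hp0 : (0:ℝ) < p := lt_trans zero_lt_one hp
  have hp1 : (0:ℝ) < p - 1 := sub_pos.mpr hp
  set q : ℝ := p / (p - 1) with hq
  have hpq : p.HolderConjugate q := Real.HolderConjugate.conjExponent hp
  have hq0 : (0:ℝ) < q := hpq.symm.pos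
  have h1q : 1 / q = (p - 1) / p := by
    rw [hq]; field_simp
  have hpdq : p * (1 / q) = p - 1 := by
    rw [h1q]; field_simp
  -- D n : telescoping term
  set D : ℕ → ℝ := fun n => w n ^ (p - 1) / lam n ^ p - w (n + 1) ^ (p - 1) / lam (n + 1) ^ p
    with hD
  -- B k
  set B : ℕ → ℝ := fun k => a k ^ p * lam k ^ p / w k ^ (p - 1) with hB
  have hBnonneg : ∀ k, 1 ≤ k → k ≤ N → 0 ≤ B k := by
    intro k h1 h2
    have := Real.rpow_nonneg (ha k h1 h2) p
    have hl := (Real.rpow_pos_of_pos (hlam k h1 (le_trans h2 (Nat.le_succ N))) p)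
    have hwk := Real.rpow_pos_of_pos (hw k h1 h2) (p - 1)
    positivity
  -- positivity of Lam
  have hLampos : ∀ n, 1 ≤ n → n ≤ N → 0 < Lam n := by
    intro n h1 h2
    rw [hLam]
    apply Finset.sum_pos
    · intro i hi
      simp only [Finset.mem_Icc] at hi
      exact hlam i hi.1 (le_trans (le_trans hi.2 h2) (Nat.le_succ N))
    · exact ⟨1, Finset.mem_Icc.mpr ⟨le_refl 1, h1⟩⟩
  -- Step A: per-n bound
  have key : ∀ n, 1 ≤ n → n ≤ N →
      ((1 / Lam n) * ∑ k ∈ Finset.Icc 1 n, lam k * a k) ^ p ≤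
        (∑ k ∈ Finset.Icc 1 n, B k) * (U * D n) := by
    intro n h1 h2
    have hLn := hLampos n h1 h2
    -- Hölder
    have hmem : ∀ k ∈ Finset.Icc 1 n, 1 ≤ k ∧ k ≤ N := by
      intro k hk
      simp only [Finset.mem_Icc] at hk
      exact ⟨hk.1, le_trans hk.2 h2⟩
    have holder : ∑ k ∈ Finset.Icc 1 n, lam k * a k ≤
        (∑ k ∈ Finset.Icc 1 n, B k) ^ (1 / p) *
          (∑ k ∈ Finset.Icc 1 n, w k) ^ (1 / q) := by
      have := Real.inner_le_Lp_mul_Lq_of_nonneg (s := Finset.Icc 1 n)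
        (f := fun k => a k * lam k / w k ^ (1 / q))
        (g := fun k => w k ^ (1 / q)) hpq
        (by
          intro k hk
          obtain ⟨hk1, hk2⟩ := hmem k hk
          have := ha k hk1 hk2
          have hl := (hlam k hk1 (le_trans hk2 (Nat.le_succ N))).le
          have hwk := Real.rpow_pos_of_pos (hw k hk1 hk2) (1 / q)
          positivity)
        (by
          intro k hk
          obtain ⟨hk1, hk2⟩ := hmem k hk
          exact (Real.rpow_pos_of_pos (hw k hk1 hk2) (1 / q)).le)
      refine le_trans (le_of_eq ?_) (le_trans this (le_of_eq ?_))
      · apply Finset.sum_congr rfl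
        intro k hk
        obtain ⟨hk1, hk2⟩ := hmem k hk
        have hwk := Real.rpow_pos_of_pos (hw k hk1 hk2) (1 / q)
        field_simp
      · congr 1
        · congr 1
          apply Finset.sum_congr rfl
          intro k hk
          obtain ⟨hk1, hk2⟩ := hmem k hk
          have hak := ha k hk1 hk2
          have hlk := (hlam k hk1 (le_trans hk2 (Nat.le_succ N))).le
          have hwk := (hw k hk1 hk2).le
          rw [Real.div_rpow (by positivity) (by positivity),
            Real.mul_rpow hak hlk, hB]
          simp only
          rw [← Real.rpow_mul hwk, mul_comm (1/q) p, hpdq]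
        · congr 1
          apply Finset.sum_congr rfl
          intro k hk
          obtain ⟨hk1, hk2⟩ := hmem k hk
          have hwk := (hw k hk1 hk2).le
          rw [← Real.rpow_mul hwk, one_div_mul_cancel hq0.ne', Real.rpow_one]
    have hSB : 0 ≤ ∑ k ∈ Finset.Icc 1 n, B k :=
      Finset.sum_nonneg fun k hk => hBnonneg k (hmem k hk).1 (hmem k hk).2
    have hSw : 0 ≤ ∑ k ∈ Finset.Icc 1 n, w k :=
      Finset.sum_nonneg fun k hk => (hw k (hmem k hk).1 (hmem k hk).2).le
    have hS0 : 0 ≤ ∑ k ∈ Finset.Icc 1 n, lam k * a k := by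
      apply Finset.sum_nonneg
      intro k hk
      obtain ⟨hk1, hk2⟩ := hmem k hk
      exact mul_nonneg (hlam k hk1 (le_trans hk2 (Nat.le_succ N))).le (ha k hk1 hk2)
    -- raise to p
    have hpow : (∑ k ∈ Finset.Icc 1 n, lam k * a k) ^ p ≤
        (∑ k ∈ Finset.Icc 1 n, B k) * (∑ k ∈ Finset.Icc 1 n, w k) ^ (p - 1) := by
      calc (∑ k ∈ Finset.Icc 1 n, lam k * a k) ^ p
          ≤ ((∑ k ∈ Finset.Icc 1 n, B k) ^ (1 / p) *
              (∑ k ∈ Finset.Icc 1 n, w k) ^ (1 / q)) ^ p :=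
            Real.rpow_le_rpow hS0 holder hp0.le
        _ = (∑ k ∈ Finset.Icc 1 n, B k) * (∑ k ∈ Finset.Icc 1 n, w k) ^ (p - 1) := by
            rw [Real.mul_rpow (Real.rpow_nonneg hSB _) (Real.rpow_nonneg hSw _)]
            rw [← Real.rpow_mul hSB, ← Real.rpow_mul hSw, one_div_mul_cancel hp0.ne',
              mul_comm (1/q) p, hpdq, Real.rpow_one]
    have hLp : (0:ℝ) < Lam n ^ p := Real.rpow_pos_of_pos hLn p
    calc ((1 / Lam n) * ∑ k ∈ Finset.Icc 1 n, lam k * a k) ^ p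
        = (∑ k ∈ Finset.Icc 1 n, lam k * a k) ^ p / Lam n ^ p := by
          rw [one_div, inv_mul_eq_div, Real.div_rpow hS0 hLn.le]
      _ ≤ ((∑ k ∈ Finset.Icc 1 n, B k) * (∑ k ∈ Finset.Icc 1 n, w k) ^ (p - 1)) / Lam n ^ p :=
          by gcongr
      _ ≤ ((∑ k ∈ Finset.Icc 1 n, B k) * (U * Lam n ^ p * D n)) / Lam n ^ p := by
          gcongr
          exact hcond n h1 h2
      _ = (∑ k ∈ Finset.Icc 1 n, B k) * (U * D n) := by
          field_simp
  -- Step B: sum up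
  have step2 : ∑ n ∈ Finset.Icc 1 N, (∑ k ∈ Finset.Icc 1 n, B k) * (U * D n) =
      U * ∑ k ∈ Finset.Icc 1 N, a k ^ p := by
    have swap : ∑ n ∈ Finset.Icc 1 N, ∑ k ∈ Finset.Icc 1 n, B k * (U * D n) =
        ∑ k ∈ Finset.Icc 1 N, ∑ n ∈ Finset.Icc k N, B k * (U * D n) := by
      apply Finset.sum_comm'
      intro n k
      simp only [Finset.mem_Icc]
      omega
    calc ∑ n ∈ Finset.Icc 1 N, (∑ k ∈ Finset.Icc 1 n, B k) * (U * D n)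
        = ∑ n ∈ Finset.Icc 1 N, ∑ k ∈ Finset.Icc 1 n, B k * (U * D n) := by
          simp [Finset.sum_mul]
      _ = ∑ k ∈ Finset.Icc 1 N, ∑ n ∈ Finset.Icc k N, B k * (U * D n) := swap
      _ = ∑ k ∈ Finset.Icc 1 N, B k * U * ∑ n ∈ Finset.Icc k N, D n := by
          apply Finset.sum_congr rfl
          intro k hk
          rw [Finset.mul_sum]
          apply Finset.sum_congr rfl
          intro n hn
          ring
      _ = U * ∑ k ∈ Finset.Icc 1 N, a k ^ p := by
          rw [Finset.mul_sum]
          apply Finset.sum_congr rfl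
          intro k hk
          simp only [Finset.mem_Icc] at hk
          have htel : ∑ n ∈ Finset.Icc k N, D n = w k ^ (p - 1) / lam k ^ p := by
            have := tele_aux (fun n => w n ^ (p - 1) / lam n ^ p) k N hk.2
            rw [hD]
            simp only at this ⊢
            rw [this, hwN, Real.zero_rpow hp1.ne', zero_div, sub_zero]
          rw [htel, hB]
          have hwk : (0:ℝ) < w k ^ (p - 1) := Real.rpow_pos_of_pos (hw k hk.1 hk.2) (p - 1)
          have hlk : (0:ℝ) < lam k ^ p :=
            Real.rpow_pos_of_pos (hlam k hk.1 (le_trans hk.2 (Nat.le_succ N))) p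
          field_simp
  calc ∑ n ∈ Finset.Icc 1 N, ((1 / Lam n) * ∑ k ∈ Finset.Icc 1 n, lam k * a k) ^ p
      ≤ ∑ n ∈ Finset.Icc 1 N, (∑ k ∈ Finset.Icc 1 n, B k) * (U * D n) := by
        apply Finset.sum_le_sum
        intro n hn
        simp only [Finset.mem_Icc] at hn
        exact key n hn.1 hn.2
    _ = U * ∑ n ∈ Finset.Icc 1 N, a n ^ p := step2
end

section
/- Let p > 1 be a real number and define a sequence (w_n)_{n≥1} by w_1 = 1 and w_{n+1} = ((n − 1/p)/n) · w_n for n ≥ 1. Then each w_n > 0, the relation Σ_{i=1}^n w_i = ((n − 1/p)/(1 − 1/p)) · w_n holds for all n ≥ 1, and for every integer n ≥ 1 one has (Σ_{i=1}^n w_i)^{p−1} ≤ (p/(p−1))^p · n^p · ( w_n^{p−1} − w_{n+1}^{p−1} ). -/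
/-- Core Bernoulli-type inequality via the exponential function. -/
lemma ks_key (p s : ℝ) (hp : 1 < p) (hs0 : 0 < s) (hs1 : s < 1) :
    (1 - s) ^ (p - 1) * (1 + (p - 1) * s) ≤ 1 := by
  have hps : (0:ℝ) ≤ p - 1 := by linarith
  have h1 : (1 - s : ℝ) ≤ Real.exp (-s) := by
    have := Real.add_one_le_exp (-s); linarith
  have h2 : (1 - s) ^ (p - 1) ≤ Real.exp (-s) ^ (p - 1) :=
    Real.rpow_le_rpow (by linarith) h1 hps
  have h3 : Real.exp (-s) ^ (p - 1) = Real.exp (-((p - 1) * s)) := by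
    rw [← Real.exp_mul]; ring_nf
  have h4 : 1 + (p - 1) * s ≤ Real.exp ((p - 1) * s) := by
    have := Real.add_one_le_exp ((p - 1) * s); linarith
  calc (1 - s) ^ (p - 1) * (1 + (p - 1) * s)
      ≤ Real.exp (-((p - 1) * s)) * Real.exp ((p - 1) * s) := by
        apply mul_le_mul (h3 ▸ h2) h4 (by nlinarith) (Real.exp_nonneg _)
    _ = 1 := by rw [← Real.exp_add]; simp

/-- The Kaluza–Szegő construction for Hardy's inequality. -/
theorem stmt_7 (p : ℝ) (hp : 1 < p) (w : ℕ → ℝ) (hw1 : w 1 = 1)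
    (hrec : ∀ n : ℕ, 1 ≤ n → w (n + 1) = (((n : ℝ) - 1 / p) / (n : ℝ)) * w n) :
    (∀ n : ℕ, 1 ≤ n → 0 < w n) ∧
    (∀ n : ℕ, 1 ≤ n →
      ∑ i ∈ Finset.Icc 1 n, w i = (((n : ℝ) - 1 / p) / (1 - 1 / p)) * w n) ∧
    (∀ n : ℕ, 1 ≤ n →
      (∑ i ∈ Finset.Icc 1 n, w i) ^ (p - 1) ≤
        (p / (p - 1)) ^ p * (n : ℝ) ^ p * (w n ^ (p - 1) - w (n + 1) ^ (p - 1))) := by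
  have hp0 : (0:ℝ) < p := by linarith
  have hd : (0:ℝ) < 1 - 1 / p := by
    rw [sub_pos, div_lt_one hp0]; exact hp
  -- positivity
  have hpos : ∀ n : ℕ, 1 ≤ n → 0 < w n := by
    intro n hn
    induction n, hn using Nat.le_induction with
    | base => rw [hw1]; norm_num
    | succ n hn ih =>
      rw [hrec n hn]
      have hn' : (1:ℝ) ≤ n := by exact_mod_cast hn
      have hc : (0:ℝ) < (n:ℝ) - 1 / p := by
        have : (1:ℝ)/p < 1 := by rw [div_lt_one hp0]; exact hp
        linarith
      exact mul_pos (div_pos hc (by linarith)) ih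
  -- sum formula
  have hsum : ∀ n : ℕ, 1 ≤ n →
      ∑ i ∈ Finset.Icc 1 n, w i = (((n : ℝ) - 1 / p) / (1 - 1 / p)) * w n := by
    intro n hn
    induction n, hn using Nat.le_induction with
    | base =>
      simp only [Finset.Icc_self, Finset.sum_singleton, hw1, Nat.cast_one]
      rw [eq_comm, mul_one, div_eq_one_iff_eq (ne_of_gt hd)]
    | succ n hn ih =>
      rw [Finset.sum_Icc_succ_top (by omega : 1 ≤ n + 1), ih, hrec n hn]
      have hn' : (1:ℝ) ≤ n := by exact_mod_cast hn
      have hn0 : (n:ℝ) ≠ 0 := by linarith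
      have hd' : (1:ℝ) - 1 / p ≠ 0 := ne_of_gt hd
      have hpne : p ≠ 0 := ne_of_gt hp0
      have hp1 : p - 1 ≠ 0 := by linarith
      have key : ((n:ℝ) - 1 / p) / (1 - 1 / p) + ((n:ℝ) - 1 / p) / (n:ℝ) =
          (((n:ℝ) + 1) - 1 / p) / (1 - 1 / p) * (((n:ℝ) - 1 / p) / (n:ℝ)) := by
        field_simp
        ring
      push_cast
      linear_combination w n * key
  refine ⟨hpos, hsum, ?_⟩
  -- main inequality
  intro n hn
  have hn' : (1:ℝ) ≤ n := by exact_mod_cast hn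
  set N : ℝ := (n : ℝ) with hN
  have hN0 : 0 < N := by linarith
  have h1p : (1:ℝ)/p < 1 := by rw [div_lt_one hp0]; exact hp
  have hc : 0 < N - 1 / p := by linarith
  have hwn := hpos n hn
  rw [hsum n hn, hrec n hn]
  have hW : 0 < w n ^ (p - 1) := Real.rpow_pos_of_pos hwn _
  rw [Real.mul_rpow (le_of_lt (div_pos hc hd)) hwn.le,
      Real.mul_rpow (le_of_lt (div_pos hc hN0)) hwn.le]
  rw [show (p / (p - 1)) ^ p * N ^ p *
        (w n ^ (p - 1) - ((N - 1 / p) / N) ^ (p - 1) * w n ^ (p - 1)) =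
      ((p / (p - 1)) ^ p * N ^ p * (1 - ((N - 1 / p) / N) ^ (p - 1))) * w n ^ (p - 1)
    from by ring]
  apply mul_le_mul_of_nonneg_right ?_ hW.le
  -- pure scalar inequality
  have hpd : p / (p - 1) = (1 - 1 / p)⁻¹ := by
    rw [inv_eq_one_div]
    field_simp
  set D : ℝ := 1 - 1 / p with hD
  have hND : 0 < N / D := div_pos hN0 hd
  have hts : (N - 1 / p) / N = 1 - 1 / (p * N) := by
    field_simp
  have hs0 : 0 < 1 / (p * N) := by positivity
  have hs1 : 1 / (p * N) < 1 := by
    rw [div_lt_one (by positivity)]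
    nlinarith
  have hkey := ks_key p (1 / (p * N)) hp hs0 hs1
  have hps : (p - 1) * (1 / (p * N)) = D / N := by
    rw [hD]; field_simp
  rw [hps] at hkey
  -- key : (1 - 1/(p*N)) ^ (p-1) * (1 + D/N) ≤ 1
  set T : ℝ := ((N - 1 / p) / N) ^ (p - 1) with hT
  have hT' : T = (1 - 1 / (p * N)) ^ (p - 1) := by rw [hT, hts]
  rw [← hT'] at hkey
  have hT0 : 0 ≤ T := by
    rw [hT]; positivity
  -- decompose LHS and RHS
  have hLHS : ((N - 1 / p) / D) ^ (p - 1) = T * (N / D) ^ (p - 1) := by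
    rw [hT, ← Real.mul_rpow (le_of_lt (div_pos hc hN0)) hND.le]
    congr 1
    field_simp
  have hRHS : (p / (p - 1)) ^ p * N ^ p = (N / D) ^ (p - 1) * (N / D) := by
    rw [hpd, ← Real.mul_rpow (by positivity) hN0.le,
        show D⁻¹ * N = N / D from by rw [div_eq_mul_inv]; ring,
        ← Real.rpow_add_one (ne_of_gt hND) (p - 1)]
    norm_num
  rw [hLHS, hRHS]
  have hNDpos : 0 < (N / D) ^ (p - 1) := Real.rpow_pos_of_pos hND _
  -- reduce: T * X ≤ X * (N/D) * (1 - T) where X = (N/D)^(p-1)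
  have hred : T * (1 + D / N) ≤ 1 := hkey
  have hDN : 0 < D / N := div_pos hd hN0
  have hmain : T ≤ (N / D) * (1 - T) := by
    have h := mul_le_mul_of_nonneg_left hred hND.le
    have hcalc : (N / D) * (D / N) = 1 := by
      field_simp
    nlinarith
  nlinarith [mul_le_mul_of_nonneg_left hmain hNDpos.le]
end

section
/- Let N ≥ 1 be an integer, let a and b be positive real numbers, and let a_1, ..., a_N be real numbers. Then (a² + b² − 2ab·cos(π/(N+1))) · Σ_{n=1}^N a_n² ≤ b²a_1² + Σ_{n=1}^{N−1} (a·a_n − b·a_{n+1})² + a²a_N² ≤ (a² + b² + 2ab·cos(π/(N+1))) · Σ_{n=1}^N a_n². -/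
/-- Theorem 5.2: two-parameter discrete Wirtinger-type inequalities. -/
theorem stmt_9 (N : ℕ) (hN : 1 ≤ N) (a b : ℝ) (ha : 0 < a) (hb : 0 < b)
    (x : ℕ → ℝ) :
    (a ^ 2 + b ^ 2 - 2 * a * b * Real.cos (Real.pi / ((N : ℝ) + 1))) *
        ∑ n ∈ Finset.Icc 1 N, x n ^ 2 ≤
      b ^ 2 * x 1 ^ 2 +
        (∑ n ∈ Finset.Icc 1 (N - 1), (a * x n - b * x (n + 1)) ^ 2) +
        a ^ 2 * x N ^ 2 ∧
    b ^ 2 * x 1 ^ 2 +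
        (∑ n ∈ Finset.Icc 1 (N - 1), (a * x n - b * x (n + 1)) ^ 2) +
        a ^ 2 * x N ^ 2 ≤
      (a ^ 2 + b ^ 2 + 2 * a * b * Real.cos (Real.pi / ((N : ℝ) + 1))) *
        ∑ n ∈ Finset.Icc 1 N, x n ^ 2 := by
  obtain ⟨M, rfl⟩ : ∃ M, N = M + 1 := ⟨N - 1, by omega⟩
  simp only [Nat.add_sub_cancel]
  set t : ℝ := Real.pi / ((M + 1 : ℕ) + 1 : ℝ) with htdef
  have hM1 : (0:ℝ) < ((M + 1 : ℕ) : ℝ) + 1 := by positivity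
  have ht0 : 0 < t := by
    rw [htdef]; exact div_pos Real.pi_pos hM1
  set s : ℕ → ℝ := fun n => Real.sin (n * t) with hsdef
  have hs0 : s 0 = 0 := by simp [hsdef]
  have hsN1 : s (M + 2) = 0 := by
    have h : ((M + 2 : ℕ) : ℝ) * t = Real.pi := by
      rw [htdef]; push_cast; field_simp; ring
    simp only [hsdef, h, Real.sin_pi]
  have hspos : ∀ n : ℕ, 1 ≤ n → n ≤ M + 1 → 0 < s n := by
    intro n h1 h2
    apply Real.sin_pos_of_pos_of_lt_pi
    · have : (0:ℝ) < (n:ℝ) := by exact_mod_cast h1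
      positivity
    · have hnn : n < M + 2 := by omega
      have hn : (n:ℝ) < ((M + 1 : ℕ) : ℝ) + 1 := by push_cast; exact_mod_cast hnn
      have : (n:ℝ) * t < (((M + 1 : ℕ) : ℝ) + 1) * t := by
        apply mul_lt_mul_of_pos_right hn ht0
      calc (n:ℝ) * t < (((M + 1 : ℕ) : ℝ) + 1) * t := this
        _ = Real.pi := by rw [htdef]; field_simp
  have hrec : ∀ n : ℕ, s (n + 2) + s n = 2 * Real.cos t * s (n + 1) := by
    intro n
    simp only [hsdef]
    push_cast
    have h1 : ((n:ℝ) + 2) * t = ((n:ℝ) + 1) * t + t := by ring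
    have h2 : (n:ℝ) * t = ((n:ℝ) + 1) * t - t := by ring
    rw [h1, h2, Real.sin_add, Real.sin_sub]
    ring
  -- key identity: sum of the weighted squares equals 2 cos t * S
  have keyA : ∑ n ∈ Finset.Icc 1 M,
      (s (n+1) / s n * x n ^ 2 + s n / s (n+1) * x (n+1) ^ 2)
      = 2 * Real.cos t * ∑ n ∈ Finset.Icc 1 (M+1), x n ^ 2 := by
    rw [Finset.sum_add_distrib]
    have hF1 : ∑ n ∈ Finset.Icc 1 M, s (n+1) / s n * x n ^ 2
        = ∑ n ∈ Finset.Icc 1 (M+1), s (n+1) / s n * x n ^ 2 := by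
      apply Finset.sum_subset
      · intro y hy; simp only [Finset.mem_Icc] at hy ⊢; omega
      · intro n hn hn'
        have : n = M + 1 := by
          simp only [Finset.mem_Icc] at hn hn'; omega
        subst this
        rw [hsN1]; simp
    have hF2 : ∑ n ∈ Finset.Icc 1 M, s n / s (n+1) * x (n+1) ^ 2
        = ∑ n ∈ Finset.Icc 1 (M+1), s (n-1) / s n * x n ^ 2 := by
      have h1 : ∑ n ∈ Finset.Icc 1 M, s n / s (n+1) * x (n+1) ^ 2
          = ∑ n ∈ Finset.Icc 2 (M+1), s (n-1) / s n * x n ^ 2 := by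
        rw [show (2:ℕ) = 1+1 from rfl, ← Finset.map_add_right_Icc 1 M 1, Finset.sum_map]
        rfl
      rw [h1]
      apply Finset.sum_subset
      · intro y hy; simp only [Finset.mem_Icc] at hy ⊢; omega
      · intro n hn hn'
        have : n = 1 := by
          simp only [Finset.mem_Icc] at hn hn'; omega
        subst this
        simp [hs0]
    rw [hF1, hF2, ← Finset.sum_add_distrib, Finset.mul_sum]
    apply Finset.sum_congr rfl
    intro n hn
    simp only [Finset.mem_Icc] at hn
    obtain ⟨k, rfl⟩ : ∃ k, n = k + 1 := ⟨n - 1, by omega⟩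
    have hsp : 0 < s (k+1) := hspos (k+1) (by omega) (by omega)
    have hr := hrec k
    simp only [Nat.add_sub_cancel]
    field_simp
    linear_combination (x (k+1)) ^ 2 * hr
  -- pointwise AM-GM bounds
  have hB : ∀ n ∈ Finset.Icc 1 M, ∀ ε : ℝ, ε = 1 ∨ ε = -1 →
      ε * (2 * (x n * x (n+1))) ≤
        s (n+1) / s n * x n ^ 2 + s n / s (n+1) * x (n+1) ^ 2 := by
    intro n hn ε hε
    simp only [Finset.mem_Icc] at hn
    have h1 : 0 < s n := hspos n hn.1 (by omega)
    have h2 : 0 < s (n+1) := hspos (n+1) (by omega) (by omega)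
    rw [← sub_nonneg]
    rcases hε with rfl | rfl
    · have key : s (n+1) / s n * x n ^ 2 + s n / s (n+1) * x (n+1) ^ 2
          - (1:ℝ) * (2 * (x n * x (n+1)))
          = (s (n+1) * x n - s n * x (n+1)) ^ 2 / (s n * s (n+1)) := by
        field_simp; ring
      rw [key]; positivity
    · have key : s (n+1) / s n * x n ^ 2 + s n / s (n+1) * x (n+1) ^ 2
          - (-1:ℝ) * (2 * (x n * x (n+1)))
          = (s (n+1) * x n + s n * x (n+1)) ^ 2 / (s n * s (n+1)) := by
        field_simp; ring
      rw [key]; positivity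
  have hP1 : 2 * ∑ n ∈ Finset.Icc 1 M, x n * x (n+1)
      ≤ 2 * Real.cos t * ∑ n ∈ Finset.Icc 1 (M+1), x n ^ 2 := by
    rw [← keyA, Finset.mul_sum]
    apply Finset.sum_le_sum
    intro n hn
    have := hB n hn 1 (Or.inl rfl)
    linarith
  have hP2 : -(2 * ∑ n ∈ Finset.Icc 1 M, x n * x (n+1))
      ≤ 2 * Real.cos t * ∑ n ∈ Finset.Icc 1 (M+1), x n ^ 2 := by
    have h := Finset.sum_le_sum (fun n hn => hB n hn (-1) (Or.inr rfl))
    rw [keyA] at h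
    have heq : ∑ n ∈ Finset.Icc 1 M, (-1:ℝ) * (2 * (x n * x (n+1)))
        = -(2 * ∑ n ∈ Finset.Icc 1 M, x n * x (n+1)) := by
      rw [Finset.mul_sum]
      simp [Finset.sum_neg_distrib, neg_one_mul]
    rw [heq] at h
    exact h
  -- expansion of middle expression
  have hExp : b ^ 2 * x 1 ^ 2 + (∑ n ∈ Finset.Icc 1 M, (a * x n - b * x (n + 1)) ^ 2)
      + a ^ 2 * x (M+1) ^ 2
      = (a ^ 2 + b ^ 2) * (∑ n ∈ Finset.Icc 1 (M+1), x n ^ 2)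
        - 2 * a * b * ∑ n ∈ Finset.Icc 1 M, x n * x (n+1) := by
    have e1 : ∑ n ∈ Finset.Icc 1 M, (a * x n - b * x (n + 1)) ^ 2
        = a ^ 2 * (∑ n ∈ Finset.Icc 1 M, x n ^ 2)
          + b ^ 2 * (∑ n ∈ Finset.Icc 1 M, x (n+1) ^ 2)
          - 2 * a * b * ∑ n ∈ Finset.Icc 1 M, x n * x (n+1) := by
      rw [Finset.mul_sum, Finset.mul_sum, Finset.mul_sum]
      rw [← Finset.sum_add_distrib, ← Finset.sum_sub_distrib]
      apply Finset.sum_congr rfl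
      intro n _; ring
    have e2 : ∑ n ∈ Finset.Icc 1 (M+1), x n ^ 2
        = (∑ n ∈ Finset.Icc 1 M, x n ^ 2) + x (M+1) ^ 2 := by
      rw [Finset.sum_Icc_succ_top (by omega)]
    have e3 : ∑ n ∈ Finset.Icc 1 (M+1), x n ^ 2
        = x 1 ^ 2 + ∑ n ∈ Finset.Icc 1 M, x (n+1) ^ 2 := by
      have h1 : ∑ n ∈ Finset.Icc 1 M, x (n+1) ^ 2
          = ∑ n ∈ Finset.Icc 2 (M+1), x n ^ 2 := by
        rw [show (2:ℕ) = 1+1 from rfl, ← Finset.map_add_right_Icc 1 M 1, Finset.sum_map]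
        rfl
      have h2 : Finset.Icc 1 (M+1) = insert 1 (Finset.Icc 2 (M+1)) := by
        ext n; simp [Finset.mem_Icc]; omega
      rw [h1, h2, Finset.sum_insert (by simp)]
    rw [e1]
    have e4 : ∑ n ∈ Finset.Icc 1 M, x n ^ 2
        = (∑ n ∈ Finset.Icc 1 (M+1), x n ^ 2) - x (M+1) ^ 2 := by linarith [e2]
    have e5 : ∑ n ∈ Finset.Icc 1 M, x (n+1) ^ 2
        = (∑ n ∈ Finset.Icc 1 (M+1), x n ^ 2) - x 1 ^ 2 := by linarith [e3]
    rw [e4, e5]; ring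
  rw [hExp]
  have hab : 0 < a * b := mul_pos ha hb
  constructor
  · nlinarith [mul_le_mul_of_nonneg_left hP1 hab.le]
  · nlinarith [mul_le_mul_of_nonneg_left hP2 hab.le]
end

section
/- Let p ≥ 2 be a real number and let α be a real number with 0 ≤ α ≤ 1. Then 1/2^α ≤ 1/(α+1) + (1 − 1/p)/(2(α+1)²). -/
/-- Lemma 6.2. -/
theorem stmt_12 (p α : ℝ) (hp : 2 ≤ p) (hα : 0 ≤ α) (hα' : α ≤ 1) :
    1 / 2 ^ α ≤ 1 / (α + 1) + (1 - 1 / p) / (2 * (α + 1) ^ 2) := by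
  have hp0 : (0:ℝ) < p := by linarith
  have hinvp : 1 / p ≤ 1 / 2 := by
    apply one_div_le_one_div_of_le <;> linarith
  have hα1 : (0:ℝ) < α + 1 := by linarith
  set L := Real.log 2 with hL
  have hL1 : (0.6931471803 : ℝ) < L := Real.log_two_gt_d9
  have hL2 : L < 0.6931471808 := Real.log_two_lt_d9
  have hpow : Real.exp (L * α) = 2 ^ α := (Real.rpow_def_of_pos (by norm_num) α).symm
  have hq : 1 + (L * α) + (L * α) ^ 2 / 2 ≤ 2 ^ α := by
    rw [← hpow]
    exact Real.quadratic_le_exp_of_nonneg (by positivity)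
  have h2pos : (0:ℝ) < 2 ^ α := by positivity
  have ha : (0.6931:ℝ) ≤ L := by linarith
  have hc : (0:ℝ) ≤ (L - 0.6931) * α := mul_nonneg (by linarith) hα
  have hd : (0:ℝ) ≤ (L - 0.6931) * α * (4 * α + 5) := mul_nonneg hc (by linarith)
  have he : (0:ℝ) ≤ (L - 0.6931) * α * (L + 0.6931) * α * (4 * α + 5) :=
    mul_nonneg (mul_nonneg (mul_nonneg hc (by linarith)) hα) (by linarith)
  have h1 : 4 * (α + 1) ^ 2 ≤ (1 + (0.6931 * α) + (0.6931 * α) ^ 2 / 2) * (4 * α + 5) := by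
    nlinarith [mul_nonneg hα (sq_nonneg (α - 0.44)), mul_nonneg (sub_nonneg.2 hα') (sq_nonneg (α - 0.44)), sq_nonneg (α - 0.44), sq_nonneg α, mul_nonneg hα hα]
  have hpoly : 4 * (α + 1) ^ 2 ≤ (1 + (L * α) + (L * α) ^ 2 / 2) * (4 * α + 5) := by
    nlinarith [hd, he, h1]
  have hkey : 4 * (α + 1) ^ 2 ≤ 2 ^ α * (4 * α + 5) := by
    refine hpoly.trans (mul_le_mul_of_nonneg_right hq (by linarith))
  have step : 1 / 2 ^ α ≤ 1 / (α + 1) + (1/2) / (2 * (α + 1) ^ 2) := by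
    rw [div_add_div _ _ (by positivity) (by positivity), div_le_div_iff₀ h2pos (by positivity)]
    ring_nf
    nlinarith [hkey]
  refine step.trans ?_
  have : (1/2 : ℝ) ≤ 1 - 1/p := by linarith
  gcongr
end

section
/- For every integer n ≥ 1 and every real number r with 0 < r ≤ 1, one has (1/(r+1)) · n · (n+1)^r ≤ Σ_{i=1}^n i^r ≤ (r/(r+1)) · n^r (n+1)^r / ( (n+1)^r − n^r ). -/
open Real Set


lemma aux_amgm {a b : ℝ} (ha : 0 < a) (hb : 0 < b) (hab : 1 ≤ a * b) : 2 ≤ a + b := by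
  have h1 : 1 / b ≤ a := by rw [div_le_iff₀ hb]; linarith
  have h2 : 0 ≤ (b - 1) ^ 2 / b := by positivity
  have h3 : (b - 1) ^ 2 / b = 1 / b + b - 2 := by field_simp; ring
  linarith

lemma aux1 {p : ℝ} (hp0 : 0 ≤ p) (hp1 : p ≤ 1) {s : ℝ} (hs0 : 0 ≤ s) (hs : s ≤ 1 / 2) :
    2 * p * s ≤ (1 + s) ^ p - (1 - s) ^ p := by
  set F : ℝ → ℝ := fun t => (1 + t) ^ p - (1 - t) ^ p - 2 * p * t with hF
  have hder : ∀ t ∈ Icc (0 : ℝ) (1 / 2),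
      HasDerivAt F (p * (1 + t) ^ (p - 1) + p * (1 - t) ^ (p - 1) - 2 * p) t := by
    intro t ht
    have h1t : (0 : ℝ) < 1 + t := by linarith [ht.1]
    have h1t' : (0 : ℝ) < 1 - t := by linarith [ht.2]
    have d1 : HasDerivAt (fun t : ℝ => (1 + t) ^ p) (p * (1 + t) ^ (p - 1)) t := by
      have hinner : HasDerivAt (fun t : ℝ => 1 + t) 1 t := (hasDerivAt_id t).const_add 1
      have := (Real.hasDerivAt_rpow_const (x := 1 + t) (p := p) (Or.inl h1t.ne')).comp t hinner
      simpa [Function.comp_def] using this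
    have d2 : HasDerivAt (fun t : ℝ => (1 - t) ^ p) (-(p * (1 - t) ^ (p - 1))) t := by
      have hinner : HasDerivAt (fun t : ℝ => 1 - t) (-1) t := by
        simpa using (hasDerivAt_id t).const_sub 1
      have := (Real.hasDerivAt_rpow_const (x := 1 - t) (p := p) (Or.inl h1t'.ne')).comp t hinner
      simpa [Function.comp_def, mul_comm, mul_assoc] using this
    have d3 : HasDerivAt (fun t : ℝ => 2 * p * t) (2 * p) t := by
      simpa using (hasDerivAt_id t).const_mul (2 * p)
    have := (d1.sub d2).sub d3
    refine this.congr_deriv ?_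
    ring
  have hmono : MonotoneOn F (Icc (0 : ℝ) (1 / 2)) := by
    apply monotoneOn_of_deriv_nonneg (convex_Icc _ _)
    · exact fun t ht => (hder t ht).continuousAt.continuousWithinAt
    · intro t ht
      rw [interior_Icc] at ht
      exact ((hder t (Ioo_subset_Icc_self ht)).differentiableAt).differentiableWithinAt
    · intro t ht
      rw [interior_Icc] at ht
      rw [(hder t (Ioo_subset_Icc_self ht)).deriv]
      have h1t : (0 : ℝ) < 1 + t := by linarith [ht.1]
      have h1t' : (0 : ℝ) < 1 - t := by linarith [ht.2]
      have ha : (0 : ℝ) < (1 + t) ^ (p - 1) := Real.rpow_pos_of_pos h1t _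
      have hb : (0 : ℝ) < (1 - t) ^ (p - 1) := Real.rpow_pos_of_pos h1t' _
      have hab : 1 ≤ (1 + t) ^ (p - 1) * (1 - t) ^ (p - 1) := by
        rw [← Real.mul_rpow h1t.le h1t'.le]
        apply Real.one_le_rpow_of_pos_of_le_one_of_nonpos
        · nlinarith [ht.1, ht.2]
        · nlinarith [ht.1, ht.2]
        · linarith
      have := aux_amgm ha hb hab
      nlinarith
  have h0 : F 0 = 0 := by simp [hF]
  have hs' : F 0 ≤ F s := hmono (by constructor <;> norm_num) (by constructor <;> linarith) hs0
  rw [h0] at hs'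
  simp only [hF] at hs'
  linarith

lemma aux2 {r : ℝ} (hr : 0 < r) (hr1 : r ≤ 1) {s : ℝ} (hs0 : 0 ≤ s) (hs : s ≤ 1 / 2) :
    (1 + s) ^ r + (1 - s) ^ r ≤ (1 + r) + (1 - r) * ((1 - s) * (1 + s)) ^ r := by
  set G : ℝ → ℝ := fun t =>
    (1 + r) + (1 - r) * ((1 - t) * (1 + t)) ^ r - (1 + t) ^ r - (1 - t) ^ r with hG
  have hder : ∀ t ∈ Icc (0 : ℝ) (1 / 2),
      HasDerivAt G ((1 - r) * (r * ((1 - t) * (1 + t)) ^ (r - 1) * (-2 * t))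
        - r * (1 + t) ^ (r - 1) + r * (1 - t) ^ (r - 1)) t := by
    intro t ht
    have h1t : (0 : ℝ) < 1 + t := by linarith [ht.1]
    have h1t' : (0 : ℝ) < 1 - t := by linarith [ht.2]
    have hW : (0 : ℝ) < (1 - t) * (1 + t) := mul_pos h1t' h1t
    have d1 : HasDerivAt (fun t : ℝ => (1 + t) ^ r) (r * (1 + t) ^ (r - 1)) t := by
      have hinner : HasDerivAt (fun t : ℝ => 1 + t) 1 t := (hasDerivAt_id t).const_add 1
      simpa [Function.comp_def] using
        (Real.hasDerivAt_rpow_const (x := 1 + t) (p := r) (Or.inl h1t.ne')).comp t hinner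
    have d2 : HasDerivAt (fun t : ℝ => (1 - t) ^ r) (-(r * (1 - t) ^ (r - 1))) t := by
      have hinner : HasDerivAt (fun t : ℝ => 1 - t) (-1) t := by
        simpa using (hasDerivAt_id t).const_sub 1
      have := (Real.hasDerivAt_rpow_const (x := 1 - t) (p := r) (Or.inl h1t'.ne')).comp t hinner
      simpa [Function.comp_def, mul_comm, mul_assoc] using this
    have dW : HasDerivAt (fun t : ℝ => (1 - t) * (1 + t)) (-2 * t) t := by
      have hi1 : HasDerivAt (fun t : ℝ => 1 - t) (-1) t := by
        simpa using (hasDerivAt_id t).const_sub 1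
      have hi2 : HasDerivAt (fun t : ℝ => 1 + t) 1 t := (hasDerivAt_id t).const_add 1
      have := hi1.mul hi2
      refine this.congr_deriv ?_
      ring
    have d3 : HasDerivAt (fun t : ℝ => ((1 - t) * (1 + t)) ^ r)
        (r * ((1 - t) * (1 + t)) ^ (r - 1) * (-2 * t)) t :=
      (Real.hasDerivAt_rpow_const (x := (1 - t) * (1 + t)) (p := r) (Or.inl hW.ne')).comp (h₂ := fun x => x ^ r) t dW
    have := (((d3.const_mul (1 - r)).const_add (1 + r)).sub d1).sub d2
    refine this.congr_deriv ?_
    ring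
  have hmono : MonotoneOn G (Icc (0 : ℝ) (1 / 2)) := by
    apply monotoneOn_of_deriv_nonneg (convex_Icc _ _)
    · exact fun t ht => (hder t ht).continuousAt.continuousWithinAt
    · intro t ht
      rw [interior_Icc] at ht
      exact ((hder t (Ioo_subset_Icc_self ht)).differentiableAt).differentiableWithinAt
    · intro t ht
      rw [interior_Icc] at ht
      rw [(hder t (Ioo_subset_Icc_self ht)).deriv]
      have h1t : (0 : ℝ) < 1 + t := by linarith [ht.1]
      have h1t' : (0 : ℝ) < 1 - t := by linarith [ht.2]
      have hW : (0 : ℝ) < (1 - t) * (1 + t) := mul_pos h1t' h1t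
      have hWp : (0 : ℝ) < ((1 - t) * (1 + t)) ^ (r - 1) := Real.rpow_pos_of_pos hW _
      have hb : 2 * (1 - r) * t ≤ (1 + t) ^ (1 - r) - (1 - t) ^ (1 - r) :=
        aux1 (by linarith) (by linarith) ht.1.le ht.2.le
      have hw1 : ((1 - t) * (1 + t)) ^ (r - 1) * (1 + t) ^ (1 - r) = (1 - t) ^ (r - 1) := by
        rw [Real.mul_rpow h1t'.le h1t.le, mul_assoc, ← Real.rpow_add h1t,
          show r - 1 + (1 - r) = 0 by ring, Real.rpow_zero, mul_one]
      have hw2 : ((1 - t) * (1 + t)) ^ (r - 1) * (1 - t) ^ (1 - r) = (1 + t) ^ (r - 1) := by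
        rw [Real.mul_rpow h1t'.le h1t.le, mul_comm ((1-t) ^ (r-1)), mul_assoc,
          ← Real.rpow_add h1t', show r - 1 + (1 - r) = 0 by ring, Real.rpow_zero, mul_one]
      have h5 := mul_le_mul_of_nonneg_left hb
        (by positivity : (0:ℝ) ≤ r * ((1 - t) * (1 + t)) ^ (r - 1))
      have h6 : r * ((1 - t) * (1 + t)) ^ (r - 1) * ((1 + t) ^ (1 - r) - (1 - t) ^ (1 - r))
          = r * (1 - t) ^ (r - 1) - r * (1 + t) ^ (r - 1) := by
        rw [mul_sub, mul_assoc, mul_assoc, hw1, hw2]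
      rw [h6] at h5
      nlinarith
  have h0 : G 0 = 0 := by simp [hG]
  have hs' : G 0 ≤ G s := hmono (by constructor <;> norm_num) (by constructor <;> linarith) hs0
  rw [h0] at hs'
  simp only [hG] at hs'
  linarith

lemma step_up {r : ℝ} (hr : 0 < r) (hr1 : r ≤ 1) {y : ℝ} (hy : 1 ≤ y) :
    (y + 1) ^ r ≤ r / (r + 1) * ((y + 1) ^ r * (y + 2) ^ r / ((y + 2) ^ r - (y + 1) ^ r))
      - r / (r + 1) * (y ^ r * (y + 1) ^ r / ((y + 1) ^ r - y ^ r)) := by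
  set x : ℝ := y + 1 with hx
  have hx2 : 2 ≤ x := by rw [hx]; linarith
  have hxpos : (0 : ℝ) < x := by linarith
  set s : ℝ := 1 / x with hs
  have hs0 : 0 < s := by positivity
  have hs2 : s ≤ 1 / 2 := by
    rw [hs]; rw [div_le_div_iff₀ hxpos (by norm_num)]; linarith
  have hxs : x * s = 1 := by rw [hs, mul_one_div, div_self hxpos.ne']
  set a : ℝ := y ^ r with ha
  set b : ℝ := x ^ r with hb
  set c : ℝ := (y + 2) ^ r with hc
  have hbpos : 0 < b := Real.rpow_pos_of_pos hxpos _
  have hab : a < b := Real.rpow_lt_rpow (by linarith) (by rw [hx]; linarith) hr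
  have hbc : b < c := Real.rpow_lt_rpow (by linarith) (by linarith) hr
  have hK := aux2 hr hr1 hs0.le hs2
  have e1 : c = b * (1 + s) ^ r := by
    rw [hc, hb, ← Real.mul_rpow hxpos.le (by linarith)]
    congr 1
    rw [mul_add, hxs, mul_one, hx]; ring
  have e2 : a = b * (1 - s) ^ r := by
    rw [ha, hb, ← Real.mul_rpow hxpos.le (by linarith)]
    congr 1
    rw [mul_sub, hxs, mul_one, hx]; ring
  have e3 : a * c = b ^ 2 * ((1 - s) * (1 + s)) ^ r := by
    rw [e1, e2, Real.mul_rpow (by linarith) (by linarith)]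
    ring
  have Kb : b * c + a * b ≤ (1 + r) * b ^ 2 + (1 - r) * (a * c) := by
    calc b * c + a * b = b ^ 2 * ((1 + s) ^ r + (1 - s) ^ r) := by rw [e1, e2]; ring
    _ ≤ b ^ 2 * ((1 + r) + (1 - r) * ((1 - s) * (1 + s)) ^ r) :=
        mul_le_mul_of_nonneg_left hK (sq_nonneg b)
    _ = (1 + r) * b ^ 2 + (1 - r) * (a * c) := by rw [e3]; ring
  have hN : 0 ≤ (1 + r) * b ^ 2 + (1 - r) * (a * c) - (b * c + a * b) := by linarith
  have hD : (0 : ℝ) < (r + 1) * ((c - b) * (b - a)) := by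
    apply mul_pos (by linarith)
    exact mul_pos (by linarith) (by linarith)
  have heq : r / (r + 1) * (b * c / (c - b)) - r / (r + 1) * (a * b / (b - a)) - b
      = b * ((1 + r) * b ^ 2 + (1 - r) * (a * c) - (b * c + a * b))
        / ((r + 1) * ((c - b) * (b - a))) := by
    have hne1 : c - b ≠ 0 := by linarith
    have hne2 : b - a ≠ 0 := by linarith
    have hne3 : r + 1 ≠ 0 := by linarith
    field_simp
    ring
  linarith [div_nonneg (mul_nonneg hbpos.le hN) hD.le, heq]

lemma base_up {r : ℝ} (hr : 0 < r) (hr1 : r ≤ 1) :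
    (1 : ℝ) ≤ r / (r + 1) * ((1:ℝ) ^ r * (1 + 1 : ℝ) ^ r / ((1 + 1 : ℝ) ^ r - (1:ℝ) ^ r)) := by
  have h1 : ((1:ℝ) + 1) ^ r ≤ 1 + r * 1 :=
    rpow_one_add_le_one_add_mul_self (by norm_num) hr.le hr1
  have h2 : (1 : ℝ) < (1 + 1 : ℝ) ^ r := by
    rw [Real.one_lt_rpow_iff_of_pos (by norm_num)]
    left; constructor <;> [norm_num; exact hr]
  rw [Real.one_rpow]
  have heq : r / (r + 1) * (1 * (1 + 1 : ℝ) ^ r / ((1 + 1 : ℝ) ^ r - 1)) - 1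
      = ((1 + r) - (1 + 1 : ℝ) ^ r) / ((r + 1) * ((1 + 1 : ℝ) ^ r - 1)) := by
    have hne1 : r + 1 ≠ 0 := by linarith
    have hne2 : (1 + 1 : ℝ) ^ r - 1 ≠ 0 := by linarith
    field_simp
    ring
  have hpos : 0 ≤ ((1 + r) - (1 + 1 : ℝ) ^ r) / ((r + 1) * ((1 + 1 : ℝ) ^ r - 1)) := by
    apply div_nonneg (by linarith)
    apply mul_nonneg (by linarith) (by linarith)
  linarith


lemma step_low {r : ℝ} (hr : 0 < r) (hr1 : r ≤ 1) {z : ℝ} (hz : 0 ≤ z) :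
    1 / (r + 1) * (z + 1) * (z + 2) ^ r ≤ 1 / (r + 1) * z * (z + 1) ^ r + (z + 1) ^ r := by
  have hz1 : (0 : ℝ) < z + 1 := by linarith
  set t : ℝ := 1 / (z + 1) with ht
  have ht0 : 0 < t := by positivity
  have hzt : (z + 1) * t = 1 := by rw [ht, mul_one_div, div_self hz1.ne']
  have hb : (1 + t) ^ r ≤ 1 + r * t :=
    rpow_one_add_le_one_add_mul_self (by linarith) hr.le hr1
  have hz2 : z + 2 = (z + 1) * (1 + t) := by rw [mul_add, hzt]; ring
  have hrw : (z + 2) ^ r = (z + 1) ^ r * (1 + t) ^ r := by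
    rw [hz2, Real.mul_rpow hz1.le (by linarith)]
  have hp : (0 : ℝ) < (z + 1) ^ r := Real.rpow_pos_of_pos hz1 _
  have h1 : 1 / (r + 1) * (z + 1) * (z + 2) ^ r
      ≤ 1 / (r + 1) * (z + 1) * ((z + 1) ^ r * (1 + r * t)) := by
    rw [hrw]
    apply mul_le_mul_of_nonneg_left _ (by positivity)
    exact mul_le_mul_of_nonneg_left hb hp.le
  have h2 : 1 / (r + 1) * (z + 1) * ((z + 1) ^ r * (1 + r * t))
      = 1 / (r + 1) * z * (z + 1) ^ r + (z + 1) ^ r := by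
    have hne : r + 1 ≠ 0 := by linarith
    have : (z + 1) * (1 + r * t) = z + 1 + r := by
      have : (z + 1) * (r * t) = r := by rw [show (z+1)*(r*t) = r*((z+1)*t) by ring, hzt, mul_one]
      nlinarith [this]
    calc 1 / (r + 1) * (z + 1) * ((z + 1) ^ r * (1 + r * t))
        = 1 / (r + 1) * ((z + 1) ^ r * ((z + 1) * (1 + r * t))) := by ring
      _ = 1 / (r + 1) * ((z + 1) ^ r * (z + 1 + r)) := by rw [this]
      _ = 1 / (r + 1) * z * (z + 1) ^ r + (z + 1) ^ r := by field_simp; ring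
  linarith

/-- Lemma 6.3 (Levin–Stečkin): two-sided bounds for the power sum. -/
theorem stmt_13 (n : ℕ) (hn : 1 ≤ n) (r : ℝ) (hr : 0 < r) (hr' : r ≤ 1) :
    (1 / (r + 1)) * (n : ℝ) * ((n : ℝ) + 1) ^ r ≤
        ∑ i ∈ Finset.Icc 1 n, (i : ℝ) ^ r ∧
    ∑ i ∈ Finset.Icc 1 n, (i : ℝ) ^ r ≤
      (r / (r + 1)) * ((n : ℝ) ^ r * ((n : ℝ) + 1) ^ r /
        (((n : ℝ) + 1) ^ r - (n : ℝ) ^ r)) := by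
  constructor
  · induction n, hn using Nat.le_induction with
    | base =>
      simp only [Finset.Icc_self, Finset.sum_singleton, Nat.cast_one, Real.one_rpow]
      have hb : ((1 : ℝ) + 1) ^ r ≤ 1 + r * 1 :=
        rpow_one_add_le_one_add_mul_self (by norm_num) hr.le hr'
      rw [div_mul_eq_mul_div, div_mul_eq_mul_div, div_le_one (by linarith)]
      linarith
    | succ m hm ih =>
      rw [Finset.sum_Icc_succ_top (by omega : 1 ≤ m + 1)]
      push_cast
      have hkey := step_low hr hr' (z := (m : ℝ)) (by positivity)
      rw [show (m : ℝ) + 1 + 1 = (m : ℝ) + 2 from by ring]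
      linarith
  · induction n, hn using Nat.le_induction with
    | base =>
      simp only [Finset.Icc_self, Finset.sum_singleton, Nat.cast_one, Real.one_rpow]
      have := base_up hr hr'
      rw [Real.one_rpow] at this
      linarith
    | succ m hm ih =>
      rw [Finset.sum_Icc_succ_top (by omega : 1 ≤ m + 1)]
      push_cast
      have hkey := step_up hr hr' (y := (m : ℝ)) (by exact_mod_cast hm)
      rw [show (m : ℝ) + 1 + 1 = (m : ℝ) + 2 from by ring]
      linarith
end

section
/- Let p ≥ 2 be a real number, let α be a real number with 0 ≤ α ≤ 1, and let n ≥ 1 be an integer. Then (Σ_{k=1}^{n+1} k^α)/(n+1)^α − (Σ_{k=1}^n k^α)/n^α ≤ 1/(α+1) + ( n^α / (2 Σ_{k=1}^n k^α) ) · (1 − 1/p) · 1/(α+1)². -/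
open Real

set_option maxHeartbeats 1000000

/-- Bernoulli, concave direction: `y^γ ≤ 1 + γ(y-1)` for `y ≥ 0`, `0 ≤ γ ≤ 1`. -/
lemma bern_le {y γ : ℝ} (hy : 0 ≤ y) (h0 : 0 ≤ γ) (h1 : γ ≤ 1) :
    y ^ γ ≤ 1 + γ * (y - 1) := by
  have h := rpow_one_add_le_one_add_mul_self (s := y - 1) (by linarith) h0 h1
  have e : 1 + (y - 1) = y := by ring
  rwa [e] at h

/-- Two-point concavity of `x^γ` for `0 ≤ γ ≤ 1`. -/
lemma two_point_concave {a b m γ : ℝ} (ha : 0 ≤ a) (hb : 0 ≤ b) (hm : 0 < m)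
    (hab : a + b = 2 * m) (h0 : 0 ≤ γ) (h1 : γ ≤ 1) :
    a ^ γ + b ^ γ ≤ 2 * m ^ γ := by
  have hmγ : (0:ℝ) < m ^ γ := Real.rpow_pos_of_pos hm γ
  have hma : a ^ γ ≤ m ^ γ * (1 + γ * (a / m - 1)) := by
    have h2 : m * (a / m) = a := by field_simp
    calc a ^ γ = m ^ γ * (a / m) ^ γ := by
          rw [← Real.mul_rpow hm.le (by positivity), h2]
      _ ≤ m ^ γ * (1 + γ * (a / m - 1)) :=
          mul_le_mul_of_nonneg_left (bern_le (by positivity) h0 h1) hmγ.le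
  have hmb : b ^ γ ≤ m ^ γ * (1 + γ * (b / m - 1)) := by
    have h2 : m * (b / m) = b := by field_simp
    calc b ^ γ = m ^ γ * (b / m) ^ γ := by
          rw [← Real.mul_rpow hm.le (by positivity), h2]
      _ ≤ m ^ γ * (1 + γ * (b / m - 1)) :=
          mul_le_mul_of_nonneg_left (bern_le (by positivity) h0 h1) hmγ.le
  have hsum : b / m = 2 - a / m := by field_simp; linarith
  have key : m ^ γ * (1 + γ * (a / m - 1)) + m ^ γ * (1 + γ * (b / m - 1)) = 2 * m ^ γ := by
    rw [hsum]; ring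
  linarith [hma, hmb]

/-- Two-point convexity of `x^(γ-1)` for `0 ≤ γ ≤ 1`. -/
lemma two_point_convex {a b m γ : ℝ} (ha : 0 < a) (hb : 0 < b) (hm : 0 < m)
    (hab : a + b = 2 * m) (h0 : 0 ≤ γ) (h1 : γ ≤ 1) :
    2 * m ^ (γ - 1) ≤ a ^ (γ - 1) + b ^ (γ - 1) := by
  have hu : (0:ℝ) < a ^ (1 - γ) := Real.rpow_pos_of_pos ha _
  have hv : (0:ℝ) < b ^ (1 - γ) := Real.rpow_pos_of_pos hb _
  have hw : (0:ℝ) < m ^ (1 - γ) := Real.rpow_pos_of_pos hm _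
  have hc1 : a ^ (1 - γ) + b ^ (1 - γ) ≤ 2 * m ^ (1 - γ) :=
    two_point_concave ha.le hb.le hm hab (by linarith) (by linarith)
  have ea : a ^ (γ - 1) = (a ^ (1 - γ))⁻¹ := by
    rw [← Real.rpow_neg ha.le]; ring_nf
  have eb : b ^ (γ - 1) = (b ^ (1 - γ))⁻¹ := by
    rw [← Real.rpow_neg hb.le]; ring_nf
  have em : m ^ (γ - 1) = (m ^ (1 - γ))⁻¹ := by
    rw [← Real.rpow_neg hm.le]; ring_nf
  rw [ea, eb, em]
  rw [inv_eq_one_div, inv_eq_one_div, inv_eq_one_div]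
  have h4 : 4 / (a ^ (1 - γ) + b ^ (1 - γ)) ≤ 1 / a ^ (1 - γ) + 1 / b ^ (1 - γ) := by
    rw [div_add_div _ _ (ne_of_gt hu) (ne_of_gt hv), div_le_div_iff₀ (by positivity) (by positivity)]
    nlinarith [sq_nonneg (a ^ (1 - γ) - b ^ (1 - γ))]
  have h5 : 2 / m ^ (1 - γ) ≤ 4 / (a ^ (1 - γ) + b ^ (1 - γ)) := by
    rw [div_le_div_iff₀ (by positivity) (by positivity)]
    nlinarith
  have e2 : 2 * (1 / m ^ (1 - γ)) = 2 / m ^ (1 - γ) := by ring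
  linarith

/-- Midpoint upper bound: `(m+1/2)^β - (m-1/2)^β ≤ β m^(β-1)` for `1 ≤ β ≤ 2`, `m ≥ 1`. -/
lemma mid_upper {m β : ℝ} (hm : 1 ≤ m) (hβ1 : 1 ≤ β) (hβ2 : β ≤ 2) :
    (m + 1/2) ^ β - (m - 1/2) ^ β ≤ β * m ^ (β - 1) := by
  set f : ℝ → ℝ := fun h => (m + h) ^ β - (m - h) ^ β - 2 * β * m ^ (β - 1) * h with hf
  have hder : ∀ h : ℝ, h ∈ Set.Icc (0:ℝ) (1/2) →
      HasDerivAt f (β * (m + h) ^ (β - 1) + β * (m - h) ^ (β - 1) - 2 * β * m ^ (β - 1)) h := by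
    intro h hh
    have hmh1 : (0:ℝ) < m + h := by cases hh with | intro h1 h2 => linarith
    have hmh2 : (0:ℝ) < m - h := by cases hh with | intro h1 h2 => linarith
    have d1 : HasDerivAt (fun x : ℝ => (m + x) ^ β) (β * (m + h) ^ (β - 1)) h := by
      have inner : HasDerivAt (fun x : ℝ => m + x) 1 h := (hasDerivAt_id h).const_add m
      have outer := Real.hasDerivAt_rpow_const (x := m + h) (p := β) (Or.inl hmh1.ne')
      simpa [Function.comp_def] using outer.comp h inner
    have d2 : HasDerivAt (fun x : ℝ => (m - x) ^ β) (-(β * (m - h) ^ (β - 1))) h := by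
      have inner : HasDerivAt (fun x : ℝ => m - x) (-1) h := (hasDerivAt_id h).const_sub m
      have outer := Real.hasDerivAt_rpow_const (x := m - h) (p := β) (Or.inl hmh2.ne')
      have := outer.comp h inner
      simpa [Function.comp_def] using this
    have d3 : HasDerivAt (fun x : ℝ => 2 * β * m ^ (β - 1) * x) (2 * β * m ^ (β - 1)) h := by
      simpa using (hasDerivAt_id h).const_mul (2 * β * m ^ (β - 1))
    have := (d1.sub d2).sub d3
    exact this.congr_deriv (by ring)
  have hanti : AntitoneOn f (Set.Icc (0:ℝ) (1/2)) := by
    apply antitoneOn_of_deriv_nonpos (convex_Icc _ _)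
    · intro x hx
      exact (hder x hx).continuousAt.continuousWithinAt
    · intro x hx
      rw [interior_Icc] at hx
      exact ((hder x (Set.mem_Icc_of_Ioo hx)).differentiableAt).differentiableWithinAt
    · intro x hx
      rw [interior_Icc] at hx
      rw [(hder x (Set.mem_Icc_of_Ioo hx)).deriv]
      have hx' := hx
      obtain ⟨hx1, hx2⟩ := hx'
      have htc := two_point_concave (a := m + x) (b := m - x) (m := m) (γ := β - 1)
        (by linarith) (by linarith) (by linarith) (by ring) (by linarith) (by linarith)
      nlinarith [htc, hβ1]
  have h0 : (0:ℝ) ∈ Set.Icc (0:ℝ) (1/2) := by constructor <;> norm_num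
  have h12 : (1/2:ℝ) ∈ Set.Icc (0:ℝ) (1/2) := by constructor <;> norm_num
  have := hanti h0 h12 (by norm_num)
  have hf0 : f 0 = 0 := by simp [hf]
  have hf12 : f (1/2) = (m + 1/2) ^ β - (m - 1/2) ^ β - β * m ^ (β - 1) := by
    simp only [hf]; ring
  rw [hf0, hf12] at this
  linarith

/-- Midpoint lower bound: `α (m+1/2)^(α-1) ≤ (m+1)^α - m^α` for `0 ≤ α ≤ 1`, `m ≥ 1`. -/
lemma mid_lower {m α : ℝ} (hm : 1 ≤ m) (hα : 0 ≤ α) (hα' : α ≤ 1) :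
    α * (m + 1/2) ^ (α - 1) ≤ (m + 1) ^ α - m ^ α := by
  set c : ℝ := m + 1/2 with hc
  have hc1 : (1:ℝ) ≤ c := by rw [hc]; linarith
  set g : ℝ → ℝ := fun h => (c + h) ^ α - (c - h) ^ α - 2 * α * c ^ (α - 1) * h with hg
  have hder : ∀ h : ℝ, h ∈ Set.Icc (0:ℝ) (1/2) →
      HasDerivAt g (α * (c + h) ^ (α - 1) + α * (c - h) ^ (α - 1) - 2 * α * c ^ (α - 1)) h := by
    intro h hh
    have hmh1 : (0:ℝ) < c + h := by cases hh with | intro h1 h2 => linarith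
    have hmh2 : (0:ℝ) < c - h := by cases hh with | intro h1 h2 => linarith
    have d1 : HasDerivAt (fun x : ℝ => (c + x) ^ α) (α * (c + h) ^ (α - 1)) h := by
      have inner : HasDerivAt (fun x : ℝ => c + x) 1 h := (hasDerivAt_id h).const_add c
      have outer := Real.hasDerivAt_rpow_const (x := c + h) (p := α) (Or.inl hmh1.ne')
      simpa [Function.comp_def] using outer.comp h inner
    have d2 : HasDerivAt (fun x : ℝ => (c - x) ^ α) (-(α * (c - h) ^ (α - 1))) h := by
      have inner : HasDerivAt (fun x : ℝ => c - x) (-1) h := (hasDerivAt_id h).const_sub c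
      have outer := Real.hasDerivAt_rpow_const (x := c - h) (p := α) (Or.inl hmh2.ne')
      simpa [Function.comp_def] using outer.comp h inner
    have d3 : HasDerivAt (fun x : ℝ => 2 * α * c ^ (α - 1) * x) (2 * α * c ^ (α - 1)) h := by
      simpa using (hasDerivAt_id h).const_mul (2 * α * c ^ (α - 1))
    have := (d1.sub d2).sub d3
    exact this.congr_deriv (by ring)
  have hmono : MonotoneOn g (Set.Icc (0:ℝ) (1/2)) := by
    apply monotoneOn_of_deriv_nonneg (convex_Icc _ _)
    · intro x hx
      exact (hder x hx).continuousAt.continuousWithinAt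
    · intro x hx
      rw [interior_Icc] at hx
      exact ((hder x (Set.mem_Icc_of_Ioo hx)).differentiableAt).differentiableWithinAt
    · intro x hx
      rw [interior_Icc] at hx
      rw [(hder x (Set.mem_Icc_of_Ioo hx)).deriv]
      obtain ⟨hx1, hx2⟩ := hx
      have htc := two_point_convex (a := c + x) (b := c - x) (m := c) (γ := α)
        (by linarith) (by linarith) (by linarith) (by ring) hα hα'
      nlinarith [htc, hα]
  have h0 : (0:ℝ) ∈ Set.Icc (0:ℝ) (1/2) := by constructor <;> norm_num
  have h12 : (1/2:ℝ) ∈ Set.Icc (0:ℝ) (1/2) := by constructor <;> norm_num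
  have := hmono h0 h12 (by norm_num)
  have hg0 : g 0 = 0 := by simp [hg]
  have hg12 : g (1/2) = (c + 1/2) ^ α - (c - 1/2) ^ α - α * c ^ (α - 1) := by
    simp only [hg]; ring
  rw [hg0, hg12] at this
  have e1 : c + 1/2 = m + 1 := by rw [hc]; ring
  have e2 : c - 1/2 = m := by rw [hc]; ring
  rw [e1, e2] at this
  linarith

/-- Midpoint sum lower bound. -/
lemma sum_lb (α : ℝ) (hα : 0 ≤ α) (hα' : α ≤ 1) :
    ∀ n : ℕ, 1 ≤ n →
      ((n : ℝ) + 1/2) ^ (α + 1) - (1/2 : ℝ) ^ (α + 1) ≤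
        (α + 1) * ∑ k ∈ Finset.Icc 1 n, (k : ℝ) ^ α := by
  intro n hn
  induction n, hn using Nat.le_induction with
  | base =>
    have h := mid_upper (m := 1) (β := α + 1) le_rfl (by linarith) (by linarith)
    have e : ((1:ℕ) : ℝ) = (1:ℝ) := by norm_num
    rw [show Finset.Icc 1 1 = {1} from rfl]
    simp only [Finset.sum_singleton]
    rw [e, Real.one_rpow]
    have e2 : (1:ℝ) ^ (α + 1 - 1) = 1 := Real.one_rpow _
    rw [e2] at h
    have e3 : ((1:ℝ) + 1/2) = (1:ℝ) + 1/2 := rfl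
    nlinarith [h]
  | succ n hn ih =>
    rw [Finset.sum_Icc_succ_top (by omega : 1 ≤ n + 1)]
    have hm : (1:ℝ) ≤ ((n:ℝ) + 1) := by
      have : (1:ℝ) ≤ (n:ℝ) := by exact_mod_cast hn
      linarith
    have h := mid_upper (m := (n:ℝ) + 1) (β := α + 1) hm (by linarith) (by linarith)
    have e1 : (n:ℝ) + 1 + 1/2 = ((n+1:ℕ):ℝ) + 1/2 := by push_cast; ring
    have e2 : (n:ℝ) + 1 - 1/2 = (n:ℝ) + 1/2 := by ring
    have e3 : α + 1 - 1 = α := by ring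
    rw [e1, e2, e3] at h
    have e4 : (((n+1:ℕ)):ℝ) = (n:ℝ) + 1 := by push_cast; ring
    rw [e4] at h ⊢
    nlinarith [h, ih]

/-- Pure algebra core. -/
lemma algebra_core (α β N P Q S A H : ℝ)
    (hα : 0 ≤ α) (hβ1 : 1 ≤ β) (hβ2 : β ≤ 2) (hβeq : β = α + 1)
    (hN : 1 ≤ N) (hP : 0 < P) (hP1 : 1 ≤ P) (hQ : 0 < Q) (hPQ : P ≤ Q) (hS : 0 < S)
    (hAS : A ≤ β * S)
    (hf5 : P * (N + β/2) - A ≤ H)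
    (hf3 : P * N ≤ A)
    (hf6 : α * H ≤ 1/4)
    (hf2 : α * Q ≤ (Q - P) * (N + β/2)) :
    (S + Q) / Q - S / P ≤ 1 / β + P / (4 * S * β^2) := by
  have hβpos : (0:ℝ) < β := by linarith
  have hD : (0:ℝ) ≤ Q - P := by linarith
  have hNb : (0:ℝ) < N + β/2 := by linarith
  -- step1 : α*(P*Q) ≤ 2*A*(Q-P)
  have step1 : α * (P * Q) ≤ 2 * A * (Q - P) := by
    have h1 : α * Q * P ≤ (Q - P) * (N + β/2) * P :=
      mul_le_mul_of_nonneg_right hf2 hP.le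
    have h2 : (N + β/2) * P ≤ 2 * A := by nlinarith [hf3, hP1, hP]
    have h3 : (Q - P) * ((N + β/2) * P) ≤ (Q - P) * (2 * A) :=
      mul_le_mul_of_nonneg_left h2 hD
    nlinarith [h1, h3]
  have step2 : α * β * S * (P * Q) - β^2 * S^2 * (Q - P) ≤ α * A * (P * Q) - A^2 * (Q - P) := by
    have h1 : (0:ℝ) ≤ β * S - A := by linarith
    have h2 : α * (P * Q) - (β * S + A) * (Q - P) ≤ 0 := by
      have h3 : 2 * A * (Q - P) ≤ (β * S + A) * (Q - P) :=
        mul_le_mul_of_nonneg_right (by linarith) hD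
      linarith [step1]
    nlinarith [mul_nonneg h1 (neg_nonneg.mpr h2)]
  have step3 : α * A * (P * Q) - A^2 * (Q - P) ≤ P^2 * Q / 4 := by
    have s1 : A^2 * (α * Q) ≤ A^2 * ((Q - P) * (N + β/2)) :=
      mul_le_mul_of_nonneg_left hf2 (sq_nonneg A)
    have s2 : (α * A * (P * Q) - A^2 * (Q - P)) * (N + β/2) ≤
        α * Q * (A * (P * (N + β/2) - A)) := by nlinarith [s1]
    have s3 : A * (P * (N + β/2) - A) ≤ P * (N + β/2) * (P * (N + β/2) - A) := by
      nlinarith [sq_nonneg (P * (N + β/2) - A)]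
    have s4 : α * Q * (A * (P * (N + β/2) - A)) ≤ α * Q * (P * (N + β/2) * (P * (N + β/2) - A)) :=
      mul_le_mul_of_nonneg_left s3 (by positivity)
    have s5 : α * (P * (N + β/2) - A) ≤ 1/4 := by
      have h6 : α * (P * (N + β/2) - A) ≤ α * H := mul_le_mul_of_nonneg_left hf5 hα
      linarith
    have s6 : α * Q * (P * (N + β/2) * (P * (N + β/2) - A)) =
        Q * (P * (N + β/2)) * (α * (P * (N + β/2) - A)) := by ring
    have s7 : Q * (P * (N + β/2)) * (α * (P * (N + β/2) - A)) ≤ Q * (P * (N + β/2)) * (1/4) :=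
      mul_le_mul_of_nonneg_left s5 (by positivity)
    have s8 : Q * (P * (N + β/2)) * (1/4) ≤ (P^2 * Q / 4) * (N + β/2) := by
      nlinarith [mul_nonneg (mul_nonneg (mul_nonneg hQ.le hNb.le) hP.le) (sub_nonneg.mpr hP1)]
    have chain : (α * A * (P * Q) - A^2 * (Q - P)) * (N + β/2) ≤ (P^2 * Q / 4) * (N + β/2) := by
      calc (α * A * (P * Q) - A^2 * (Q - P)) * (N + β/2)
          ≤ α * Q * (A * (P * (N + β/2) - A)) := s2
        _ ≤ α * Q * (P * (N + β/2) * (P * (N + β/2) - A)) := s4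
        _ = Q * (P * (N + β/2)) * (α * (P * (N + β/2) - A)) := s6
        _ ≤ Q * (P * (N + β/2)) * (1/4) := s7
        _ ≤ (P^2 * Q / 4) * (N + β/2) := s8
    exact le_of_mul_le_mul_right chain hNb
  have KEY : α * β * S * (P * Q) - β^2 * S^2 * (Q - P) ≤ P^2 * Q / 4 := step2.trans step3
  rw [← sub_nonneg]
  have hQ0 : Q ≠ 0 := hQ.ne'
  have hP0 : P ≠ 0 := hP.ne'
  have hS0 : S ≠ 0 := hS.ne'
  have hβ0 : β ≠ 0 := hβpos.ne'
  have hαeq : α = β - 1 := by rw [hβeq]; ring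
  have e : (1 / β + P / (4 * S * β^2)) - ((S + Q) / Q - S / P) =
      (P^2 * Q / 4 - ((β - 1) * β * S * (P * Q) - β^2 * S^2 * (Q - P))) / (S * β^2 * P * Q) := by
    field_simp
    ring
  rw [e]
  apply div_nonneg _ (by positivity)
  rw [hαeq] at KEY
  linarith [KEY]

/-- The key analytic inequality in the proof of Theorem 6.1. -/
theorem stmt_15 (p α : ℝ) (hp : 2 ≤ p) (hα : 0 ≤ α) (hα' : α ≤ 1)
    (n : ℕ) (hn : 1 ≤ n) :
    (∑ k ∈ Finset.Icc 1 (n + 1), (k : ℝ) ^ α) / ((n : ℝ) + 1) ^ α -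
        (∑ k ∈ Finset.Icc 1 n, (k : ℝ) ^ α) / (n : ℝ) ^ α ≤
      1 / (α + 1) +
        ((n : ℝ) ^ α / (2 * ∑ k ∈ Finset.Icc 1 n, (k : ℝ) ^ α)) *
          (1 - 1 / p) * (1 / (α + 1) ^ 2) := by
  have hN : (1:ℝ) ≤ (n:ℝ) := by exact_mod_cast hn
  have hNpos : (0:ℝ) < (n:ℝ) := by linarith
  have hβ1 : (1:ℝ) ≤ α + 1 := by linarith
  have hβ2 : α + 1 ≤ 2 := by linarith
  have hP : (0:ℝ) < (n:ℝ) ^ α := Real.rpow_pos_of_pos hNpos α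
  have hQ : (0:ℝ) < ((n:ℝ) + 1) ^ α := Real.rpow_pos_of_pos (by linarith) α
  have hP1 : (1:ℝ) ≤ (n:ℝ) ^ α := by
    have h := Real.rpow_le_rpow (by norm_num : (0:ℝ) ≤ 1) hN hα
    rwa [Real.one_rpow] at h
  have hPQ : (n:ℝ) ^ α ≤ ((n:ℝ) + 1) ^ α := Real.rpow_le_rpow hNpos.le (by linarith) hα
  have hS : (0:ℝ) < ∑ k ∈ Finset.Icc 1 n, (k : ℝ) ^ α := by
    apply Finset.sum_pos
    · intro k hk
      have hk1 : 1 ≤ k := (Finset.mem_Icc.mp hk).1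
      have : (0:ℝ) < (k:ℝ) := by exact_mod_cast Nat.lt_of_lt_of_le Nat.zero_lt_one hk1
      exact Real.rpow_pos_of_pos this α
    · exact ⟨1, Finset.mem_Icc.mpr ⟨le_rfl, hn⟩⟩
  have hAS : ((n:ℝ) + 1/2) ^ (α + 1) - (1/2 : ℝ) ^ (α + 1) ≤
      (α + 1) * ∑ k ∈ Finset.Icc 1 n, (k : ℝ) ^ α := sum_lb α hα hα' n hn
  -- N^(α+1) = N^α * N
  have hNβ : (n:ℝ) ^ (α + 1) = (n:ℝ) ^ α * (n:ℝ) := Real.rpow_add_one hNpos.ne' α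
  -- Bernoulli: N^(α+1) + (α+1) * N^α * (1/2) ≤ (N + 1/2)^(α+1)
  have e1 : (n:ℝ) ^ (α + 1) + (α + 1) * ((n:ℝ) ^ α) * (1/2) ≤ ((n:ℝ) + 1/2) ^ (α + 1) := by
    have hs : (-1:ℝ) ≤ 1/(2*(n:ℝ)) := by
      have : (0:ℝ) ≤ 1/(2*(n:ℝ)) := by positivity
      linarith
    have hb := one_add_mul_self_le_rpow_one_add hs hβ1
    have hmul : ((n:ℝ) + 1/2) ^ (α + 1) = (n:ℝ) ^ (α + 1) * (1 + 1/(2*(n:ℝ))) ^ (α + 1) := by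
      rw [← Real.mul_rpow hNpos.le (by positivity)]
      congr 1
      field_simp
      try ring
      try exact Or.inl trivial
    have hNβnn : (0:ℝ) ≤ (n:ℝ) ^ (α + 1) := Real.rpow_nonneg hNpos.le _
    have hmono := mul_le_mul_of_nonneg_left hb hNβnn
    have expand : (n:ℝ) ^ (α + 1) * (1 + (α + 1) * (1/(2*(n:ℝ)))) =
        (n:ℝ) ^ (α + 1) + (α + 1) * ((n:ℝ) ^ α) * (1/2) := by
      rw [hNβ]; field_simp
    rw [hmul]
    linarith [hmono, expand.le, expand.ge]
  -- (1/2)^(α+1) ≤ 1/2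
  have hhalf : ((1:ℝ)/2) ^ (α + 1) ≤ 1/2 := by
    have h := Real.rpow_le_rpow_of_exponent_ge (by norm_num : (0:ℝ) < 1/2)
      (by norm_num : (1:ℝ)/2 ≤ 1) hβ1
    rwa [Real.rpow_one] at h
  have hf5 : (n:ℝ) ^ α * ((n:ℝ) + (α + 1)/2) - (((n:ℝ) + 1/2) ^ (α + 1) - (1/2 : ℝ) ^ (α + 1)) ≤
      ((1:ℝ)/2) ^ (α + 1) := by nlinarith [e1, hNβ]
  have hf3 : (n:ℝ) ^ α * (n:ℝ) ≤ ((n:ℝ) + 1/2) ^ (α + 1) - (1/2 : ℝ) ^ (α + 1) := by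
    nlinarith [e1, hNβ, hP1, hhalf]
  have hf6 : α * ((1:ℝ)/2) ^ (α + 1) ≤ 1/4 := by
    have hbl : ((1:ℝ)/2) ^ α ≤ 1 + α * (1/2 - 1) := bern_le (by norm_num) hα hα'
    have hsplit : ((1:ℝ)/2) ^ (α + 1) = ((1:ℝ)/2) ^ α * (1/2) :=
      Real.rpow_add_one (by norm_num : ((1:ℝ)/2) ≠ 0) α
    have hnn : (0:ℝ) ≤ ((1:ℝ)/2) ^ α := Real.rpow_nonneg (by norm_num) α
    rw [hsplit]
    nlinarith [sq_nonneg (1 - α)]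
  have hf2 : α * (((n:ℝ) + 1) ^ α) ≤
      ((((n:ℝ) + 1) ^ α) - ((n:ℝ) ^ α)) * ((n:ℝ) + (α + 1)/2) := by
    have hcpos : (0:ℝ) < ((n:ℝ) + 1/2) ^ (α - 1) := Real.rpow_pos_of_pos (by linarith) _
    have hc'pos : (0:ℝ) < ((n:ℝ) + 1/2) ^ (1 - α) := Real.rpow_pos_of_pos (by linarith) _
    have hcc' : ((n:ℝ) + 1/2) ^ (α - 1) * ((n:ℝ) + 1/2) ^ (1 - α) = 1 := by
      rw [← Real.rpow_add (by linarith : (0:ℝ) < (n:ℝ) + 1/2)]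
      norm_num
    have hml : α * ((n:ℝ) + 1/2) ^ (α - 1) ≤ (((n:ℝ) + 1) ^ α) - ((n:ℝ) ^ α) :=
      mid_lower hN hα hα'
    have ham : (((n:ℝ) + 1) ^ α) * ((n:ℝ) + 1/2) ^ (1 - α) ≤ (n:ℝ) + (α + 1)/2 := by
      have h := Real.geom_mean_le_arith_mean2_weighted hα (by linarith : (0:ℝ) ≤ 1 - α)
        (by linarith : (0:ℝ) ≤ (n:ℝ) + 1) (by linarith : (0:ℝ) ≤ (n:ℝ) + 1/2) (by ring)
      linarith [h]
    have key := mul_le_mul hml ham (by positivity)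
      (by linarith [hPQ] : (0:ℝ) ≤ (((n:ℝ) + 1) ^ α) - ((n:ℝ) ^ α))
    have e : (α * ((n:ℝ) + 1/2) ^ (α - 1)) * ((((n:ℝ) + 1) ^ α) * ((n:ℝ) + 1/2) ^ (1 - α)) =
        α * (((n:ℝ) + 1) ^ α) * (((n:ℝ) + 1/2) ^ (α - 1) * ((n:ℝ) + 1/2) ^ (1 - α)) := by
      ring
    rw [e, hcc', mul_one] at key
    exact key
  have hmid := algebra_core α (α + 1) ((n:ℝ)) ((n:ℝ) ^ α) (((n:ℝ) + 1) ^ α)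
    (∑ k ∈ Finset.Icc 1 n, (k : ℝ) ^ α)
    (((n:ℝ) + 1/2) ^ (α + 1) - (1/2 : ℝ) ^ (α + 1)) (((1:ℝ)/2) ^ (α + 1))
    hα hβ1 hβ2 rfl hN hP hP1 hQ hPQ hS hAS hf5 hf3 hf6 hf2
  -- split top sum
  have hsplit : (∑ k ∈ Finset.Icc 1 (n + 1), (k : ℝ) ^ α) =
      (∑ k ∈ Finset.Icc 1 n, (k : ℝ) ^ α) + ((n:ℝ) + 1) ^ α := by
    rw [Finset.sum_Icc_succ_top (by omega : 1 ≤ n + 1)]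
    push_cast
    ring_nf
  -- p-part
  have hp0 : (0:ℝ) < p := by linarith
  have hpp : 1/p ≤ 1/2 := by
    rw [div_le_div_iff₀ hp0 (by norm_num)]
    linarith
  have hrhs : 1 / (α + 1) + ((n:ℝ) ^ α) / (4 * (∑ k ∈ Finset.Icc 1 n, (k : ℝ) ^ α) * (α + 1)^2) ≤
      1 / (α + 1) + (((n:ℝ) ^ α) / (2 * ∑ k ∈ Finset.Icc 1 n, (k : ℝ) ^ α)) *
        (1 - 1/p) * (1 / (α + 1)^2) := by
    have h1 : (1:ℝ)/2 ≤ 1 - 1/p := by linarith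
    have h2 : (((n:ℝ) ^ α) / (2 * ∑ k ∈ Finset.Icc 1 n, (k : ℝ) ^ α)) * (1/2) * (1 / (α + 1)^2) ≤
        (((n:ℝ) ^ α) / (2 * ∑ k ∈ Finset.Icc 1 n, (k : ℝ) ^ α)) * (1 - 1/p) * (1 / (α + 1)^2) := by
      apply mul_le_mul_of_nonneg_right _ (by positivity)
      exact mul_le_mul_of_nonneg_left h1 (by positivity)
    have h3 : (((n:ℝ) ^ α) / (2 * ∑ k ∈ Finset.Icc 1 n, (k : ℝ) ^ α)) * (1/2) * (1 / (α + 1)^2) =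
        ((n:ℝ) ^ α) / (4 * (∑ k ∈ Finset.Icc 1 n, (k : ℝ) ^ α) * (α + 1)^2) := by
      have hS0 : (∑ k ∈ Finset.Icc 1 n, (k : ℝ) ^ α) ≠ 0 := ne_of_gt hS
      have hβ0 : (α + 1) ≠ 0 := by linarith
      field_simp
      try ring
      try exact Or.inl trivial
    linarith
  rw [hsplit]
  linarith [hmid, hrhs]
end

section
/- Let p, L be real numbers with 0 < p < 1 and L > p, and let (λ_n)_{n≥1} be positive reals with Λ_n = λ_1 + ... + λ_n. Suppose (w_n)_{n≥1} is a sequence of positive reals such that the sequence u_n := w_n^{−1/(1−p)} · Λ_n^{−p/(1−p)} is decreasing with limit 0, and such that for every n ≥ 1: (w_1 + ... + w_n)^{−1/(1−p)} · λ_n^{−p/(1−p)} ≤ ((L−p)/p)^{p/(1−p)} · (u_n − u_{n+1}). Then for every nonnegative real sequence (a_n) with Σ_{k=1}^∞ λ_k a_k < ∞: Σ_{n=1}^∞ ( (Σ_{k=n}^∞ λ_k a_k)^p / Λ_n^p ) ≥ (p/(L−p))^p · Σ_{n=1}^∞ a_n^p. -/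
open scoped ENNReal NNReal

open MeasureTheory in
/-- Hölder/interpolation inequality for `ℝ≥0∞`-valued series with `0 < p < 1`. -/
lemma ennreal_tsum_holder {p : ℝ} (hp : 0 < p) (hp' : p < 1) (f g : ℕ → ℝ≥0∞) :
    ∑' k, f k ^ p * g k ^ (1 - p) ≤ (∑' k, f k) ^ p * (∑' k, g k) ^ (1 - p) := by
  have h1p : 0 < 1 - p := by linarith
  have hpq : (1/p).HolderConjugate (1/(1-p)) := by
    constructor
    · simp only [one_div, inv_inv]; ring
    · exact div_pos one_pos hp
    · exact div_pos one_pos h1p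
  have key := ENNReal.lintegral_mul_le_Lp_mul_Lq (μ := Measure.count (α := ℕ)) hpq
    (f := fun k => f k ^ p) (g := fun k => g k ^ (1 - p))
    (measurable_of_countable _).aemeasurable (measurable_of_countable _).aemeasurable
  simp only [lintegral_count, Pi.mul_apply] at key
  have e1 : ∀ k, (f k ^ p) ^ (1/p) = f k := fun k => by
    rw [← ENNReal.rpow_mul, show p * (1/p) = 1 by field_simp, ENNReal.rpow_one]
  have e2 : ∀ k, (g k ^ (1-p)) ^ (1/(1-p)) = g k := fun k => by
    rw [← ENNReal.rpow_mul, show (1-p) * (1/(1-p)) = 1 by field_simp, ENNReal.rpow_one]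
  simp_rw [e1, e2, one_div_one_div] at key
  exact key

/-- The sufficient criterion (inequality (3.1') of Section 2) for the reversed
Copson-type inequality with constant `(p/(L-p))^p` in the range `0 < p < 1`.
The sums in the conclusion are taken in `ℝ≥0∞` since both sides may be infinite. -/
theorem stmt_17 (p L : ℝ) (hp : 0 < p) (hp' : p < 1) (hL : p < L)
    (lam Lam : ℕ → ℝ)
    (hlam : ∀ n, 1 ≤ n → 0 < lam n)
    (hLam : ∀ n, Lam n = ∑ i ∈ Finset.Icc 1 n, lam i)
    (w : ℕ → ℝ) (hw : ∀ n, 1 ≤ n → 0 < w n)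
    (u : ℕ → ℝ)
    (hu : ∀ n, 1 ≤ n → u n = w n ^ (-(1 / (1 - p))) * Lam n ^ (-(p / (1 - p))))
    (hdec : ∀ n, 1 ≤ n → u (n + 1) ≤ u n)
    (hlim : Filter.Tendsto u Filter.atTop (nhds 0))
    (hcond : ∀ n, 1 ≤ n →
      (∑ i ∈ Finset.Icc 1 n, w i) ^ (-(1 / (1 - p))) * lam n ^ (-(p / (1 - p))) ≤
        ((L - p) / p) ^ (p / (1 - p)) * (u n - u (n + 1)))
    (a : ℕ → ℝ) (ha : ∀ n, 1 ≤ n → 0 ≤ a n)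
    (hsum : Summable fun k : ℕ => lam (k + 1) * a (k + 1)) :
    ENNReal.ofReal ((p / (L - p)) ^ p) * ∑' n : ℕ, ENNReal.ofReal (a (n + 1) ^ p) ≤
      ∑' n : ℕ, ENNReal.ofReal
        ((∑' k : ℕ, lam (n + 1 + k) * a (n + 1 + k)) ^ p / Lam (n + 1) ^ p) := by
  have h1p : 0 < 1 - p := by linarith
  set c : ℝ := (L - p) / p with hc_def
  have hc : 0 < c := div_pos (by linarith) hp
  -- basic positivity
  have hLampos : ∀ n, 1 ≤ n → 0 < Lam n := by
    intro n hn
    rw [hLam n]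
    exact Finset.sum_pos (fun i hi => hlam i (Finset.mem_Icc.mp hi).1)
      (Finset.nonempty_Icc.mpr hn)
  have hWpos : ∀ n, 1 ≤ n → 0 < ∑ i ∈ Finset.Icc 1 n, w i := by
    intro n hn
    exact Finset.sum_pos (fun i hi => hw i (Finset.mem_Icc.mp hi).1)
      (Finset.nonempty_Icc.mpr hn)
  have hupos : ∀ n, 1 ≤ n → 0 < u n := by
    intro n hn
    rw [hu n hn]
    exact mul_pos (Real.rpow_pos_of_pos (hw n hn) _) (Real.rpow_pos_of_pos (hLampos n hn) _)
  have hdiff : ∀ n, 1 ≤ n → 0 ≤ u n - u (n + 1) := fun n hn => sub_nonneg.mpr (hdec n hn)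
  -- termwise inequality on the real side
  have hterm : ∀ k : ℕ, a (k+1) ^ p ≤
      c ^ p * ((∑ i ∈ Finset.Icc 1 (k+1), w i) *
        ((lam (k+1) * a (k+1)) ^ p * (u (k+1) - u (k+2)) ^ (1-p))) := by
    intro k
    set n := k + 1 with hn_def
    have hn : 1 ≤ n := Nat.le_add_left 1 k
    set W : ℝ := ∑ i ∈ Finset.Icc 1 n, w i with hW_def
    have hW : 0 < W := hWpos n hn
    have hl : 0 < lam n := hlam n hn
    have hd : 0 ≤ u n - u (n + 1) := hdiff n hn
    -- raise the hypothesis to the power (1-p)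
    have step0 := Real.rpow_le_rpow
      (mul_nonneg (Real.rpow_nonneg hW.le _) (Real.rpow_nonneg hl.le _))
      (hcond n hn) h1p.le
    have lhs_eq : (W ^ (-(1 / (1 - p))) * lam n ^ (-(p / (1 - p)))) ^ (1-p)
        = W⁻¹ * lam n ^ (-p) := by
      rw [Real.mul_rpow (Real.rpow_nonneg hW.le _) (Real.rpow_nonneg hl.le _),
        ← Real.rpow_mul hW.le, ← Real.rpow_mul hl.le,
        show (-(1 / (1 - p))) * (1-p) = -1 by field_simp,
        show (-(p / (1 - p))) * (1-p) = -p by field_simp,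
        Real.rpow_neg_one]
    have rhs_eq : (c ^ (p / (1 - p)) * (u n - u (n + 1))) ^ (1-p)
        = c ^ p * (u n - u (n + 1)) ^ (1-p) := by
      rw [Real.mul_rpow (Real.rpow_nonneg hc.le _) hd, ← Real.rpow_mul hc.le,
        show (p / (1 - p)) * (1-p) = p by field_simp]
    rw [lhs_eq, rhs_eq] at step0
    -- multiply both sides by W
    have step1 : lam n ^ (-p) ≤ c ^ p * (W * (u n - u (n + 1)) ^ (1-p)) := by
      have := mul_le_mul_of_nonneg_left step0 hW.le
      calc lam n ^ (-p) = W * (W⁻¹ * lam n ^ (-p)) := by field_simp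
        _ ≤ W * (c ^ p * (u n - u (n + 1)) ^ (1-p)) := this
        _ = c ^ p * (W * (u n - u (n + 1)) ^ (1-p)) := by ring
    -- rewrite a^p
    have step2 : a n ^ p = (lam n * a n) ^ p * lam n ^ (-p) := by
      rw [Real.mul_rpow hl.le (ha n hn), mul_comm (lam n ^ p), mul_assoc,
        ← Real.rpow_add hl, add_neg_cancel, Real.rpow_zero, mul_one]
    calc a n ^ p = (lam n * a n) ^ p * lam n ^ (-p) := step2
      _ ≤ (lam n * a n) ^ p * (c ^ p * (W * (u n - u (n + 1)) ^ (1-p))) :=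
          mul_le_mul_of_nonneg_left step1 (Real.rpow_nonneg (mul_nonneg hl.le (ha n hn)) p)
      _ = c ^ p * (W * ((lam n * a n) ^ p * (u n - u (n + 1)) ^ (1-p))) := by ring
  -- pass to ℝ≥0∞
  set F : ℕ → ℝ≥0∞ := fun k => ENNReal.ofReal (lam (k+1) * a (k+1)) with hF_def
  set D : ℕ → ℝ≥0∞ := fun k => ENNReal.ofReal (u (k+1) - u (k+2)) with hD_def
  set V : ℕ → ℝ≥0∞ := fun k => ENNReal.ofReal (w (k+1)) with hV_def
  set G : ℕ → ℝ≥0∞ := fun k => F k ^ p * D k ^ (1-p) with hG_def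
  have hla_nonneg : ∀ k : ℕ, 0 ≤ lam (k+1) * a (k+1) := fun k =>
    mul_nonneg (hlam (k+1) (Nat.le_add_left 1 k)).le (ha (k+1) (Nat.le_add_left 1 k))
  have hWsum : ∀ k : ℕ, ENNReal.ofReal (∑ i ∈ Finset.Icc 1 (k+1), w i)
      = ∑ m ∈ Finset.range (k+1), V m := by
    intro k
    rw [ENNReal.ofReal_sum_of_nonneg (fun i hi => (hw i (Finset.mem_Icc.mp hi).1).le)]
    rw [← Finset.Ico_add_one_right_eq_Icc, Finset.sum_Ico_eq_sum_range]
    apply Finset.sum_congr (by norm_num)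
    intro m _
    simp [hV_def, Nat.add_comm 1 m]
  have hterm' : ∀ k : ℕ, ENNReal.ofReal (a (k+1) ^ p) ≤
      ENNReal.ofReal (c ^ p) * ((∑ m ∈ Finset.range (k+1), V m) * G k) := by
    intro k
    have h1 := ENNReal.ofReal_le_ofReal (hterm k)
    have hn : (1:ℕ) ≤ k + 1 := Nat.le_add_left 1 k
    calc ENNReal.ofReal (a (k+1) ^ p)
        ≤ ENNReal.ofReal (c ^ p * ((∑ i ∈ Finset.Icc 1 (k+1), w i) *
            ((lam (k+1) * a (k+1)) ^ p * (u (k+1) - u (k+2)) ^ (1-p)))) := h1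
      _ = ENNReal.ofReal (c ^ p) * ((∑ m ∈ Finset.range (k+1), V m) * G k) := by
          simp only [hG_def, hF_def, hD_def]
          rw [ENNReal.ofReal_mul (Real.rpow_nonneg hc.le p),
            ENNReal.ofReal_mul (hWpos (k+1) hn).le,
            ENNReal.ofReal_mul (Real.rpow_nonneg (hla_nonneg k) p),
            hWsum k,
            ← ENNReal.ofReal_rpow_of_nonneg (hla_nonneg k) hp.le,
            ← ENNReal.ofReal_rpow_of_nonneg (hdiff (k+1) hn) h1p.le]
  -- the tail sums
  have hFtail : ∀ m : ℕ, ∑' j : ℕ, F (m + j)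
      = ENNReal.ofReal (∑' k : ℕ, lam (m + 1 + k) * a (m + 1 + k)) := by
    intro m
    have hs : Summable fun j : ℕ => lam (m + 1 + j) * a (m + 1 + j) := by
      have h := (summable_nat_add_iff m).2 hsum
      exact h.congr (fun j => by rw [show j + m + 1 = m + 1 + j by omega])
    rw [ENNReal.ofReal_tsum_of_nonneg (fun j => by
      have : (1:ℕ) ≤ m + 1 + j := by omega
      exact mul_nonneg (hlam _ this).le (ha _ this)) hs]
    exact tsum_congr fun j => by simp only [hF_def]; rw [show m + j + 1 = m + 1 + j by omega]
  have hDtail : ∀ m : ℕ, ∑' j : ℕ, D (m + j) = ENNReal.ofReal (u (m + 1)) := by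
    intro m
    have hnn : ∀ j : ℕ, 0 ≤ u (m + 1 + j) - u (m + 1 + j + 1) := fun j =>
      hdiff (m + 1 + j) (by omega)
    have hHasSum : HasSum (fun j : ℕ => u (m + 1 + j) - u (m + 1 + j + 1)) (u (m + 1)) := by
      rw [hasSum_iff_tendsto_nat_of_nonneg hnn]
      have htel : ∀ N : ℕ, ∑ j ∈ Finset.range N, (u (m + 1 + j) - u (m + 1 + j + 1))
          = u (m + 1) - u (m + 1 + N) := by
        intro N
        have := Finset.sum_range_sub' (fun j => u (m + 1 + j)) N
        simpa [← add_assoc] using this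
      simp_rw [htel]
      have hto : Filter.Tendsto (fun N : ℕ => u (m + 1 + N)) Filter.atTop (nhds 0) := by
        have := hlim.comp (Filter.tendsto_add_atTop_nat (m + 1))
        exact this.congr (fun N => by simp [Nat.add_comm])
      simpa using (tendsto_const_nhds.sub hto)
    rw [← hHasSum.tsum_eq, ENNReal.ofReal_tsum_of_nonneg hnn hHasSum.summable]
    exact tsum_congr fun j => by
      simp only [hD_def]
      rw [show m + j + 1 = m + 1 + j by omega, show m + j + 2 = m + 1 + j + 1 by omega]
  -- the weight identity
  have hE : ∀ m : ℕ, V m * (ENNReal.ofReal (∑' k : ℕ, lam (m + 1 + k) * a (m + 1 + k)) ^ p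
      * ENNReal.ofReal (u (m + 1)) ^ (1-p))
      = ENNReal.ofReal ((∑' k : ℕ, lam (m + 1 + k) * a (m + 1 + k)) ^ p / Lam (m + 1) ^ p) := by
    intro m
    set A : ℝ := ∑' k : ℕ, lam (m + 1 + k) * a (m + 1 + k) with hA_def
    have hA : 0 ≤ A := tsum_nonneg fun k =>
      mul_nonneg (hlam _ (by omega)).le (ha _ (by omega))
    have hn : (1:ℕ) ≤ m + 1 := Nat.le_add_left 1 m
    have hwp := hw (m+1) hn
    have hLp := hLampos (m+1) hn
    have huval : u (m + 1) ^ (1-p) = (w (m+1))⁻¹ * Lam (m+1) ^ (-p) := by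
      rw [hu (m+1) hn, Real.mul_rpow (Real.rpow_nonneg hwp.le _) (Real.rpow_nonneg hLp.le _),
        ← Real.rpow_mul hwp.le, ← Real.rpow_mul hLp.le,
        show (-(1 / (1 - p))) * (1-p) = -1 by field_simp,
        show (-(p / (1 - p))) * (1-p) = -p by field_simp,
        Real.rpow_neg_one]
    have hreal : w (m+1) * (A ^ p * u (m + 1) ^ (1-p)) = A ^ p / Lam (m+1) ^ p := by
      rw [huval, Real.rpow_neg hLp.le, div_eq_mul_inv,
        show w (m+1) * (A ^ p * ((w (m+1))⁻¹ * (Lam (m+1) ^ p)⁻¹))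
          = (w (m+1) * (w (m+1))⁻¹) * (A ^ p * (Lam (m+1) ^ p)⁻¹) by ring,
        mul_inv_cancel₀ hwp.ne', one_mul]
    simp only [hV_def]
    rw [ENNReal.ofReal_rpow_of_nonneg hA hp.le,
      ENNReal.ofReal_rpow_of_nonneg (hupos (m+1) hn).le h1p.le,
      ← ENNReal.ofReal_mul (Real.rpow_nonneg hA p),
      ← ENNReal.ofReal_mul hwp.le, hreal]
  -- main chain
  have main : ∑' k : ℕ, ENNReal.ofReal (a (k+1) ^ p) ≤
      ENNReal.ofReal (c ^ p) * ∑' n : ℕ, ENNReal.ofReal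
        ((∑' k : ℕ, lam (n + 1 + k) * a (n + 1 + k)) ^ p / Lam (n + 1) ^ p) := by
    calc ∑' k : ℕ, ENNReal.ofReal (a (k+1) ^ p)
        ≤ ∑' k : ℕ, ENNReal.ofReal (c ^ p) * ((∑ m ∈ Finset.range (k+1), V m) * G k) :=
          ENNReal.tsum_le_tsum hterm'
      _ = ENNReal.ofReal (c ^ p) * ∑' k : ℕ, (∑ m ∈ Finset.range (k+1), V m) * G k :=
          ENNReal.tsum_mul_left
      _ = ENNReal.ofReal (c ^ p) * ∑' k : ℕ, ∑' m : ℕ, (if m ≤ k then V m * G k else 0) := by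
          congr 1
          refine tsum_congr fun k => ?_
          rw [tsum_eq_sum (s := Finset.range (k+1))
            (fun m hm => if_neg (fun h : m ≤ k => hm (Finset.mem_range.mpr (Nat.lt_succ_of_le h)))),
            Finset.sum_mul]
          exact Finset.sum_congr rfl fun m hm => by
            rw [if_pos (by simpa using Nat.lt_succ_iff.mp (Finset.mem_range.mp hm))]
      _ = ENNReal.ofReal (c ^ p) * ∑' m : ℕ, ∑' k : ℕ, (if m ≤ k then V m * G k else 0) := by
          rw [ENNReal.tsum_comm]
      _ = ENNReal.ofReal (c ^ p) * ∑' m : ℕ, V m * ∑' j : ℕ, G (m + j) := by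
          congr 1
          refine tsum_congr fun m => ?_
          rw [← ENNReal.tsum_mul_left]
          refine (Function.Injective.tsum_eq (g := fun j : ℕ => m + j)
            (fun x y h => by simpa using h) ?_).symm.trans (tsum_congr fun j => ?_)
          · intro x hx
            simp only [Function.mem_support, ne_eq] at hx
            by_contra hcon
            simp only [Set.mem_range] at hcon
            have : ¬ (m ≤ x) := fun hmx => hcon ⟨x - m, by show m + (x - m) = x; omega⟩
            exact hx (if_neg this)
          · rw [if_pos (Nat.le_add_right m j)]
      _ ≤ ENNReal.ofReal (c ^ p) * ∑' m : ℕ, V m *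
            ((∑' j : ℕ, F (m + j)) ^ p * (∑' j : ℕ, D (m + j)) ^ (1-p)) := by
          refine mul_le_mul_right (ENNReal.tsum_le_tsum fun m => mul_le_mul_right ?_ _) _
          exact ennreal_tsum_holder hp hp' (fun j => F (m + j)) (fun j => D (m + j))
      _ = ENNReal.ofReal (c ^ p) * ∑' n : ℕ, ENNReal.ofReal
            ((∑' k : ℕ, lam (n + 1 + k) * a (n + 1 + k)) ^ p / Lam (n + 1) ^ p) := by
          congr 1
          refine tsum_congr fun m => ?_
          rw [hFtail m, hDtail m, hE m]
  -- conclude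
  have hconst : ENNReal.ofReal ((p / (L - p)) ^ p) * ENNReal.ofReal (c ^ p) = 1 := by
    have hLP : (0:ℝ) < L - p := by linarith
    rw [← ENNReal.ofReal_mul (Real.rpow_nonneg (div_pos hp hLP).le p),
      ← Real.mul_rpow (div_pos hp hLP).le hc.le,
      show (p / (L - p)) * c = 1 by
        rw [hc_def, div_mul_div_comm, mul_comm]
        exact div_self (by positivity),
      Real.one_rpow, ENNReal.ofReal_one]
  calc ENNReal.ofReal ((p / (L - p)) ^ p) * ∑' n : ℕ, ENNReal.ofReal (a (n + 1) ^ p)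
      ≤ ENNReal.ofReal ((p / (L - p)) ^ p) * (ENNReal.ofReal (c ^ p) *
          ∑' n : ℕ, ENNReal.ofReal
            ((∑' k : ℕ, lam (n + 1 + k) * a (n + 1 + k)) ^ p / Lam (n + 1) ^ p)) :=
        mul_le_mul_right main _
    _ = ∑' n : ℕ, ENNReal.ofReal
          ((∑' k : ℕ, lam (n + 1 + k) * a (n + 1 + k)) ^ p / Lam (n + 1) ^ p) := by
        rw [← mul_assoc, hconst, one_mul]
end
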